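/- arXiv:2211.05252 — 9 statements merged into one kernel-verified Lean document; each statement's English description precedes it below -/
import Mathlib

section
/- Let p be an odd prime. For every α ∈ ℚ_p there exists a unique p-adic fraction b such that |b| < p/2 and ‖α − b‖_p < 1. (This unique element is Browkin's integral floor s(α), obtained by truncating the p-adic expansion of α with digits in {−(p−1)/2, …, (p−1)/2} at the power p^0 inclusive.) -/
/-- A rational number `a` is a `p`-adic fraction if `a * p^m` is an integer
for some natural number `m`, i.e. `a ∈ ℤ[1/p]`. -/
def IsPadicFrac (p : ℕ) (a : ℚ) : Prop := ∃ (m : ℕ) (z : ℤ), a * (p : ℚ) ^ m = (z : ℚ)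

theorem stmt_2 (p : ℕ) [Fact p.Prime] (hp : p ≠ 2) (α : ℚ_[p]) :
    ∃! b : ℚ, IsPadicFrac p b ∧ |b| < (p : ℚ) / 2 ∧ ‖α - (b : ℚ_[p])‖ < 1 := by
  have hprime : p.Prime := Fact.out
  have hp1 : (1:ℝ) < p := by exact_mod_cast hprime.one_lt
  have hp0 : (0:ℝ) < p := by positivity
  have hp0' : (p:ℚ) ≠ 0 := by exact_mod_cast hprime.pos.ne'
  have hpodd : ¬ (2 ∣ p) := by
    intro h
    exact hp ((Nat.prime_dvd_prime_iff_eq Nat.prime_two hprime).mp h).symm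
  -- Existence: construct b.
  obtain ⟨n, hn⟩ := pow_unbounded_of_one_lt ‖α‖ hp1
  have hx : ‖α * (p:ℚ_[p])^n‖ ≤ 1 := by
    rw [norm_mul, Padic.norm_p_pow, zpow_neg, zpow_natCast, ← div_eq_mul_inv,
      div_le_one (by positivity)]
    exact hn.le
  set y : ℤ_[p] := ⟨α * (p:ℚ_[p])^n, hx⟩ with hy
  set z : ℕ := y.appr (n+1) with hz
  have hyz : ‖y - (z:ℤ_[p])‖ ≤ (p:ℝ) ^ (-(n+1:ℕ):ℤ) :=
    ((y - (z:ℤ_[p])).norm_le_pow_iff_mem_span_pow (n+1)).mpr (y.appr_spec (n+1))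
  set b₀ : ℚ := (z:ℚ) / (p:ℚ)^n with hb₀
  set k : ℤ := round (b₀ / p) with hk
  set b : ℚ := b₀ - p * k with hbdef
  -- b is a p-adic fraction
  have hbfrac : b * (p:ℚ)^n = (((z:ℤ) - k * (p:ℤ)^(n+1) : ℤ) : ℚ) := by
    rw [hbdef, hb₀]
    push_cast
    field_simp
    ring
  -- norm of α - b₀
  have key : (α - (b₀:ℚ_[p])) * (p:ℚ_[p])^n = ((y - (z:ℤ_[p]) : ℤ_[p]) : ℚ_[p]) := by
    have hb0 : (b₀ : ℚ_[p]) * (p:ℚ_[p])^n = ((z:ℕ) : ℚ_[p]) := by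
      rw [hb₀]
      push_cast
      have : ((p:ℚ_[p])^n) ≠ 0 := by
        apply pow_ne_zero
        exact_mod_cast (Nat.cast_ne_zero (R := ℚ_[p])).mpr hprime.pos.ne'
      field_simp
    push_cast [PadicInt.coe_sub]
    rw [sub_mul, hb0]
  have h1 : ‖α - (b₀:ℚ_[p])‖ ≤ (p:ℝ)⁻¹ := by
    have h2 : ‖α - (b₀:ℚ_[p])‖ * (p:ℝ) ^ (-(n:ℕ):ℤ) ≤ (p:ℝ) ^ (-(n+1:ℕ):ℤ) := by
      rw [← Padic.norm_p_pow, ← norm_mul, key, PadicInt.padic_norm_e_of_padicInt]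
      exact hyz
    have h3 : ‖α - (b₀:ℚ_[p])‖ ≤ (p:ℝ) ^ (-(n+1:ℕ):ℤ) / (p:ℝ) ^ (-(n:ℕ):ℤ) :=
      (le_div_iff₀ (by positivity)).mpr h2
    calc ‖α - (b₀:ℚ_[p])‖ ≤ (p:ℝ) ^ (-(n+1:ℕ):ℤ) / (p:ℝ) ^ (-(n:ℕ):ℤ) := h3
      _ = (p:ℝ)⁻¹ := by
          rw [← zpow_sub₀ (ne_of_gt hp0)]
          norm_num
  have hknorm : ‖((p:ℚ_[p]) * (k:ℚ_[p]))‖ ≤ (p:ℝ)⁻¹ := by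
    rw [norm_mul, Padic.norm_p]
    calc (p:ℝ)⁻¹ * ‖(k:ℚ_[p])‖ ≤ (p:ℝ)⁻¹ * 1 := by
          apply mul_le_mul_of_nonneg_left (Padic.norm_int_le_one k) (by positivity)
      _ = (p:ℝ)⁻¹ := mul_one _
  have hbnorm : ‖α - (b:ℚ_[p])‖ < 1 := by
    have hsplit : α - (b:ℚ_[p]) = (α - (b₀:ℚ_[p])) + ((p:ℚ_[p]) * (k:ℚ_[p])) := by
      rw [hbdef]; push_cast; ring
    rw [hsplit]
    calc ‖(α - (b₀:ℚ_[p])) + ((p:ℚ_[p]) * (k:ℚ_[p]))‖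
        ≤ max ‖α - (b₀:ℚ_[p])‖ ‖(p:ℚ_[p]) * (k:ℚ_[p])‖ := Padic.nonarchimedean _ _
      _ ≤ (p:ℝ)⁻¹ := max_le h1 hknorm
      _ < 1 := inv_lt_one_of_one_lt₀ hp1
  -- |b| < p/2
  have habs_le : |b| ≤ (p:ℚ) / 2 := by
    have hb_eq : b = (p:ℚ) * (b₀ / p - k) := by
      rw [hbdef]; field_simp
    rw [hb_eq, abs_mul, abs_of_pos (by positivity : (0:ℚ) < (p:ℚ))]
    calc (p:ℚ) * |b₀ / p - k| ≤ (p:ℚ) * (1/2) := by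
          apply mul_le_mul_of_nonneg_left (abs_sub_round _) (by positivity)
      _ = (p:ℚ)/2 := by ring
  have habs_ne : |b| ≠ (p:ℚ) / 2 := by
    intro h
    set w : ℤ := (z:ℤ) - k * (p:ℤ)^(n+1) with hw
    have h2 : |b| * (p:ℚ)^n = |(w:ℚ)| := by
      rw [← abs_of_pos (by positivity : (0:ℚ) < (p:ℚ)^n), ← abs_mul, hbfrac]
    have h3 : 2 * |(w:ℚ)| = (p:ℚ)^(n+1) := by
      rw [← h2, h]
      field_simp
      ring
    have h4 : 2 * |w| = (p:ℤ)^(n+1) := by exact_mod_cast h3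
    have h5 : (2:ℤ) ∣ (p:ℤ)^(n+1) := ⟨|w|, h4.symm⟩
    have h6 : (2:ℤ) ∣ (p:ℤ) := Int.prime_two.dvd_of_dvd_pow h5
    exact hpodd (by exact_mod_cast h6)
  have habs : |b| < (p:ℚ) / 2 := lt_of_le_of_ne habs_le habs_ne
  refine ⟨b, ⟨⟨n, (z:ℤ) - k * (p:ℤ)^(n+1), hbfrac⟩, habs, hbnorm⟩, ?_⟩
  -- Uniqueness
  rintro c ⟨⟨m₁, z₁, hz₁⟩, hc2, hc3⟩
  set q : ℚ := c - b with hq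
  have hq_norm : ‖(q:ℚ_[p])‖ < 1 := by
    have hsplit : (q:ℚ_[p]) = (α - (b:ℚ_[p])) + (-(α - (c:ℚ_[p]))) := by
      rw [hq]; push_cast; ring
    rw [hsplit]
    calc ‖(α - (b:ℚ_[p])) + (-(α - (c:ℚ_[p])))‖
        ≤ max ‖α - (b:ℚ_[p])‖ ‖-(α - (c:ℚ_[p]))‖ := Padic.nonarchimedean _ _
      _ < 1 := max_lt hbnorm (by rwa [norm_neg])
  set K : ℕ := m₁ + n with hK
  set W : ℤ := z₁ * (p:ℤ)^n - ((z:ℤ) - k * (p:ℤ)^(n+1)) * (p:ℤ)^m₁ with hW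
  have hqW : q * (p:ℚ)^K = (W:ℚ) := by
    rw [hq, hK, hW]
    push_cast
    rw [pow_add]
    calc (c - b) * ((p:ℚ)^m₁ * (p:ℚ)^n)
        = (c * (p:ℚ)^m₁) * (p:ℚ)^n - (b * (p:ℚ)^n) * (p:ℚ)^m₁ := by ring
      _ = (z₁:ℚ) * (p:ℚ)^n - (((z:ℤ) - k * (p:ℤ)^(n+1) : ℤ) : ℚ) * (p:ℚ)^m₁ := by
          rw [hz₁, hbfrac]
      _ = _ := by push_cast; ring
  have hWnorm : ‖(W:ℚ_[p])‖ < (p:ℝ) ^ (-(K:ℕ):ℤ) := by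
    have hcast : (W:ℚ_[p]) = (q:ℚ_[p]) * (p:ℚ_[p])^K := by
      have := congrArg (fun r : ℚ => (r : ℚ_[p])) hqW
      push_cast at this ⊢
      linear_combination -this
    rw [hcast, norm_mul, Padic.norm_p_pow]
    calc ‖(q:ℚ_[p])‖ * (p:ℝ)^(-(K:ℕ):ℤ) < 1 * (p:ℝ)^(-(K:ℕ):ℤ) := by
          apply mul_lt_mul_of_pos_right hq_norm (by positivity)
      _ = (p:ℝ)^(-(K:ℕ):ℤ) := one_mul _
  have hWle : ‖(W:ℚ_[p])‖ ≤ (p:ℝ) ^ (-(K+1:ℕ):ℤ) := by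
    rw [Padic.norm_le_pow_iff_norm_lt_pow_add_one]
    have : (-(K+1:ℕ):ℤ) + 1 = (-(K:ℕ):ℤ) := by push_cast; ring
    rwa [this]
  have hdvd : ((p:ℤ)^(K+1)) ∣ W := by
    have := (Padic.norm_int_le_pow_iff_dvd (p := p) W (K+1)).mp hWle
    exact_mod_cast this
  have hWabs : |W| < (p:ℤ)^(K+1) := by
    have h1 : |(W:ℚ)| = |q| * (p:ℚ)^K := by
      rw [← hqW, abs_mul, abs_of_pos (by positivity : (0:ℚ) < (p:ℚ)^K)]
    have h2 : |q| < (p:ℚ) := by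
      calc |q| = |c - b| := rfl
        _ ≤ |c| + |b| := abs_sub _ _
        _ < (p:ℚ)/2 + (p:ℚ)/2 := add_lt_add hc2 habs
        _ = (p:ℚ) := by ring
    have h3 : |(W:ℚ)| < (p:ℚ)^(K+1) := by
      rw [h1, pow_succ]
      calc |q| * (p:ℚ)^K < (p:ℚ) * (p:ℚ)^K := by
            apply mul_lt_mul_of_pos_right h2 (by positivity)
        _ = (p:ℚ)^K * (p:ℚ) := by ring
    exact_mod_cast h3
  have hW0 : W = 0 := Int.eq_zero_of_abs_lt_dvd hdvd hWabs
  have hq0 : q = 0 := by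
    have : q * (p:ℚ)^K = 0 := by rw [hqW, hW0]; norm_num
    rcases mul_eq_zero.mp this with h | h
    · exact h
    · exact absurd h (pow_ne_zero _ hp0')
  rw [hq] at hq0
  linarith
end

section
/- Let p be an odd prime. For every α ∈ ℚ_p there exists a unique p-adic fraction b such that |b| < 1/2 and ‖α − b‖_p ≤ 1. (This unique element is Browkin's fractional floor t(α), obtained by keeping only the strictly negative powers of p in the p-adic expansion of α with digits in {−(p−1)/2, …, (p−1)/2}.) -/
/-- Existence of a `p`-adic fraction within distance 1 of `α`. -/
lemma exists_frac_close (p : ℕ) [Fact p.Prime] (α : ℚ_[p]) :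
    ∃ (m : ℕ) (z : ℤ), ‖α - (((z : ℚ) / (p : ℚ) ^ m : ℚ) : ℚ_[p])‖ ≤ 1 := by
  have hp1 : (1 : ℝ) < p := by exact_mod_cast (Fact.out : p.Prime).one_lt
  have hp0 : (0 : ℝ) < p := by linarith
  rcases eq_or_ne α 0 with rfl | hα
  · exact ⟨0, 0, by simp⟩
  · set m : ℕ := (-α.valuation).toNat with hm
    have hmv : -(m : ℤ) - α.valuation ≤ 0 := by
      have := Int.self_le_toNat (-α.valuation)
      omega
    have hx : ‖(p : ℚ_[p]) ^ m * α‖ ≤ 1 := by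
      rw [norm_mul, Padic.norm_p_pow, Padic.norm_eq_zpow_neg_valuation hα,
        ← zpow_add₀ (ne_of_gt hp0)]
      calc (p : ℝ) ^ (-(m : ℤ) + -α.valuation) ≤ (p : ℝ) ^ (0 : ℤ) := by
            apply zpow_le_zpow_right₀ hp1.le; omega
        _ = 1 := by norm_num
    set x : ℤ_[p] := ⟨(p : ℚ_[p]) ^ m * α, hx⟩ with hxdef
    set z : ℕ := x.appr m with hz
    have hspec : ‖x - (z : ℤ_[p])‖ ≤ (p : ℝ) ^ (-(m : ℤ)) :=
      (PadicInt.norm_le_pow_iff_mem_span_pow _ m).mpr (PadicInt.appr_spec m x)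
    refine ⟨m, (z : ℤ), ?_⟩
    have hpm : ((p : ℚ_[p]) ^ m) ≠ 0 := by
      apply pow_ne_zero; exact_mod_cast (Fact.out : p.Prime).ne_zero
    have key : α - ((((z : ℤ) : ℚ) / (p : ℚ) ^ m : ℚ) : ℚ_[p])
        = ((x : ℚ_[p]) - (z : ℚ_[p])) / (p : ℚ_[p]) ^ m := by
      rw [hxdef]
      push_cast
      field_simp
    rw [key, norm_div, Padic.norm_p_pow]
    have hcoe : ‖(x : ℚ_[p]) - ((z : ℤ_[p]) : ℚ_[p])‖ = ‖x - (z : ℤ_[p])‖ := by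
      rw [← PadicInt.coe_sub, PadicInt.padic_norm_e_of_padicInt]
    have : ‖(x : ℚ_[p]) - ((z : ℤ_[p]) : ℚ_[p])‖ ≤ (p : ℝ) ^ (-(m : ℤ)) := by
      rw [hcoe]; exact hspec
    have hz' : ((z : ℤ_[p]) : ℚ_[p]) = ((z : ℕ) : ℚ_[p]) := by push_cast; ring
    rw [hz'] at this
    have hpos : (0 : ℝ) < (p : ℝ) ^ (-(m : ℤ)) := zpow_pos hp0 _
    rw [div_le_one hpos]
    exact this

lemma frac_eq_of_close (p : ℕ) [Fact p.Prime] {b c : ℚ}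
    (hb : IsPadicFrac p b) (hc : IsPadicFrac p c)
    (habs : |b - c| < 1) (hnorm : ‖((b - c : ℚ) : ℚ_[p])‖ ≤ 1) : b = c := by
  obtain ⟨m₁, z₁, h₁⟩ := hb
  obtain ⟨m₂, z₂, h₂⟩ := hc
  set W : ℤ := z₁ * p ^ m₂ - z₂ * p ^ m₁ with hW
  have hpQ : ((p : ℚ)) ≠ 0 := by exact_mod_cast (Fact.out : p.Prime).ne_zero
  have hd : (b - c) * (p : ℚ) ^ (m₁ + m₂) = (W : ℚ) := by
    push_cast [hW, pow_add]
    linear_combination (p : ℚ) ^ m₂ * h₁ - (p : ℚ) ^ m₁ * h₂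
  have hdP : ((W : ℤ) : ℚ_[p]) = ((b - c : ℚ) : ℚ_[p]) * (p : ℚ_[p]) ^ (m₁ + m₂) := by
    have := congrArg (fun q : ℚ => (q : ℚ_[p])) hd
    push_cast at this ⊢
    linear_combination -this
  have hWnorm : ‖((W : ℤ) : ℚ_[p])‖ ≤ (p : ℝ) ^ (-(m₁ + m₂ : ℕ) : ℤ) := by
    rw [hdP, norm_mul, Padic.norm_p_pow]
    calc ‖((b - c : ℚ) : ℚ_[p])‖ * (p : ℝ) ^ (-(m₁ + m₂ : ℕ) : ℤ)
        ≤ 1 * (p : ℝ) ^ (-(m₁ + m₂ : ℕ) : ℤ) := by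
          apply mul_le_mul_of_nonneg_right hnorm
          positivity
      _ = (p : ℝ) ^ (-(m₁ + m₂ : ℕ) : ℤ) := one_mul _
  obtain ⟨k, hk⟩ := (Padic.norm_int_le_pow_iff_dvd W (m₁ + m₂)).mp hWnorm
  have hpm : ((p : ℚ)) ^ (m₁ + m₂) ≠ 0 := pow_ne_zero _ hpQ
  have hbc : b - c = (k : ℚ) := by
    have : (b - c) * (p : ℚ) ^ (m₁ + m₂) = (k : ℚ) * (p : ℚ) ^ (m₁ + m₂) := by
      rw [hd, hk]; push_cast; ring
    exact mul_right_cancel₀ hpm this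
  have : |(k : ℚ)| < 1 := hbc ▸ habs
  have hk0 : k = 0 := by
    rw [← Int.cast_abs] at this
    have : |k| < 1 := by exact_mod_cast this
    exact Int.abs_lt_one_iff.mp this
  have : b - c = 0 := by rw [hbc, hk0]; norm_num
  linarith

theorem stmt_3 (p : ℕ) [Fact p.Prime] (hp : p ≠ 2) (α : ℚ_[p]) :
    ∃! b : ℚ, IsPadicFrac p b ∧ |b| < 1 / 2 ∧ ‖α - (b : ℚ_[p])‖ ≤ 1 := by
  obtain ⟨m, z, ha⟩ := exists_frac_close p α
  set a : ℚ := ((z : ℤ) : ℚ) / (p : ℚ) ^ m with hadef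
  have hpQ : ((p : ℚ)) ≠ 0 := by exact_mod_cast (Fact.out : p.Prime).ne_zero
  have hpm : ((p : ℚ)) ^ m ≠ 0 := pow_ne_zero _ hpQ
  have hafrac : a * (p : ℚ) ^ m = ((z : ℤ) : ℚ) := by
    rw [hadef]; field_simp
  set b : ℚ := a - round a with hbdef
  set w : ℤ := z - round a * (p : ℤ) ^ m with hwdef
  have hbfrac : b * (p : ℚ) ^ m = (w : ℚ) := by
    rw [hbdef, sub_mul, hafrac, hwdef]; push_cast; ring
  have hbIs : IsPadicFrac p b := ⟨m, w, hbfrac⟩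
  -- |b| < 1/2
  have hodd : Odd ((p : ℤ) ^ m) := by
    have : Odd (p : ℤ) := by
      exact_mod_cast (Fact.out : p.Prime).odd_of_ne_two hp
    exact this.pow
  have hble : |b| ≤ 1 / 2 := abs_sub_round a
  have hblt : |b| < 1 / 2 := by
    rcases lt_or_eq_of_le hble with h | h
    · exact h
    · exfalso
      rcases (abs_eq (by norm_num : (0:ℚ) ≤ 1/2)).mp h with h' | h'
      · have : ((p : ℤ) ^ m : ℚ) = ((2 * w : ℤ) : ℚ) := by
          push_cast
          linear_combination 2 * hbfrac - 2 * (p:ℚ)^m * h'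
        have h2 : (p : ℤ) ^ m = 2 * w := by exact_mod_cast this
        exact ((Int.not_odd_iff_even (n := (p:ℤ)^m)).mpr ⟨w, by omega⟩) hodd
      · have : ((p : ℤ) ^ m : ℚ) = ((-(2 * w) : ℤ) : ℚ) := by
          push_cast
          linear_combination -2 * hbfrac + 2 * (p:ℚ)^m * h'
        have h2 : (p : ℤ) ^ m = -(2 * w) := by exact_mod_cast this
        exact ((Int.not_odd_iff_even (n := (p:ℤ)^m)).mpr ⟨-w, by omega⟩) hodd
  -- norm bound
  have hbnorm : ‖α - ((b : ℚ) : ℚ_[p])‖ ≤ 1 := by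
    have hcast : α - ((b : ℚ) : ℚ_[p])
        = (α - ((a : ℚ) : ℚ_[p])) + (((round a : ℤ) : ℚ_[p])) := by
      rw [hbdef]; push_cast; ring
    rw [hcast]
    refine le_trans (Padic.nonarchimedean _ _) (max_le ?_ ?_)
    · exact ha
    · exact Padic.norm_int_le_one _
  refine ⟨b, ⟨hbIs, hblt, hbnorm⟩, ?_⟩
  rintro c ⟨hcIs, hclt, hcnorm⟩
  apply frac_eq_of_close p hcIs hbIs
  · calc |c - b| ≤ |c| + |b| := abs_sub c b
      _ < 1 / 2 + 1 / 2 := by exact add_lt_add hclt hblt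
      _ = 1 := by norm_num
  · have : ((c - b : ℚ) : ℚ_[p]) = (α - ((b : ℚ) : ℚ_[p])) + (-(α - ((c : ℚ) : ℚ_[p]))) := by
      push_cast; ring
    rw [this]
    refine le_trans (Padic.nonarchimedean _ _) (max_le hbnorm ?_)
    rw [norm_neg]
    exact hcnorm
end

section
/- Let p be an odd prime and let (b_n)_{n≥0} be a sequence of nonzero p-adic fractions such that v_p(b_{2n}) = 0 for all n ≥ 1 and v_p(b_{2n+1}) < 0 for all n ≥ 0. Then the continued fraction [b_0, b_1, b_2, …] converges in ℚ_p, i.e., the sequence of convergents A_n/B_n converges to a p-adic number. -/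
/-- Let `(b n)` be a sequence of nonzero `p`-adic fractions with
`v_p(b (2n)) = 0` for `n ≥ 1` and `v_p(b (2n+1)) < 0` for `n ≥ 0`.  The sequences
`A`, `B` are the numerators and denominators of the convergents, i.e. they satisfy
`A (-1) = 1, A 0 = b 0, A n = b n * A (n-1) + A (n-2)` and
`B (-1) = 0, B 0 = 1, B n = b n * B (n-1) + B (n-2)` (the `-1`-indexed values are
absorbed in the stated values of `A 0, A 1, B 0, B 1`).  Then the continued fraction
`[b 0, b 1, …]` converges in `ℚ_p`: the convergents `A n / B n` tend to a `p`-adic number. -/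
theorem stmt_4 (p : ℕ) [Fact p.Prime] (hp : p ≠ 2) (b : ℕ → ℚ)
    (hbfrac : ∀ n, IsPadicFrac p (b n)) (hbne : ∀ n, b n ≠ 0)
    (heven : ∀ n : ℕ, 1 ≤ n → padicValRat p (b (2 * n)) = 0)
    (hodd : ∀ n : ℕ, padicValRat p (b (2 * n + 1)) < 0)
    (A B : ℕ → ℚ)
    (hA0 : A 0 = b 0) (hA1 : A 1 = b 1 * b 0 + 1)
    (hA : ∀ n, A (n + 2) = b (n + 2) * A (n + 1) + A n)
    (hB0 : B 0 = 1) (hB1 : B 1 = b 1)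
    (hB : ∀ n, B (n + 2) = b (n + 2) * B (n + 1) + B n) :
    ∃ L : ℚ_[p], Filter.Tendsto (fun n => ((A n / B n : ℚ) : ℚ_[p])) Filter.atTop (nhds L) := by
  have hp1 : (1:ℝ) < p := by exact_mod_cast (Fact.out : p.Prime).one_lt
  have hp0 : (0:ℝ) < p := lt_trans one_pos hp1
  -- norm of a nonzero rational in ℚ_[p]
  have hnorm : ∀ q : ℚ, q ≠ 0 → ‖(q : ℚ_[p])‖ = (p:ℝ) ^ (-padicValRat p q) := by
    intro q hq
    rw [Padic.eq_padicNorm, padicNorm.eq_zpow_of_nonzero hq]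
    push_cast; ring
  -- ultrametric step
  have hult : ∀ (x y : ℚ_[p]), ‖y‖ < ‖x‖ → ‖x + y‖ = ‖x‖ := by
    intro x y h
    rw [Padic.add_eq_max_of_ne (ne_of_gt h)]
    exact max_eq_left h.le
  set β : ℕ → ℚ_[p] := fun n => ((B n : ℚ) : ℚ_[p]) with hβ
  have hβrec : ∀ n, β (n+2) = ((b (n+2) : ℚ) : ℚ_[p]) * β (n+1) + β n := by
    intro n; simp only [hβ]; rw [hB n]; push_cast; ring
  have hcodd : ∀ n, (p:ℝ) ≤ ‖((b (2*n+1) : ℚ) : ℚ_[p])‖ := by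
    intro n
    rw [hnorm _ (hbne _)]
    have hv : padicValRat p (b (2*n+1)) ≤ -1 := by have := hodd n; omega
    calc (p:ℝ) = (p:ℝ)^(1:ℤ) := (zpow_one _).symm
      _ ≤ (p:ℝ)^(-padicValRat p (b (2*n+1))) := zpow_le_zpow_right₀ hp1.le (by omega)
  have hceven : ∀ n, 1 ≤ n → ‖((b (2*n) : ℚ) : ℚ_[p])‖ = 1 := by
    intro n hn
    rw [hnorm _ (hbne _), heven n hn, neg_zero, zpow_zero]
  have hβ0 : β 0 = 1 := by simp only [hβ]; rw [hB0]; norm_num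
  -- main induction
  have main : ∀ n : ℕ, ((p:ℝ)^n ≤ ‖β (2*n)‖ ∧ (p:ℝ)^(n+1) ≤ ‖β (2*n+1)‖)
      ∧ ‖β (2*n+2)‖ = ‖β (2*n+1)‖ := by
    intro n
    induction n with
    | zero =>
      have h1 : (p:ℝ) ≤ ‖β 1‖ := by
        have := hcodd 0
        simp only [hβ]; rw [hB1]
        simpa using this
      have hn0 : ‖β 0‖ = 1 := by rw [hβ0, norm_one]
      have h2 : ‖β 2‖ = ‖β 1‖ := by
        have hrec := hβrec 0
        have hb2 : ‖((b 2 : ℚ) : ℚ_[p])‖ = 1 := by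
          have := hceven 1 le_rfl; simpa using this
        have hlt : ‖β 0‖ < ‖((b 2 : ℚ) : ℚ_[p]) * β 1‖ := by
          rw [norm_mul, hb2, one_mul, hn0]; linarith
        rw [show (2:ℕ) = 0 + 2 by rfl, hrec, hult _ _ hlt, norm_mul, hb2, one_mul]
      refine ⟨⟨by rw [pow_zero, hn0], by simpa using h1⟩, by simpa using h2⟩
    | succ n ih =>
      obtain ⟨⟨ihe, iho⟩, iheq⟩ := ih
      have hpos : 0 < ‖β (2*n+1)‖ := lt_of_lt_of_le (by positivity) iho
      have hb3 : (p:ℝ) ≤ ‖((b (2*n+3) : ℚ) : ℚ_[p])‖ := by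
        have hb := hcodd (n+1)
        rwa [show 2*(n+1)+1 = 2*n+3 by ring] at hb
      -- β (2n+3)
      have hodd' : ‖β (2*n+3)‖ = ‖((b (2*n+3) : ℚ) : ℚ_[p])‖ * ‖β (2*n+2)‖ := by
        have hrec := hβrec (2*n+1)
        rw [show 2*n+1+2 = 2*n+3 by ring] at hrec
        have hlt : ‖β (2*n+1)‖ < ‖((b (2*n+3) : ℚ) : ℚ_[p]) * β (2*n+2)‖ := by
          rw [norm_mul, iheq]
          nlinarith [hpos, hb3, hp1]
        rw [hrec, hult _ _ hlt, norm_mul]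
      have ho : (p:ℝ)^(n+2) ≤ ‖β (2*n+3)‖ := by
        rw [hodd', iheq]
        calc (p:ℝ)^(n+2) = (p:ℝ) * (p:ℝ)^(n+1) := by ring
          _ ≤ ‖((b (2*n+3) : ℚ) : ℚ_[p])‖ * ‖β (2*n+1)‖ :=
              mul_le_mul hb3 iho (by positivity) (norm_nonneg _)
      have he : (p:ℝ)^(n+1) ≤ ‖β (2*n+2)‖ := by rw [iheq]; exact iho
      -- β (2n+4)
      have heq4 : ‖β (2*n+4)‖ = ‖β (2*n+3)‖ := by
        have hrec := hβrec (2*n+2)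
        rw [show 2*n+2+2 = 2*n+4 by ring] at hrec
        have hb4 : ‖((b (2*n+4) : ℚ) : ℚ_[p])‖ = 1 := by
          have hc := hceven (n+2) (by omega)
          rwa [show 2*(n+2) = 2*n+4 by ring] at hc
        have hlt : ‖β (2*n+2)‖ < ‖((b (2*n+4) : ℚ) : ℚ_[p]) * β (2*n+3)‖ := by
          rw [norm_mul, hb4, one_mul, hodd', iheq]
          nlinarith [hpos, hb3, hp1]
        rw [hrec, hult _ _ hlt, norm_mul, hb4, one_mul]
      refine ⟨⟨?_, ?_⟩, ?_⟩
      · rw [show 2*(n+1) = 2*n+2 by ring]; exact he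
      · rw [show 2*(n+1)+1 = 2*n+3 by ring]; exact ho
      · rw [show 2*(n+1)+2 = 2*n+4 by ring, show 2*(n+1)+1 = 2*n+3 by ring]
        exact heq4
  -- product lower bound
  have hprod : ∀ n : ℕ, (p:ℝ)^(n+1) ≤ ‖β n‖ * ‖β (n+1)‖ := by
    intro n
    rcases Nat.even_or_odd n with ⟨k, hk⟩ | ⟨k, hk⟩
    · have h1 := (main k).1.1
      have h2 := (main k).1.2
      subst hk
      rw [show k + k = 2*k by ring]
      calc (p:ℝ)^(2*k+1) = (p:ℝ)^k * (p:ℝ)^(k+1) := by ring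
        _ ≤ ‖β (2*k)‖ * ‖β (2*k+1)‖ :=
            mul_le_mul h1 h2 (by positivity) (norm_nonneg _)
    · have h2 := (main k).1.2
      have heq := (main k).2
      subst hk
      calc (p:ℝ)^(2*k+1+1) = (p:ℝ)^(k+1) * (p:ℝ)^(k+1) := by ring
        _ ≤ ‖β (2*k+1)‖ * ‖β (2*k+1+1)‖ := by
            rw [show 2*k+1+1 = 2*k+2 by ring, heq]
            exact mul_le_mul h2 h2 (by positivity) (norm_nonneg _)
  have hβpos : ∀ n, 0 < ‖β n‖ := by
    intro n
    rcases Nat.even_or_odd n with ⟨k, hk⟩ | ⟨k, hk⟩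
    · have h1 := (main k).1.1
      subst hk; rw [show k + k = 2*k by ring]
      exact lt_of_lt_of_le (by positivity) h1
    · have h2 := (main k).1.2
      subst hk
      exact lt_of_lt_of_le (by positivity) h2
  have hBne : ∀ n, (B n : ℚ) ≠ 0 := by
    intro n
    have := hβpos n
    simp only [hβ] at this
    intro h
    rw [h] at this
    simp at this
  -- determinant identity
  have hdet : ∀ n, A (n+1) * B n - A n * B (n+1) = (-1:ℚ)^n := by
    intro n
    induction n with
    | zero => rw [hA1, hA0, hB0, hB1]; ring
    | succ n ih => rw [hA n, hB n]; linear_combination (-1:ℚ) * ih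
  have hdiff : ∀ n, (A (n+1) / B (n+1) - A n / B n : ℚ) = (-1)^n / (B n * B (n+1)) := by
    intro n
    rw [div_sub_div _ _ (hBne (n+1)) (hBne n),
      show A (n+1) * B n - B (n+1) * A n = (-1:ℚ)^n by linear_combination hdet n,
      mul_comm (B (n+1)) (B n)]
  have hbound : ∀ n, ‖((A (n+1) / B (n+1) - A n / B n : ℚ) : ℚ_[p])‖ ≤ ((p:ℝ)⁻¹)^(n+1) := by
    intro n
    rw [hdiff n]
    push_cast
    rw [norm_div, norm_pow, norm_neg, norm_one, one_pow, norm_mul]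
    rw [inv_pow, one_div]
    exact inv_anti₀ (by positivity) (hprod n)
  have cauchy : CauchySeq (fun n => ((A n / B n : ℚ) : ℚ_[p])) := by
    apply cauchySeq_of_le_geometric ((p:ℝ)⁻¹) 1 (by rw [inv_lt_one_iff₀]; right; exact hp1)
    intro n
    rw [dist_eq_norm, norm_sub_rev]
    have h := hbound n
    have hc : ((A (n+1) / B (n+1) : ℚ) : ℚ_[p]) - ((A n / B n : ℚ) : ℚ_[p])
        = ((A (n+1) / B (n+1) - A n / B n : ℚ) : ℚ_[p]) := by push_cast; ring
    rw [hc]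
    calc ‖((A (n+1) / B (n+1) - A n / B n : ℚ) : ℚ_[p])‖ ≤ ((p:ℝ)⁻¹)^(n+1) := h
      _ ≤ 1 * ((p:ℝ)⁻¹)^n := by
          rw [one_mul, pow_succ]
          exact mul_le_of_le_one_right (by positivity)
            (by rw [inv_le_one_iff₀]; right; exact hp1.le)
  exact cauchySeq_tendsto_of_complete cauchy
end

section
/- Let p be an odd prime and let (b_n)_{n≥0} be a sequence of p-adic fractions such that b_n ≠ 0 and v_p(b_n) + v_p(b_{n+1}) < 0 for all n ≥ 1. Then the continued fraction [b_0, b_1, b_2, …] converges in ℚ_p, i.e., the sequence of convergents A_n/B_n converges to a p-adic number. -/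
/-- Let `(b n)` be a sequence of `p`-adic fractions with `b n ≠ 0` and
`v_p(b n) + v_p(b (n+1)) < 0` for all `n ≥ 1`.  The sequences `A`, `B` are the
numerators and denominators of the convergents, i.e. they satisfy
`A (-1) = 1, A 0 = b 0, A n = b n * A (n-1) + A (n-2)` and
`B (-1) = 0, B 0 = 1, B n = b n * B (n-1) + B (n-2)` (the `-1`-indexed values are
absorbed in the stated values of `A 0, A 1, B 0, B 1`).  Then the continued fraction
`[b 0, b 1, …]` converges in `ℚ_p`: the convergents `A n / B n` tend to a `p`-adic number. -/
theorem stmt_5 (p : ℕ) [Fact p.Prime] (hp : p ≠ 2) (b : ℕ → ℚ)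
    (hbfrac : ∀ n, IsPadicFrac p (b n))
    (hbne : ∀ n : ℕ, 1 ≤ n → b n ≠ 0)
    (hval : ∀ n : ℕ, 1 ≤ n → padicValRat p (b n) + padicValRat p (b (n + 1)) < 0)
    (A B : ℕ → ℚ)
    (hA0 : A 0 = b 0) (hA1 : A 1 = b 1 * b 0 + 1)
    (hA : ∀ n, A (n + 2) = b (n + 2) * A (n + 1) + A n)
    (hB0 : B 0 = 1) (hB1 : B 1 = b 1)
    (hB : ∀ n, B (n + 2) = b (n + 2) * B (n + 1) + B n) :
    ∃ L : ℚ_[p], Filter.Tendsto (fun n => ((A n / B n : ℚ) : ℚ_[p])) Filter.atTop (nhds L) := by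
  have hprime : p.Prime := Fact.out
  have hp1 : (1 : ℝ) < p := by exact_mod_cast hprime.one_lt
  have hp0 : (0 : ℝ) < p := lt_trans one_pos hp1
  -- norm of a nonzero rational in ℚ_[p]
  have hnorm : ∀ q : ℚ, q ≠ 0 → ‖((q : ℚ) : ℚ_[p])‖ = (p : ℝ) ^ (-padicValRat p q) := by
    intro q hq
    rw [Padic.eq_padicNorm, padicNorm.eq_zpow_of_nonzero hq]
    push_cast
    ring
  -- product of norms of consecutive b's is at least p
  have hbprod : ∀ n : ℕ, 1 ≤ n →
      (p : ℝ) ≤ ‖((b n : ℚ) : ℚ_[p])‖ * ‖((b (n + 1) : ℚ) : ℚ_[p])‖ := by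
    intro n hn
    rw [hnorm _ (hbne n hn), hnorm _ (hbne (n + 1) (le_trans hn (Nat.le_succ n))),
      ← zpow_add₀ (ne_of_gt hp0)]
    have h1 : (1 : ℤ) ≤ -(padicValRat p (b n)) + -(padicValRat p (b (n + 1))) := by
      have := hval n hn; omega
    calc (p : ℝ) = (p : ℝ) ^ (1 : ℤ) := (zpow_one _).symm
      _ ≤ (p : ℝ) ^ (-padicValRat p (b n) + -padicValRat p (b (n + 1))) :=
        zpow_le_zpow_right₀ (le_of_lt hp1) h1
  -- key induction: B n ≠ 0 and the norm recursion
  have key : ∀ n : ℕ, B n ≠ 0 ∧ B (n + 1) ≠ 0 ∧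
      ‖((B (n + 1) : ℚ) : ℚ_[p])‖ = ‖((B n : ℚ) : ℚ_[p])‖ * ‖((b (n + 1) : ℚ) : ℚ_[p])‖ := by
    intro n
    induction n with
    | zero =>
      refine ⟨by rw [hB0]; norm_num, by rw [hB1]; exact hbne 1 le_rfl, ?_⟩
      rw [hB0, hB1]; simp
    | succ n ih =>
      obtain ⟨h0, h1, heq⟩ := ih
      have hb1 : (1 : ℝ) < ‖((b (n + 1) : ℚ) : ℚ_[p])‖ * ‖((b (n + 2) : ℚ) : ℚ_[p])‖ :=
        lt_of_lt_of_le hp1 (hbprod (n + 1) (Nat.le_add_left 1 n))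
      have hB0pos : (0 : ℝ) < ‖((B n : ℚ) : ℚ_[p])‖ := by
        rw [norm_pos_iff]; exact_mod_cast h0
      have hlt : ‖((B n : ℚ) : ℚ_[p])‖ <
          ‖((b (n + 2) : ℚ) : ℚ_[p]) * ((B (n + 1) : ℚ) : ℚ_[p])‖ := by
        rw [norm_mul, heq]
        calc ‖((B n : ℚ) : ℚ_[p])‖ = ‖((B n : ℚ) : ℚ_[p])‖ * 1 := (mul_one _).symm
          _ < ‖((B n : ℚ) : ℚ_[p])‖ *
              (‖((b (n + 1) : ℚ) : ℚ_[p])‖ * ‖((b (n + 2) : ℚ) : ℚ_[p])‖) := by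
            exact (mul_lt_mul_iff_right₀ hB0pos).mpr hb1
          _ = ‖((b (n + 2) : ℚ) : ℚ_[p])‖ *
              (‖((B n : ℚ) : ℚ_[p])‖ * ‖((b (n + 1) : ℚ) : ℚ_[p])‖) := by ring
      have hmax : ‖((B (n + 2) : ℚ) : ℚ_[p])‖ =
          ‖((b (n + 2) : ℚ) : ℚ_[p]) * ((B (n + 1) : ℚ) : ℚ_[p])‖ := by
        have hcast : ((B (n + 2) : ℚ) : ℚ_[p]) =
            ((b (n + 2) : ℚ) : ℚ_[p]) * ((B (n + 1) : ℚ) : ℚ_[p]) + ((B n : ℚ) : ℚ_[p]) := by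
          rw [hB n]; push_cast; ring
        rw [hcast, Padic.add_eq_max_of_ne (ne_of_gt hlt), max_eq_left (le_of_lt hlt)]
      refine ⟨h1, ?_, ?_⟩
      · have : ‖((B (n + 2) : ℚ) : ℚ_[p])‖ ≠ 0 := by
          rw [hmax]; exact ne_of_gt (lt_of_le_of_lt (norm_nonneg _) hlt)
        intro hc
        apply this
        rw [hc]; simp
      · rw [hmax, norm_mul, mul_comm]
  -- growth of the denominators' norms
  have grow : ∀ n : ℕ, (p : ℝ) ^ n * ‖((b 1 : ℚ) : ℚ_[p])‖ ≤
      ‖((B n : ℚ) : ℚ_[p])‖ * ‖((B (n + 1) : ℚ) : ℚ_[p])‖ := by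
    intro n
    induction n with
    | zero =>
      rw [(key 0).2.2, hB0]
      simp
    | succ n ih =>
      have h1 := (key (n + 1)).2.2
      have h0 := (key n).2.2
      have hbp := hbprod (n + 1) (Nat.le_add_left 1 n)
      calc (p : ℝ) ^ (n + 1) * ‖((b 1 : ℚ) : ℚ_[p])‖
          = ((p : ℝ) ^ n * ‖((b 1 : ℚ) : ℚ_[p])‖) * p := by ring
        _ ≤ (‖((B n : ℚ) : ℚ_[p])‖ * ‖((B (n + 1) : ℚ) : ℚ_[p])‖) *
            (‖((b (n + 1) : ℚ) : ℚ_[p])‖ * ‖((b (n + 1 + 1) : ℚ) : ℚ_[p])‖) := by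
          apply mul_le_mul ih hbp (le_of_lt hp0)
          positivity
        _ = ‖((B (n + 1) : ℚ) : ℚ_[p])‖ * ‖((B (n + 1 + 1) : ℚ) : ℚ_[p])‖ := by
          rw [h1, h0]; ring
  -- determinant identity
  have det : ∀ n : ℕ, A (n + 1) * B n - A n * B (n + 1) = (-1 : ℚ) ^ n := by
    intro n
    induction n with
    | zero => rw [hA0, hA1, hB0, hB1]; ring
    | succ n ih =>
      rw [hA n, hB n, pow_succ]
      linear_combination (-1 : ℚ) * ih
  -- consecutive differences
  have diff : ∀ n : ℕ, (A (n + 1) / B (n + 1) - A n / B n : ℚ) =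
      (-1 : ℚ) ^ n / (B n * B (n + 1)) := by
    intro n
    have h0 := (key n).1
    have h1 := (key n).2.1
    field_simp
    linear_combination det n
  -- the geometric bound on distances
  have hb1ne : b 1 ≠ 0 := hbne 1 le_rfl
  have hb1pos : (0 : ℝ) < ‖((b 1 : ℚ) : ℚ_[p])‖ := by
    rw [norm_pos_iff]; exact_mod_cast hb1ne
  set C : ℝ := ‖((b 1 : ℚ) : ℚ_[p])‖⁻¹ with hC
  set r : ℝ := (p : ℝ)⁻¹ with hr
  have hrlt : r < 1 := by
    rw [hr]
    exact inv_lt_one_of_one_lt₀ hp1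
  have hdist : ∀ n : ℕ, dist ((A n / B n : ℚ) : ℚ_[p]) ((A (n + 1) / B (n + 1) : ℚ) : ℚ_[p])
      ≤ C * r ^ n := by
    intro n
    rw [dist_eq_norm, ← norm_neg]
    have hcast : -(((A n / B n : ℚ) : ℚ_[p]) - ((A (n + 1) / B (n + 1) : ℚ) : ℚ_[p]))
        = (((A (n + 1) / B (n + 1) - A n / B n : ℚ)) : ℚ_[p]) := by push_cast; ring
    rw [hcast, diff n]
    have hBn := (key n).1
    have hBn1 := (key n).2.1
    have hne : (B n * B (n + 1) : ℚ) ≠ 0 := mul_ne_zero hBn hBn1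
    have : ‖(((-1 : ℚ) ^ n / (B n * B (n + 1)) : ℚ) : ℚ_[p])‖
        = (‖((B n : ℚ) : ℚ_[p])‖ * ‖((B (n + 1) : ℚ) : ℚ_[p])‖)⁻¹ := by
      push_cast
      rw [norm_div, norm_pow, norm_neg, norm_one, one_pow, norm_mul, one_div]
    rw [this]
    have hpos : (0 : ℝ) < (p : ℝ) ^ n * ‖((b 1 : ℚ) : ℚ_[p])‖ := by positivity
    have := inv_anti₀ hpos (grow n)
    refine le_trans this ?_
    rw [hC, hr, mul_inv, inv_pow, ← inv_pow]
    ring_nf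
    exact le_refl _
  have hcauchy : CauchySeq (fun n => ((A n / B n : ℚ) : ℚ_[p])) :=
    cauchySeq_of_le_geometric r C hrlt hdist
  exact cauchySeq_tendsto_of_complete hcauchy
end

section
/- Let p be an odd prime and suppose α₀ ∈ ℚ_p is the image of a rational number. If (α_n) in ℚ_p and (b_n) in ℚ are sequences satisfying the laws of Algorithm (3) applied to α₀, then there exists an index N with α_N = b_N; that is, Algorithm (3) applied to a rational number stops in a finite number of steps. -/
/-- `b` is Browkin's integral floor `s α`: the unique `p`-adic fraction with
`|b| < p/2` and `‖α - b‖_p < 1`. -/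
def IsIntFloor (p : ℕ) [Fact p.Prime] (α : ℚ_[p]) (b : ℚ) : Prop :=
  IsPadicFrac p b ∧ |b| < (p : ℚ) / 2 ∧ ‖α - (b : ℚ_[p])‖ < 1

/-- `b` is Browkin's fractional floor `t α`: the unique `p`-adic fraction with
`|b| < 1/2` and `‖α - b‖_p ≤ 1`. -/
def IsFracFloor (p : ℕ) [Fact p.Prime] (α : ℚ_[p]) (b : ℚ) : Prop :=
  IsPadicFrac p b ∧ |b| < 1 / 2 ∧ ‖α - (b : ℚ_[p])‖ ≤ 1

/-- Algorithm (3): `b n = s (α n)` for even `n`, `b n = t (α n)` for odd `n`,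
and `α (n + 1) = (α n - b n)⁻¹`. -/
def Alg3 (p : ℕ) [Fact p.Prime] (α : ℕ → ℚ_[p]) (b : ℕ → ℚ) : Prop :=
  (∀ n, Even n → IsIntFloor p (α n) (b n)) ∧
  (∀ n, Odd n → IsFracFloor p (α n) (b n)) ∧
  ∀ n, α (n + 1) = (α n - (b n : ℚ_[p]))⁻¹



section Steps
variable {p : ℕ} [hp : Fact p.Prime]



lemma myNorm_le_one_iff {x : ℚ} (hx : x ≠ 0) :
    padicNorm p x ≤ 1 ↔ 0 ≤ padicValRat p x := by
  have h1 : (1:ℚ) < p := by exact_mod_cast hp.out.one_lt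
  rw [padicNorm.eq_zpow_of_nonzero hx,
      show (1:ℚ) = (p:ℚ) ^ (0:ℤ) by simp,
      zpow_le_zpow_iff_right₀ h1]
  omega

lemma myNorm_lt_one_iff {x : ℚ} (hx : x ≠ 0) :
    padicNorm p x < 1 ↔ 1 ≤ padicValRat p x := by
  have h1 : (1:ℚ) < p := by exact_mod_cast hp.out.one_lt
  rw [padicNorm.eq_zpow_of_nonzero hx,
      show (1:ℚ) = (p:ℚ) ^ (0:ℤ) by simp,
      zpow_lt_zpow_iff_right₀ h1]
  omega

lemma myValInt_pow : padicValInt p ((p:ℤ) ^ M) = M := by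
  unfold padicValInt
  rw [Int.natAbs_pow]
  simp [padicValNat.prime_pow]

lemma myVal_div {K d : ℤ} (M : ℕ) (hK : K ≠ 0) (hd : ¬ (p:ℤ) ∣ d) :
    padicValRat p ((K:ℚ)/((d:ℚ) * (p:ℚ)^M)) = (padicValInt p K : ℤ) - M := by
  have hd0 : d ≠ 0 := by rintro rfl; exact hd (dvd_zero _)
  have hp0 : (p:ℤ) ≠ 0 := by exact_mod_cast hp.out.ne_zero
  have hden0 : d * (p:ℤ)^M ≠ 0 := mul_ne_zero hd0 (pow_ne_zero _ hp0)
  rw [show ((d:ℚ) * (p:ℚ)^M) = ((d * (p:ℤ)^M : ℤ) : ℚ) by push_cast; ring,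
      padicValRat.div (p := p) (by exact_mod_cast hK) (by exact_mod_cast hden0),
      padicValRat.of_int, padicValRat.of_int,
      padicValInt.mul hd0 (pow_ne_zero _ hp0),
      padicValInt.eq_zero_of_not_dvd hd, myValInt_pow]
  push_cast; ring

lemma myPPart {N : ℤ} (hN : N ≠ 0) :
    ∃ (N' : ℤ) (u : ℕ), N = N' * (p:ℤ)^u ∧ ¬(p:ℤ) ∣ N' ∧ N' ≠ 0 ∧ |(N':ℚ)| ≤ |(N:ℚ)| := by
  have hp1 : 1 < (p:ℤ) := by exact_mod_cast hp.out.one_lt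
  set u := padicValInt p N with hu
  have hdvd : (p:ℤ)^u ∣ N := padicValInt_dvd N
  obtain ⟨N', hN'⟩ := hdvd
  have hN'eq : N = N' * (p:ℤ)^u := by rw [hN']; ring
  have hN'0 : N' ≠ 0 := by rintro rfl; simp at hN'eq; exact hN hN'eq
  refine ⟨N', u, hN'eq, ?_, hN'0, ?_⟩
  · rintro ⟨k, rfl⟩
    have : (p:ℤ)^(u+1) ∣ N := ⟨k, by rw [hN'eq]; ring⟩
    rcases (padicValInt_dvd_iff (u+1) N).mp this with h | h
    · exact hN h
    · omega
  · have h1 : (1:ℚ) ≤ (p:ℚ)^u := one_le_pow₀ (by exact_mod_cast hp1.le)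
    have : |(N:ℚ)| = |(N':ℚ)| * (p:ℚ)^u := by
      have hpq : |(p:ℚ)| = (p:ℚ) := abs_of_pos (by exact_mod_cast hp.out.pos)
      rw [show (N:ℚ) = (N':ℚ) * (p:ℚ)^u by exact_mod_cast hN'eq, abs_mul, abs_pow, hpq]
    nlinarith [abs_nonneg ((N':ℚ))]

lemma odd_step {q b : ℚ} {c d : ℤ} {t : ℕ}
    (hd : d ≠ 0) (hpd : ¬(p:ℤ) ∣ d) (ht : 1 ≤ t)
    (hq : q = (c:ℚ) / ((d:ℚ) * (p:ℚ)^t))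
    (hb : IsPadicFrac p b) (hb2 : |b| < 1/2)
    (hnorm : padicNorm p (q - b) ≤ 1) (hne : q - b ≠ 0) :
    ∃ N : ℤ, N ≠ 0 ∧ (q - b)⁻¹ = (d:ℚ) / (N:ℚ) ∧
      |(N:ℚ)| < |(c:ℚ)|/(p:ℚ) + |(d:ℚ)|/2 := by
  obtain ⟨m, e, hbe⟩ := hb
  have hP0 : (0:ℚ) < (p:ℚ) := by exact_mod_cast hp.out.pos
  have hP1 : (1:ℚ) < (p:ℚ) := by exact_mod_cast hp.out.one_lt
  have hPm : (0:ℚ) < (p:ℚ)^m := by positivity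
  have hPt : (0:ℚ) < (p:ℚ)^t := by positivity
  have hd0 : ((d:ℚ)) ≠ 0 := Int.cast_ne_zero.mpr hd
  have hbe' : b = (e:ℚ) / (p:ℚ)^m := by
    field_simp at hbe ⊢; linarith [hbe]
  set K : ℤ := c * (p:ℤ)^m - e * d * (p:ℤ)^t with hKdef
  have hKq : (K:ℚ) = (c:ℚ)*(p:ℚ)^m - (e:ℚ)*(d:ℚ)*(p:ℚ)^t := by push_cast [hKdef]; ring
  have hsub : q - b = (K:ℚ) / ((d:ℚ) * (p:ℚ)^(t+m)) := by
    rw [hq, hbe', hKq]; field_simp; ring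
  have hK0 : K ≠ 0 := by
    rintro h; rw [h] at hsub; simp at hsub; exact hne hsub
  have hval : 0 ≤ padicValRat p (q - b) := (myNorm_le_one_iff hne).mp hnorm
  rw [hsub, myVal_div (t+m) hK0 hpd] at hval
  have hle : t + m ≤ padicValInt p K := by exact_mod_cast by omega
  have hdvd : (p:ℤ)^(t+m) ∣ K := (padicValInt_dvd_iff (t+m) K).mpr (Or.inr hle)
  obtain ⟨N, hKN⟩ := hdvd
  have hN0 : N ≠ 0 := by rintro rfl; simp at hKN; exact hK0 hKN
  have hKNq : (K:ℚ) = (p:ℚ)^(t+m) * (N:ℚ) := by exact_mod_cast hKN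
  have hQN : q - b = (N:ℚ) / (d:ℚ) := by
    rw [hsub, hKNq]; field_simp
  refine ⟨N, hN0, by rw [hQN, inv_div], ?_⟩
  -- bounds
  have he : |(e:ℚ)| < (p:ℚ)^m / 2 := by
    have hbabs : |b| = |(e:ℚ)| / (p:ℚ)^m := by
      rw [hbe', abs_div, abs_pow, abs_of_pos hP0]
    rw [hbabs] at hb2
    rw [div_lt_iff₀ hPm] at hb2
    linarith
  have hKabs : |(K:ℚ)| ≤ |(c:ℚ)| *(p:ℚ)^m + |(e:ℚ)| *|(d:ℚ)| *(p:ℚ)^t := by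
    rw [hKq]
    calc |(c:ℚ)*(p:ℚ)^m - (e:ℚ)*(d:ℚ)*(p:ℚ)^t|
        ≤ |(c:ℚ)*(p:ℚ)^m| + |(e:ℚ)*(d:ℚ)*(p:ℚ)^t| := abs_sub _ _
      _ = |(c:ℚ)| *(p:ℚ)^m + |(e:ℚ)| *|(d:ℚ)| *(p:ℚ)^t := by
          rw [abs_mul, abs_mul, abs_mul, abs_pow, abs_pow, abs_of_pos hP0]
  have hNabs : |(N:ℚ)| * (p:ℚ)^(t+m) = |(K:ℚ)| := by
    rw [hKNq, abs_mul, abs_pow, abs_of_pos hP0]; ring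
  have hD0 : (0:ℚ) < |(d:ℚ)| := abs_pos.mpr hd0
  have hcn : (0:ℚ) ≤ |(c:ℚ)| := abs_nonneg _
  -- |N| * P^t * P^m ≤ |c| P^m + |e||d| P^t < |c| P^m + (P^m/2)|d| P^t
  have h1 : |(N:ℚ)| * ((p:ℚ)^t * (p:ℚ)^m) < |(c:ℚ)| *(p:ℚ)^m + ((p:ℚ)^m/2)*|(d:ℚ)| *(p:ℚ)^t := by
    have := mul_lt_mul_of_pos_right he (mul_pos hD0 hPt)
    rw [pow_add] at hNabs
    nlinarith
  have h2 : |(N:ℚ)| * (p:ℚ)^t < |(c:ℚ)| + |(d:ℚ)|/2 * (p:ℚ)^t := by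
    have := (mul_lt_mul_iff_of_pos_right hPm).mp (by nlinarith : (|(N:ℚ)| * (p:ℚ)^t) * (p:ℚ)^m < (|(c:ℚ)| + |(d:ℚ)|/2 * (p:ℚ)^t) * (p:ℚ)^m)
    exact this
  have h3' : |(N:ℚ)| < (|(c:ℚ)| + |(d:ℚ)|/2 * (p:ℚ)^t)/(p:ℚ)^t := (lt_div_iff₀ hPt).mpr h2
  have heq : (|(c:ℚ)| + |(d:ℚ)|/2 * (p:ℚ)^t)/(p:ℚ)^t = |(c:ℚ)|/(p:ℚ)^t + |(d:ℚ)|/2 := by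
    field_simp
  have h3 : |(N:ℚ)| < |(c:ℚ)|/(p:ℚ)^t + |(d:ℚ)|/2 := heq ▸ h3'
  have hppt : (p:ℚ) ≤ (p:ℚ)^t := by
    calc (p:ℚ) = (p:ℚ)^1 := (pow_one _).symm
    _ ≤ (p:ℚ)^t := pow_le_pow_right₀ hP1.le ht
  have h4 : |(c:ℚ)|/(p:ℚ)^t ≤ |(c:ℚ)|/(p:ℚ) := by
    apply div_le_div_of_nonneg_left hcn hP0 hppt
  linarith

lemma even_step {q b : ℚ} {d N : ℤ}
    (hN : N ≠ 0) (hq : q = (d:ℚ) / (N:ℚ))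
    (hb : IsPadicFrac p b) (hb2 : |b| < (p:ℚ)/2)
    (hnorm : padicNorm p (q - b) < 1) (hne : q - b ≠ 0) :
    ∃ (c₂ d₂ : ℤ) (t₂ : ℕ), d₂ ≠ 0 ∧ ¬(p:ℤ) ∣ d₂ ∧ 1 ≤ t₂ ∧
      (q - b)⁻¹ = (c₂:ℚ) / ((d₂:ℚ) * (p:ℚ)^t₂) ∧ c₂ ≠ 0 ∧
      |(c₂:ℚ)| ≤ |(N:ℚ)| ∧ |(d₂:ℚ)| < |(d:ℚ)|/(p:ℚ) + |(c₂:ℚ)|/2 := by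
  obtain ⟨m, f, hbf⟩ := hb
  have hP0 : (0:ℚ) < (p:ℚ) := by exact_mod_cast hp.out.pos
  have hP1 : (1:ℚ) < (p:ℚ) := by exact_mod_cast hp.out.one_lt
  have hPm : (0:ℚ) < (p:ℚ)^m := by positivity
  have hN0 : ((N:ℚ)) ≠ 0 := Int.cast_ne_zero.mpr hN
  have hbf' : b = (f:ℚ) / (p:ℚ)^m := by
    field_simp at hbf ⊢; linarith [hbf]
  obtain ⟨N', u, hNN', hpN', hN'0, hN'le⟩ := myPPart (p := p) hN
  have hN'q : ((N':ℚ)) ≠ 0 := Int.cast_ne_zero.mpr hN'0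
  have hNq : (N:ℚ) = (N':ℚ) * (p:ℚ)^u := by exact_mod_cast hNN'
  set K : ℤ := d * (p:ℤ)^m - f * N with hKdef
  have hKq : (K:ℚ) = (d:ℚ)*(p:ℚ)^m - (f:ℚ)*(N:ℚ) := by push_cast [hKdef]; ring
  have hsub : q - b = (K:ℚ) / ((N':ℚ) * (p:ℚ)^(u+m)) := by
    rw [hq, hbf', hKq, hNq]; field_simp; ring
  have hK0 : K ≠ 0 := by
    rintro h; rw [h] at hsub; simp at hsub; exact hne hsub
  have hval : 1 ≤ padicValRat p (q - b) := (myNorm_lt_one_iff hne).mp hnorm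
  rw [hsub, myVal_div (u+m) hK0 hpN'] at hval
  have hle : u + m + 1 ≤ padicValInt p K := by exact_mod_cast by omega
  have hdvd : (p:ℤ)^(u+m+1) ∣ K := (padicValInt_dvd_iff (u+m+1) K).mpr (Or.inr hle)
  obtain ⟨h, hKh⟩ := hdvd
  have hh0 : h ≠ 0 := by rintro rfl; simp at hKh; exact hK0 hKh
  have hKhq : (K:ℚ) = (p:ℚ)^(u+m+1) * (h:ℚ) := by exact_mod_cast hKh
  have hQh : q - b = ((h:ℚ) * (p:ℚ)) / (N':ℚ) := by
    rw [hsub, hKhq]; rw [pow_succ]; field_simp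
  obtain ⟨d₂, w, hhd₂, hpd₂, hd₂0, hd₂le⟩ := myPPart (p := p) hh0
  have hhq : (h:ℚ) = (d₂:ℚ) * (p:ℚ)^w := by exact_mod_cast hhd₂
  refine ⟨N', d₂, w+1, hd₂0, hpd₂, by omega, ?_, hN'0, hN'le, ?_⟩
  · rw [hQh, inv_div, hhq, pow_succ]; ring_nf
  · -- |d₂| ≤ |h| < |d|/p + |N'|/2
    have hd₂h : |(d₂:ℚ)| ≤ |(h:ℚ)| := hd₂le
    have hf : |(f:ℚ)| < (p:ℚ)^m * (p:ℚ) / 2 := by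
      have hbabs : |b| = |(f:ℚ)| / (p:ℚ)^m := by
        rw [hbf', abs_div, abs_pow, abs_of_pos hP0]
      rw [hbabs, div_lt_iff₀ hPm] at hb2
      nlinarith
    have hKabs : |(K:ℚ)| ≤ |(d:ℚ)| * (p:ℚ)^m + |(f:ℚ)| * |(N:ℚ)| := by
      rw [hKq]
      calc |(d:ℚ)*(p:ℚ)^m - (f:ℚ)*(N:ℚ)| ≤ |(d:ℚ)*(p:ℚ)^m| + |(f:ℚ)*(N:ℚ)| := abs_sub _ _
        _ = |(d:ℚ)| * (p:ℚ)^m + |(f:ℚ)| * |(N:ℚ)| := by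
            rw [abs_mul, abs_mul, abs_pow, abs_of_pos hP0]
    have hNabs : |(N:ℚ)| = |(N':ℚ)| * (p:ℚ)^u := by
      rw [hNq, abs_mul, abs_pow, abs_of_pos hP0]
    have hhabs : |(h:ℚ)| * (p:ℚ)^(u+m+1) = |(K:ℚ)| := by
      rw [hKhq, abs_mul, abs_pow, abs_of_pos hP0]; ring
    have hN'pos : (0:ℚ) < |(N':ℚ)| := abs_pos.mpr hN'q
    have hdn : (0:ℚ) ≤ |(d:ℚ)| := abs_nonneg _
    have hPu : (0:ℚ) < (p:ℚ)^u := by positivity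
    have hPum : (0:ℚ) < (p:ℚ)^(u+m+1) := by positivity
    have hpu1 : (1:ℚ) ≤ (p:ℚ)^u := one_le_pow₀ hP1.le
    have e2 : |(f:ℚ)| * |(N:ℚ)| = |(f:ℚ)| * (|(N':ℚ)| * (p:ℚ)^u) := by rw [hNabs]
    have hfN : |(f:ℚ)| * (|(N':ℚ)| * (p:ℚ)^u) < ((p:ℚ)^m * (p:ℚ)/2) * (|(N':ℚ)| * (p:ℚ)^u) :=
      mul_lt_mul_of_pos_right hf (mul_pos hN'pos hPu)
    have h1 : |(h:ℚ)| * (p:ℚ)^(u+m+1) < |(d:ℚ)| * (p:ℚ)^m + ((p:ℚ)^m * (p:ℚ)/2) * (|(N':ℚ)| * (p:ℚ)^u) := by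
      linarith [hKabs, hhabs.le, e2, hfN]
    have h2 : |(h:ℚ)| * (p:ℚ)^(u+1) < |(d:ℚ)| + |(N':ℚ)|/2 * (p:ℚ)^(u+1) := by
      refine lt_of_mul_lt_mul_right ?_ hPm.le
      calc |(h:ℚ)| * (p:ℚ)^(u+1) * (p:ℚ)^m = |(h:ℚ)| * (p:ℚ)^(u+m+1) := by ring
        _ < |(d:ℚ)| * (p:ℚ)^m + ((p:ℚ)^m * (p:ℚ)/2) * (|(N':ℚ)| * (p:ℚ)^u) := h1
        _ = (|(d:ℚ)| + |(N':ℚ)|/2 * (p:ℚ)^(u+1)) * (p:ℚ)^m := by ring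
    have h3 : |(h:ℚ)| * (p:ℚ)^(u+1) < |(d:ℚ)| * (p:ℚ)^u + |(N':ℚ)|/2 * (p:ℚ)^(u+1) := by
      have : |(d:ℚ)| ≤ |(d:ℚ)| * (p:ℚ)^u := le_mul_of_one_le_right hdn hpu1
      linarith
    have hq0 : (0:ℚ) < (p:ℚ)^(u+1) := by positivity
    have heq : (|(d:ℚ)| * (p:ℚ)^u + |(N':ℚ)|/2 * (p:ℚ)^(u+1)) / (p:ℚ)^(u+1)
        = |(d:ℚ)|/(p:ℚ) + |(N':ℚ)|/2 := by
      rw [pow_succ]; field_simp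
    have h4 : |(h:ℚ)| < |(d:ℚ)|/(p:ℚ) + |(N':ℚ)|/2 := by
      calc |(h:ℚ)| < (|(d:ℚ)| * (p:ℚ)^u + |(N':ℚ)|/2 * (p:ℚ)^(u+1)) / (p:ℚ)^(u+1) :=
            (lt_div_iff₀ hq0).mpr h3
        _ = |(d:ℚ)|/(p:ℚ) + |(N':ℚ)|/2 := heq
    linarith

end Steps

theorem stmt6_aux (p : ℕ) [Fact p.Prime] (hp : p ≠ 2) (q : ℚ)
    (α : ℕ → Padic p) (b : ℕ → ℚ) (h0 : α 0 = (q : ℚ_[p]))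
    (hsevn : ∀ n, Even n → IsPadicFrac p (b n) ∧ |b n| < (p:ℚ)/2 ∧ ‖α n - ((b n : ℚ) : ℚ_[p])‖ < 1)
    (hsodd : ∀ n, Odd n → IsPadicFrac p (b n) ∧ |b n| < 1/2 ∧ ‖α n - ((b n : ℚ) : ℚ_[p])‖ ≤ 1)
    (hrec : ∀ n, α (n + 1) = (α n - ((b n : ℚ) : ℚ_[p]))⁻¹) :
    ∃ N : ℕ, α N = ((b N : ℚ) : ℚ_[p]) := by
  by_contra hcon
  push_neg at hcon
  have hp3 : 3 ≤ p := by
    have h2 := (Fact.out : p.Prime).two_le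
    rcases Nat.lt_or_ge p 3 with h | h
    · interval_cases p <;> simp_all
    · exact h
  set Q : ℕ → ℚ := fun n => Nat.rec q (fun n qn => (qn - b n)⁻¹) n with hQdef
  have hQ0 : Q 0 = q := rfl
  have hQs : ∀ n, Q (n+1) = (Q n - b n)⁻¹ := fun n => rfl
  have hαQ : ∀ n, α n = ((Q n : ℚ) : ℚ_[p]) := by
    intro n; induction n with
    | zero => exact h0
    | succ n ih => rw [hrec n, ih, hQs n]; push_cast; ring
  have hne : ∀ n, Q n - b n ≠ 0 := by
    intro n h
    exact hcon n (by rw [hαQ n, sub_eq_zero.mp h])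
  have hnorm : ∀ n, ‖α n - ((b n : ℚ) : ℚ_[p])‖ = padicNorm p (Q n - b n) := by
    intro n
    rw [hαQ n, show ((Q n : ℚ):ℚ_[p]) - ((b n:ℚ):ℚ_[p]) = (((Q n - b n : ℚ)):ℚ_[p]) by push_cast; ring,
      Padic.eq_padicNorm]
  have key : ∀ M : ℕ, ∀ n : ℕ, Odd n → ∀ c d : ℤ, ∀ t : ℕ, d ≠ 0 → ¬(p:ℤ) ∣ d → 1 ≤ t →
      Q n = (c:ℚ) / ((d:ℚ) * (p:ℚ)^t) → c.natAbs + 2 * d.natAbs ≤ M → False := by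
    intro M
    induction M with
    | zero =>
      intro n hn c d t hd _ _ _ hM
      have := Int.natAbs_pos.mpr hd; omega
    | succ M ih =>
      intro n hn c d t hd hpd ht hq hM
      obtain ⟨hfrac, habs, hno0⟩ := hsodd n hn
      rw [hnorm n] at hno0
      have hno : padicNorm p (Q n - b n) ≤ 1 := by exact_mod_cast hno0
      obtain ⟨N, hN0, hinv, hNb⟩ := odd_step hd hpd ht hq hfrac habs hno (hne n)
      have hQn1 : Q (n+1) = (d:ℚ)/(N:ℚ) := by rw [hQs n, hinv]
      obtain ⟨hfrac2, habs2, hno20⟩ := hsevn (n+1) hn.add_one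
      rw [hnorm (n+1)] at hno20
      have hno2 : padicNorm p (Q (n+1) - b (n+1)) < 1 := by exact_mod_cast hno20
      obtain ⟨c₂, d₂, t₂, hd₂0, hpd₂, ht₂, hinv2, hc₂0, hc₂le, hd₂lt⟩ :=
        even_step hN0 hQn1 hfrac2 habs2 hno2 (hne (n+1))
      have hQn2 : Q (n+2) = (c₂:ℚ)/((d₂:ℚ) * (p:ℚ)^t₂) := by rw [hQs (n+1), hinv2]
      have hdec : c₂.natAbs + 2 * d₂.natAbs ≤ M := by
        have hP3 : (3:ℚ) ≤ (p:ℚ) := by exact_mod_cast hp3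
        have hP0 : (0:ℚ) < (p:ℚ) := by linarith
        have hD1 : (1:ℚ) ≤ |(d:ℚ)| := by
          have : (1:ℤ) ≤ |d| := Int.one_le_abs hd
          exact_mod_cast this
        have hA0 : (0:ℚ) ≤ |(c:ℚ)| := abs_nonneg _
        have hA20 : (0:ℚ) ≤ |(c₂:ℚ)| := abs_nonneg _
        have hip1 : |(c:ℚ)|/(p:ℚ) ≤ |(c:ℚ)|/3 := by
          apply div_le_div_of_nonneg_left hA0 (by norm_num) hP3
        have hip2 : |(d:ℚ)|/(p:ℚ) ≤ |(d:ℚ)|/3 := by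
          apply div_le_div_of_nonneg_left (by linarith) (by norm_num) hP3
        have hlt : |(c₂:ℚ)| + 2 * |(d₂:ℚ)| < |(c:ℚ)| + 2 * |(d:ℚ)| := by linarith
        have hlt' : c₂.natAbs + 2 * d₂.natAbs < c.natAbs + 2 * d.natAbs := by
          have h2 : ((c₂.natAbs + 2*d₂.natAbs : ℕ) : ℚ) < ((c.natAbs + 2*d.natAbs : ℕ) : ℚ) := by
            push_cast [Nat.cast_natAbs, Int.cast_abs]
            exact hlt
          exact_mod_cast h2
        omega
      exact ih (n+2) (by rcases hn with ⟨k, rfl⟩; exact ⟨k+1, by ring⟩) c₂ d₂ t₂ hd₂0 hpd₂ ht₂ hQn2 hdec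
  obtain ⟨hfrac, habs, hno0⟩ := hsevn 0 Even.zero
  rw [hnorm 0] at hno0
  have hno : padicNorm p (Q 0 - b 0) < 1 := by exact_mod_cast hno0
  have hden0 : ((q.den:ℤ)) ≠ 0 := by exact_mod_cast q.den_nz
  have hq00 : Q 0 = ((q.num:ℚ))/(((q.den:ℤ)):ℚ) := by
    rw [hQ0]; push_cast; exact (Rat.num_div_den q).symm
  obtain ⟨c₂, d₂, t₂, hd₂0, hpd₂, ht₂, hinv2, _, _, _⟩ :=
    even_step hden0 hq00 hfrac habs hno (hne 0)
  exact key (c₂.natAbs + 2 * d₂.natAbs) 1 odd_one c₂ d₂ t₂ hd₂0 hpd₂ ht₂ ((hQs 0).trans hinv2) le_rfl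

theorem stmt_6 (p : ℕ) [Fact p.Prime] (hp : p ≠ 2) (q : ℚ)
    (α : ℕ → ℚ_[p]) (b : ℕ → ℚ) (h0 : α 0 = (q : ℚ_[p])) (halg : Alg3 p α b) :
    ∃ N : ℕ, α N = (b N : ℚ_[p]) := by
  obtain ⟨h1, h2, h3⟩ := halg
  exact stmt6_aux p hp q α b h0 (fun n hn => h1 n hn) (fun n hn => h2 n hn) h3
end

section
/- Let p be an odd prime and let α₀ ∈ ℚ_p be a quadratic irrational with conjugate ᾱ₀. Let (α_n), (b_n) be the sequences produced by Algorithm (3) applied to α₀, and assume the expansion is periodic. Then the expansion is purely periodic if and only if ‖α₀‖_p ≥ 1 and ‖ᾱ₀‖_p < 1. -/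
set_option linter.unusedSectionVars false
set_option maxHeartbeats 1600000

namespace Stmt7Aux

variable {p : ℕ} [Fact p.Prime]

theorem one_lt_p : (1:ℝ) < p := by exact_mod_cast (Fact.out : p.Prime).one_lt

theorem norm_ge_p {x : ℚ_[p]} (h : 1 < ‖x‖) : (p:ℝ) ≤ ‖x‖ := by
  have hx : x ≠ 0 := by rintro rfl; simp at h; linarith
  rw [Padic.norm_eq_zpow_neg_valuation hx] at h ⊢
  have h1 : (p:ℝ) ^ (0:ℤ) < (p:ℝ) ^ (-x.valuation) := by simpa using h
  rw [zpow_lt_zpow_iff_right₀ one_lt_p] at h1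
  calc (p:ℝ) = (p:ℝ) ^ (1:ℤ) := by simp
    _ ≤ (p:ℝ) ^ (-x.valuation) := by
        rw [zpow_le_zpow_iff_right₀ one_lt_p]; omega

theorem norm_le_invp {x : ℚ_[p]} (hx : x ≠ 0) (h : ‖x‖ < 1) : (p:ℝ) * ‖x‖ ≤ 1 := by
  rw [Padic.norm_eq_zpow_neg_valuation hx] at h ⊢
  have h1 : (p:ℝ) ^ (-x.valuation) < (p:ℝ) ^ (0:ℤ) := by simpa using h
  rw [zpow_lt_zpow_iff_right₀ one_lt_p] at h1
  have hp0 : (0:ℝ) < p := by linarith [one_lt_p (p := p)]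
  calc (p:ℝ) * (p:ℝ) ^ (-x.valuation) = (p:ℝ) ^ (1 + -x.valuation) := by
        rw [zpow_add₀ hp0.ne']; simp
    _ ≤ (p:ℝ) ^ (0:ℤ) := by rw [zpow_le_zpow_iff_right₀ one_lt_p]; omega
    _ = 1 := by simp

/-- ultrametric: if `‖x - y‖ < ‖x‖` then `‖y‖ = ‖x‖`. -/
theorem norm_eq_of_sub_lt {x y : ℚ_[p]} (h : ‖x - y‖ < ‖x‖) : ‖y‖ = ‖x‖ := by
  have hne : ‖x‖ ≠ ‖y - x‖ := by
    rw [show y - x = -(x - y) by ring, norm_neg]; exact (ne_of_gt h)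
  calc ‖y‖ = ‖x + (y - x)‖ := by ring_nf
    _ = max ‖x‖ ‖y - x‖ := Padic.add_eq_max_of_ne hne
    _ = ‖x‖ := by
        rw [max_eq_left]
        rw [show y - x = -(x - y) by ring, norm_neg]; linarith

/-- ultrametric: if `‖x‖ < ‖y‖` then `‖x - y‖ = ‖y‖`. -/
theorem norm_sub_eq_of_lt {x y : ℚ_[p]} (h : ‖x‖ < ‖y‖) : ‖x - y‖ = ‖y‖ := by
  have hne : ‖x‖ ≠ ‖-y‖ := by rw [norm_neg]; exact ne_of_lt h
  calc ‖x - y‖ = ‖x + -y‖ := by ring_nf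
    _ = max ‖x‖ ‖-y‖ := Padic.add_eq_max_of_ne hne
    _ = ‖y‖ := by rw [norm_neg, max_eq_right (le_of_lt h)]

theorem norm_sub_le_max (x y : ℚ_[p]) : ‖x - y‖ ≤ max ‖x‖ ‖y‖ := by
  calc ‖x - y‖ = ‖x + -y‖ := by ring_nf
    _ ≤ max ‖x‖ ‖-y‖ := Padic.nonarchimedean _ _
    _ = max ‖x‖ ‖y‖ := by rw [norm_neg]

theorem isPadicFrac_neg {a : ℚ} (h : IsPadicFrac p a) : IsPadicFrac p (-a) := by
  obtain ⟨m, z, hz⟩ := h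
  exact ⟨m, -z, by push_cast; linarith⟩

theorem isPadicFrac_sub {a c : ℚ} (ha : IsPadicFrac p a) (hc : IsPadicFrac p c) :
    IsPadicFrac p (a - c) := by
  obtain ⟨m, z, hz⟩ := ha
  obtain ⟨n, w, hw⟩ := hc
  refine ⟨m + n, z * (p:ℤ)^n - w * (p:ℤ)^m, ?_⟩
  push_cast
  rw [pow_add]
  calc (a - c) * ((p:ℚ)^m * (p:ℚ)^n) = (a * p^m) * p^n - (c * p^n) * p^m := by ring
    _ = (z:ℚ) * p^n - (w:ℚ) * p^m := by rw [hz, hw]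

theorem isPadicFrac_int {a : ℚ} (hfrac : IsPadicFrac p a) (h1 : ‖((a:ℚ) : ℚ_[p])‖ ≤ 1) :
    ∃ z : ℤ, a = (z : ℚ) := by
  obtain ⟨m, z, hz⟩ := hfrac
  by_cases ha : a = 0
  · exact ⟨0, by simp [ha]⟩
  have hp1 : (1:ℝ) < p := by exact_mod_cast (Fact.out : p.Prime).one_lt
  have hp0 : (0:ℚ) < p := by exact_mod_cast (Fact.out : p.Prime).pos
  have hpq : ((p:ℚ)) ≠ 0 := hp0.ne'
  have hval : 0 ≤ padicValRat p a := by
    have hca : ((a:ℚ) : ℚ_[p]) ≠ 0 := by exact_mod_cast Rat.cast_ne_zero.mpr ha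
    rw [Padic.norm_eq_zpow_neg_valuation hca] at h1
    have : ((p:ℝ)) ^ (-Padic.valuation ((a:ℚ) : ℚ_[p])) ≤ (p:ℝ) ^ (0:ℤ) := by simpa using h1
    rw [zpow_le_zpow_iff_right₀ hp1] at this
    rw [Padic.valuation_ratCast] at this
    omega
  have hz' : a = (z:ℚ) / (p:ℚ)^m := by
    field_simp at hz ⊢
    linarith [hz]
  have hzne : z ≠ 0 := by
    rintro rfl
    simp at hz'
    exact ha hz'
  have hvz : padicValRat p a = padicValInt p z - m := by
    rw [hz', padicValRat.div (by exact_mod_cast hzne) (by positivity)]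
    rw [padicValRat.of_int]
    congr 1
    rw [show ((p:ℚ)^m) = ((p^m : ℕ) : ℚ) by push_cast; ring]
    rw [padicValRat.of_nat]
    rw [padicValNat.prime_pow]
  have hdvd : ((p:ℤ))^m ∣ z := by
    rw [padicValInt_dvd_iff]
    right
    omega
  obtain ⟨w, hw⟩ := hdvd
  refine ⟨w, ?_⟩
  rw [hz', hw]
  push_cast
  rw [mul_comm, mul_div_assoc, div_self (by positivity : ((p:ℚ))^m ≠ 0), mul_one]

theorem isPadicFrac_zero {a : ℚ} (hfrac : IsPadicFrac p a) (h1 : ‖((a:ℚ) : ℚ_[p])‖ < 1)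
    (h2 : |a| < (p:ℚ)) : a = 0 := by
  by_contra ha
  have hp0 : (0:ℚ) < p := by exact_mod_cast (Fact.out : p.Prime).pos
  have hfrac' : IsPadicFrac p (a / p) := by
    obtain ⟨m, z, hz⟩ := hfrac
    refine ⟨m + 1, z, ?_⟩
    rw [pow_succ]
    rw [show a / (p:ℚ) * ((p:ℚ)^m * (p:ℚ)) = a * (p:ℚ)^m * ((p:ℚ) / (p:ℚ)) by ring,
      div_self hp0.ne', mul_one, hz]
  have hca : ((a:ℚ) : ℚ_[p]) ≠ 0 := by
    exact_mod_cast Rat.cast_ne_zero.mpr ha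
  have hnorm : ‖(((a / p : ℚ)) : ℚ_[p])‖ ≤ 1 := by
    have hle := norm_le_invp hca h1
    have hpr : (0:ℝ) < p := by exact_mod_cast (Fact.out : p.Prime).pos
    have heq : ‖((a:ℚ):ℚ_[p])‖ / ((p:ℝ))⁻¹ = (p:ℝ) * ‖((a:ℚ):ℚ_[p])‖ := by
      field_simp
    push_cast
    rw [norm_div, Padic.norm_p, heq]
    exact hle
  obtain ⟨z, hz⟩ := isPadicFrac_int hfrac' hnorm
  have : |(z:ℚ)| < 1 := by
    rw [← hz]
    rw [abs_div, abs_of_pos hp0]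
    rw [div_lt_one hp0]
    exact h2
  have hz0 : z = 0 := by
    rw [show ((1:ℚ)) = ((1:ℤ):ℚ) by norm_num, ← Int.cast_abs, Int.cast_lt] at this
    exact Int.abs_lt_one_iff.mp this
  rw [hz0] at hz
  norm_num at hz
  rcases hz with h | h
  · exact ha h
  · exact absurd h (Fact.out : p.Prime).pos.ne'

theorem intFloor_unique {x : ℚ_[p]} {b b' : ℚ} (h : IsIntFloor p x b) (h' : IsIntFloor p x b') :
    b = b' := by
  obtain ⟨hf, habs, hn⟩ := h
  obtain ⟨hf', habs', hn'⟩ := h'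
  have hsub : IsPadicFrac p (b - b') := isPadicFrac_sub hf hf'
  have hnorm : ‖(((b - b' : ℚ)) : ℚ_[p])‖ < 1 := by
    push_cast
    have : ((b:ℚ_[p]) - (b':ℚ_[p])) = (x - (b':ℚ_[p])) - (x - (b:ℚ_[p])) := by ring
    rw [this]
    calc ‖(x - (b':ℚ_[p])) - (x - (b:ℚ_[p]))‖ = ‖(x - (b':ℚ_[p])) + -(x - (b:ℚ_[p]))‖ := by ring_nf
      _ ≤ max ‖x - (b':ℚ_[p])‖ ‖-(x - (b:ℚ_[p]))‖ := Padic.nonarchimedean _ _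
      _ < 1 := by rw [norm_neg]; exact max_lt hn' hn
  have habs2 : |b - b'| < (p:ℚ) := by
    calc |b - b'| ≤ |b| + |b'| := abs_sub _ _
      _ < (p:ℚ)/2 + (p:ℚ)/2 := by linarith
      _ = (p:ℚ) := by ring
  have := isPadicFrac_zero hsub hnorm habs2
  linarith [abs_nonneg (b - b'), this]

theorem fracFloor_unique {x : ℚ_[p]} {b b' : ℚ} (h : IsFracFloor p x b) (h' : IsFracFloor p x b') :
    b = b' := by
  obtain ⟨hf, habs, hn⟩ := h
  obtain ⟨hf', habs', hn'⟩ := h'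
  have hsub : IsPadicFrac p (b - b') := isPadicFrac_sub hf hf'
  have hnorm : ‖(((b - b' : ℚ)) : ℚ_[p])‖ ≤ 1 := by
    push_cast
    have : ((b:ℚ_[p]) - (b':ℚ_[p])) = (x - (b':ℚ_[p])) - (x - (b:ℚ_[p])) := by ring
    rw [this]
    calc ‖(x - (b':ℚ_[p])) - (x - (b:ℚ_[p]))‖ = ‖(x - (b':ℚ_[p])) + -(x - (b:ℚ_[p]))‖ := by ring_nf
      _ ≤ max ‖x - (b':ℚ_[p])‖ ‖-(x - (b:ℚ_[p]))‖ := Padic.nonarchimedean _ _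
      _ ≤ 1 := by rw [norm_neg]; exact max_le hn' hn
  obtain ⟨z, hz⟩ := isPadicFrac_int hsub hnorm
  have : |(z:ℚ)| < 1 := by
    rw [← hz]
    calc |b - b'| ≤ |b| + |b'| := abs_sub _ _
      _ < 1 := by linarith
  have hz0 : z = 0 := by
    rw [show ((1:ℚ)) = ((1:ℤ):ℚ) by norm_num, ← Int.cast_abs, Int.cast_lt] at this
    exact Int.abs_lt_one_iff.mp this
  rw [hz0] at hz
  norm_num at hz
  linarith

open Polynomial IntermediateField in
theorem conj_seq (α₀ : ℚ_[p]) (hirr : ∀ q : ℚ, α₀ ≠ (q : ℚ_[p]))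
    (r s : ℚ) (hquad : α₀ ^ 2 = (r : ℚ_[p]) * α₀ + (s : ℚ_[p]))
    (α : ℕ → ℚ_[p]) (b : ℕ → ℚ) (β : ℕ → ℚ_[p]) (h0 : α 0 = α₀)
    (hrec : ∀ n, α (n+1) = (α n - (b n : ℚ_[p]))⁻¹)
    (hβ0 : β 0 = (r:ℚ_[p]) - α₀) (hβrec : ∀ n, β (n+1) = (β n - (b n : ℚ_[p]))⁻¹) :
    ∀ m n, α m = α n → β m = β n := by
  classical
  set f : ℚ[X] := X^2 - (C r * X + C s) with hf
  have hfm : f.Monic := by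
    apply monic_X_pow_sub
    have h1 : (C r * X + C s).degree ≤ 1 := by
      apply le_trans (degree_add_le _ _)
      apply max_le
      · apply le_trans (degree_mul_le _ _)
        calc (C r).degree + (X : ℚ[X]).degree ≤ 0 + 1 := by
              apply add_le_add degree_C_le degree_X_le
          _ = 1 := by norm_num
      · exact le_trans degree_C_le (by norm_num)
    exact lt_of_le_of_lt h1 (by norm_num)
  have hmap : ∀ q : ℚ, algebraMap ℚ ℚ_[p] q = (q : ℚ_[p]) := fun q => eq_ratCast _ q
  have haev : aeval α₀ f = 0 := by
    simp only [hf, map_sub, map_add, map_mul, aeval_X_pow, aeval_X, aeval_C, map_pow]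
    rw [hmap r, hmap s]
    linear_combination hquad
  have hint : IsIntegral ℚ α₀ := ⟨f, hfm, by rwa [← aeval_def]⟩
  have hdvd : minpoly ℚ α₀ ∣ f := minpoly.dvd ℚ α₀ haev
  have hndeg : f.natDegree = 2 := by
    unfold f
    compute_degree!
  have h2le : 2 ≤ (minpoly ℚ α₀).natDegree := by
    rw [minpoly.two_le_natDegree_iff hint]
    rintro ⟨q, hq⟩
    exact hirr q (by rw [← hq, hmap])
  have hmin : minpoly ℚ α₀ = f := by
    apply Polynomial.eq_of_dvd_of_natDegree_le_of_leadingCoeff hdvd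
    · rw [hndeg]; exact h2le
    · rw [(minpoly.monic hint).leadingCoeff, hfm.leadingCoeff]
  have hy : aeval ((r:ℚ_[p]) - α₀) (minpoly ℚ α₀) = 0 := by
    rw [hmin]
    simp only [hf, map_sub, map_add, map_mul, aeval_X_pow, aeval_X, aeval_C, map_pow]
    rw [hmap r, hmap s]
    linear_combination hquad
  set pb := IntermediateField.adjoin.powerBasis hint with hpb
  have hy' : aeval ((r:ℚ_[p]) - α₀) (minpoly ℚ pb.gen) = 0 := by
    rw [hpb, IntermediateField.adjoin.powerBasis_gen]
    convert hy using 2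
    exact IntermediateField.minpoly_gen (F := ℚ) (α := α₀)
  set σ := pb.lift ((r:ℚ_[p]) - α₀) hy' with hσdef
  have hmem : ∀ n, α n ∈ ℚ⟮α₀⟯ := by
    intro n
    induction n with
    | zero => rw [h0]; exact IntermediateField.mem_adjoin_simple_self ℚ α₀
    | succ n ih =>
        rw [hrec n]
        exact inv_mem (sub_mem ih (SubfieldClass.ratCast_mem _ _))
  have hσ : ∀ n, σ ⟨α n, hmem n⟩ = β n := by
    intro n
    induction n with
    | zero =>
        have hgen : (⟨α 0, hmem 0⟩ : ℚ⟮α₀⟯) = pb.gen := by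
          apply Subtype.ext
          show α 0 = ((pb.gen : ℚ⟮α₀⟯) : ℚ_[p])
          rw [hpb, IntermediateField.adjoin.powerBasis_gen,
            IntermediateField.AdjoinSimple.coe_gen, h0]
        rw [hgen, hσdef]
        exact (PowerBasis.lift_gen pb _ hy').trans hβ0.symm
    | succ n ih =>
        have hA : (⟨α (n+1), hmem (n+1)⟩ : ℚ⟮α₀⟯)
            = ((⟨α n, hmem n⟩ : ℚ⟮α₀⟯) - ((b n : ℚ) : ℚ⟮α₀⟯))⁻¹ := by
          apply Subtype.ext
          show α (n+1) = ((((⟨α n, hmem n⟩ : ℚ⟮α₀⟯) - ((b n : ℚ) : ℚ⟮α₀⟯))⁻¹ : ℚ⟮α₀⟯) : ℚ_[p])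
          rw [hrec n, IntermediateField.coe_inv]
          norm_cast
        rw [hA, map_inv₀, map_sub, ih, map_ratCast, hβrec n]
  intro m n h
  have : (⟨α m, hmem m⟩ : ℚ⟮α₀⟯) = ⟨α n, hmem n⟩ := Subtype.ext h
  rw [← hσ m, ← hσ n, this]

end Stmt7Aux

open Stmt7Aux in
/-- For `α₀` a quadratic irrational (with `α₀² = r·α₀ + s`, conjugate `r - α₀`)
whose Algorithm (3) expansion is periodic, the expansion is purely periodic iff
`‖α₀‖_p ≥ 1` and `‖ᾱ₀‖_p < 1`. -/
theorem stmt_7 (p : ℕ) [Fact p.Prime] (hp : p ≠ 2)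
    (α₀ : ℚ_[p]) (hirr : ∀ q : ℚ, α₀ ≠ (q : ℚ_[p]))
    (r s : ℚ) (hquad : α₀ ^ 2 = (r : ℚ_[p]) * α₀ + (s : ℚ_[p]))
    (α : ℕ → ℚ_[p]) (b : ℕ → ℚ) (h0 : α 0 = α₀) (halg : Alg3 p α b)
    (hper : ∃ h k : ℕ, 1 ≤ k ∧ ∀ n, h ≤ n → b (n + k) = b n) :
    (∃ k : ℕ, 1 ≤ k ∧ ∀ n, b (n + k) = b n) ↔
      (1 ≤ ‖α₀‖ ∧ ‖(r : ℚ_[p]) - α₀‖ < 1) := by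
  obtain ⟨hs, ht, hrec⟩ := halg
  have hppos : (0:ℝ) < p := lt_trans one_pos one_lt_p
  -- irrationality of every α n
  have hirrn : ∀ n (q : ℚ), α n ≠ (q : ℚ_[p]) := by
    intro n
    induction n with
    | zero => rw [h0]; exact hirr
    | succ n ih =>
        intro q hq
        have hnz : α n - ((b n : ℚ) : ℚ_[p]) ≠ 0 := sub_ne_zero.mpr (ih (b n))
        rw [hrec n] at hq
        have hq0 : (q : ℚ_[p]) ≠ 0 := by rw [← hq]; exact inv_ne_zero hnz
        have hxq : α n - ((b n : ℚ) : ℚ_[p]) = ((q : ℚ_[p]))⁻¹ := by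
          rw [← hq, inv_inv]
        apply ih (b n + q⁻¹)
        push_cast
        rw [← hxq]
        ring
  have hsubne : ∀ n, α n - ((b n : ℚ) : ℚ_[p]) ≠ 0 :=
    fun n => sub_ne_zero.mpr (hirrn n (b n))
  have hfl : ∀ n, ‖α n - ((b n : ℚ) : ℚ_[p])‖ ≤ 1 := by
    intro n
    rcases Nat.even_or_odd n with he | ho
    · exact le_of_lt (hs n he).2.2
    · exact (ht n ho).2.2
  have hα1 : ∀ n, 1 ≤ n → 1 ≤ ‖α n‖ := by
    intro n hn
    obtain ⟨m, rfl⟩ : ∃ m, n = m + 1 := ⟨n - 1, by omega⟩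
    rw [hrec m, norm_inv]
    rw [one_le_inv₀ (norm_pos_iff.mpr (hsubne m))]
    exact hfl m
  have hαodd : ∀ n, Odd n → 1 < ‖α n‖ := by
    intro n hn
    obtain ⟨m, rfl⟩ : ∃ m, n = m + 1 := ⟨n - 1, by have := Nat.odd_iff.mp hn; omega⟩
    have hm : Even m := by
      have := Nat.odd_iff.mp hn
      rw [Nat.even_iff]
      omega
    rw [hrec m, norm_inv]
    rw [one_lt_inv_iff₀]
    exact ⟨norm_pos_iff.mpr (hsubne m), (hs m hm).2.2⟩
  have hαoddp : ∀ n, Odd n → (p:ℝ) ≤ ‖α n‖ := fun n hn => norm_ge_p (hαodd n hn)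
  have hbnorm : ∀ n, 1 ≤ ‖α n‖ → ‖((b n : ℚ) : ℚ_[p])‖ = ‖α n‖ := by
    intro n hn
    apply norm_eq_of_sub_lt
    rcases Nat.even_or_odd n with he | ho
    · exact lt_of_lt_of_le (hs n he).2.2 hn
    · exact lt_of_le_of_lt (hfl n) (hαodd n ho)
  -- the conjugate sequence
  obtain ⟨β, hβ0, hβrec⟩ : ∃ β : ℕ → ℚ_[p], β 0 = (r:ℚ_[p]) - α₀ ∧
      ∀ n, β (n+1) = (β n - ((b n : ℚ) : ℚ_[p]))⁻¹ :=
    ⟨fun n => Nat.rec ((r:ℚ_[p]) - α₀) (fun m βm => (βm - ((b m : ℚ) : ℚ_[p]))⁻¹) n,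
      rfl, fun n => rfl⟩
  have hβirr : ∀ n (q : ℚ), β n ≠ (q : ℚ_[p]) := by
    intro n
    induction n with
    | zero =>
        intro q hq
        rw [hβ0] at hq
        apply hirr (r - q)
        push_cast
        linear_combination -hq
    | succ n ih =>
        intro q hq
        have hnz : β n - ((b n : ℚ) : ℚ_[p]) ≠ 0 := sub_ne_zero.mpr (ih (b n))
        rw [hβrec n] at hq
        have hxq : β n - ((b n : ℚ) : ℚ_[p]) = ((q : ℚ_[p]))⁻¹ := by
          rw [← hq, inv_inv]
        apply ih (b n + q⁻¹)
        push_cast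
        rw [← hxq]
        ring
  have hβne : ∀ n, β n ≠ 0 := by
    intro n h
    exact hβirr n 0 (by rw [h]; norm_num)
  have hβsubne : ∀ n, β n - ((b n : ℚ) : ℚ_[p]) ≠ 0 :=
    fun n => sub_ne_zero.mpr (hβirr n (b n))
  have hβinv : ∀ n, (β (n+1))⁻¹ = β n - ((b n : ℚ) : ℚ_[p]) := by
    intro n; rw [hβrec n, inv_inv]
  have hconj : ∀ m n, α m = α n → β m = β n :=
    conj_seq α₀ hirr r s hquad α b β h0 hrec hβ0 hβrec
  -- generic difference identity
  have hid : ∀ (u v : ℕ → ℚ_[p]) (c : ℚ) (n : ℕ),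
      u (n+1) = (u n - ((c : ℚ) : ℚ_[p]))⁻¹ → v (n+1) = (v n - ((c : ℚ) : ℚ_[p]))⁻¹ →
      u n - ((c : ℚ) : ℚ_[p]) ≠ 0 → v n - ((c : ℚ) : ℚ_[p]) ≠ 0 →
      u (n+1) - v (n+1) = -((u n - v n) * (u (n+1) * v (n+1))) := by
    intro u v c n hu hv hu0 hv0
    rw [hu, hv]
    field_simp
    ring
  -- growth lemma
  have hgrow : ∀ (d : ℕ → ℚ_[p]) (B : ℝ), (∀ n, (p:ℝ) * ‖d n‖ ≤ ‖d (n+2)‖) →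
      (∀ n, ‖d n‖ ≤ B) → d 0 = 0 := by
    intro d B hpair hB
    by_contra hd0
    have hpos : 0 < ‖d 0‖ := norm_pos_iff.mpr hd0
    have hiter : ∀ m, (p:ℝ)^m * ‖d 0‖ ≤ ‖d (2*m)‖ := by
      intro m
      induction m with
      | zero => simp
      | succ m ih =>
          have h1 := hpair (2*m)
          have h2 : (p:ℝ) * ((p:ℝ)^m * ‖d 0‖) ≤ (p:ℝ) * ‖d (2*m)‖ :=
            mul_le_mul_of_nonneg_left ih hppos.le
          calc (p:ℝ)^(m+1) * ‖d 0‖ = (p:ℝ) * ((p:ℝ)^m * ‖d 0‖) := by ring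
            _ ≤ (p:ℝ) * ‖d (2*m)‖ := h2
            _ ≤ ‖d (2*m+2)‖ := h1
            _ = ‖d (2*(m+1))‖ := by rw [show 2*(m+1) = 2*m+2 by ring]
    obtain ⟨m, hm⟩ := pow_unbounded_of_one_lt (B / ‖d 0‖) (one_lt_p (p := p))
    rw [div_lt_iff₀ hpos] at hm
    have := hiter m
    have := hB (2*m)
    linarith
  -- the invariant
  have hInv : 1 ≤ ‖α 0‖ → ∀ n₀, ((Even n₀ → ‖β n₀‖ < 1) ∧ (Odd n₀ → ‖β n₀‖ ≤ 1)) →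
      ∀ n, n₀ ≤ n → (Even n → ‖β n‖ < 1) ∧ (Odd n → ‖β n‖ ≤ 1) := by
    intro hα0 n₀ hbase
    intro n hn
    induction n, hn using Nat.le_induction with
    | base => exact hbase
    | succ n hn ih =>
        have hαn : 1 ≤ ‖α n‖ := by
          rcases Nat.eq_zero_or_pos n with h | h
          · rw [h]; exact hα0
          · exact hα1 n h
        have hbn : 1 ≤ ‖((b n : ℚ) : ℚ_[p])‖ := by rw [hbnorm n hαn]; exact hαn
        rcases Nat.even_or_odd n with he | ho
        · -- n even : ‖β n‖ < 1, so ‖β (n+1)‖ ≤ 1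
          have hβn : ‖β n‖ < 1 := ih.1 he
          have hsub : ‖β n - ((b n : ℚ) : ℚ_[p])‖ = ‖((b n : ℚ) : ℚ_[p])‖ :=
            norm_sub_eq_of_lt (lt_of_lt_of_le hβn hbn)
          have hle : ‖β (n+1)‖ ≤ 1 := by
            rw [hβrec n, norm_inv, hsub]
            rw [inv_le_one_iff₀]
            right; exact hbn
          constructor
          · intro he1
            exact absurd ((Nat.even_add_one).mp he1) (by simpa using he)
          · intro _; exact hle
        · -- n odd : ‖β n‖ ≤ 1 < ‖b n‖, so ‖β (n+1)‖ < 1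
          have hβn : ‖β n‖ ≤ 1 := ih.2 ho
          have hbgt : 1 < ‖((b n : ℚ) : ℚ_[p])‖ := by
            rw [hbnorm n hαn]; exact hαodd n ho
          have hsub : ‖β n - ((b n : ℚ) : ℚ_[p])‖ = ‖((b n : ℚ) : ℚ_[p])‖ :=
            norm_sub_eq_of_lt (lt_of_le_of_lt hβn hbgt)
          have hlt : ‖β (n+1)‖ < 1 := by
            rw [hβrec n, norm_inv, hsub]
            rw [inv_lt_one_iff₀]
            right; exact hbgt
          exact ⟨fun _ => hlt, fun _ => le_of_lt hlt⟩
  -- from eventual periodicity of b, the α sequence is eventually periodic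
  have hαper : ∀ (h K : ℕ), 1 ≤ K → (∀ n, h ≤ n → b (n + K) = b n) →
      ∀ n, h ≤ n → α (n + K) = α n := by
    intro h K hK1 hbper
    have hBex : ∃ B : ℝ, ∀ n, ‖((b n : ℚ) : ℚ_[p])‖ ≤ B := by
      have hne : (Finset.range (h + K)).Nonempty := ⟨0, by simp; omega⟩
      refine ⟨(Finset.range (h + K)).sup' hne (fun i => ‖((b i : ℚ) : ℚ_[p])‖), ?_⟩
      intro n
      induction n using Nat.strong_induction_on with
      | _ n ih =>
        by_cases hn : n < h + K
        · exact Finset.le_sup' (fun i => ‖((b i : ℚ) : ℚ_[p])‖) (Finset.mem_range.mpr hn)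
        · push_neg at hn
          have heq : b n = b (n - K) := by
            rw [← hbper (n - K) (by omega)]
            congr 1
            omega
          rw [heq]
          exact ih (n - K) (by omega)
    obtain ⟨B, hB⟩ := hBex
    have hαB : ∀ n, ‖α n‖ ≤ max 1 B := by
      intro n
      calc ‖α n‖ = ‖(α n - ((b n:ℚ):ℚ_[p])) + ((b n:ℚ):ℚ_[p])‖ := by rw [sub_add_cancel]
        _ ≤ max ‖α n - ((b n:ℚ):ℚ_[p])‖ ‖((b n:ℚ):ℚ_[p])‖ := Padic.nonarchimedean _ _
        _ ≤ max 1 B := max_le_max (hfl n) (hB n)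
    set d : ℕ → ℚ_[p] := fun n => α (n + h + K) - α (n + h) with hd
    have hsubK : ∀ n, α (n + h + K) - ((b (n + h) : ℚ) : ℚ_[p]) ≠ 0 := by
      intro n
      rw [← hbper (n + h) (by omega)]
      exact hsubne (n + h + K)
    have hstep : ∀ n, ‖d (n+1)‖ = ‖d n‖ * (‖α (n + 1 + h + K)‖ * ‖α (n + 1 + h)‖) := by
      intro n
      have hu : α (n + 1 + h + K) = (α (n + h + K) - ((b (n + h) : ℚ) : ℚ_[p]))⁻¹ := by
        have h2 := hrec (n + h + K)
        rw [hbper (n + h) (by omega)] at h2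
        rw [show n + 1 + h + K = n + h + K + 1 by ring]
        exact h2
      have hv : α (n + 1 + h) = (α (n + h) - ((b (n + h) : ℚ) : ℚ_[p]))⁻¹ := by
        rw [show n + 1 + h = n + h + 1 by ring]
        exact hrec (n + h)
      have hidn := hid (fun m => α (m + h + K)) (fun m => α (m + h)) (b (n + h)) n
        hu hv (hsubK n) (hsubne (n + h))
      have : d (n+1) = -((d n) * (α (n + 1 + h + K) * α (n + 1 + h))) := by
        rw [hd]
        simp only
        exact hidn
      rw [this, norm_neg, norm_mul, norm_mul]
    have hmono : ∀ n, ‖d n‖ ≤ ‖d (n+1)‖ := by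
      intro n
      have h1 : 1 ≤ ‖α (n + 1 + h + K)‖ := hα1 _ (by omega)
      have h2 : 1 ≤ ‖α (n + 1 + h)‖ := hα1 _ (by omega)
      have hab : (1:ℝ) ≤ ‖α (n + 1 + h + K)‖ * ‖α (n + 1 + h)‖ := by nlinarith
      calc ‖d n‖ = ‖d n‖ * 1 := by ring
        _ ≤ ‖d n‖ * (‖α (n + 1 + h + K)‖ * ‖α (n + 1 + h)‖) :=
            mul_le_mul_of_nonneg_left hab (norm_nonneg _)
        _ = ‖d (n+1)‖ := (hstep n).symm
    have hpair : ∀ n, (p:ℝ) * ‖d n‖ ≤ ‖d (n+2)‖ := by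
      intro n
      have hkey : ∀ m, Odd (m + 1 + h) → (p:ℝ) * ‖d m‖ ≤ ‖d (m+1)‖ := by
        intro m hm
        have h1 : 1 ≤ ‖α (m + 1 + h + K)‖ := hα1 _ (by omega)
        have h2 : (p:ℝ) ≤ ‖α (m + 1 + h)‖ := hαoddp _ hm
        have hab : (p:ℝ) ≤ ‖α (m + 1 + h + K)‖ * ‖α (m + 1 + h)‖ := by
          nlinarith [norm_nonneg (α (m + 1 + h))]
        calc (p:ℝ) * ‖d m‖ = ‖d m‖ * (p:ℝ) := by ring
          _ ≤ ‖d m‖ * (‖α (m + 1 + h + K)‖ * ‖α (m + 1 + h)‖) :=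
              mul_le_mul_of_nonneg_left hab (norm_nonneg _)
          _ = ‖d (m+1)‖ := (hstep m).symm
      rcases Nat.even_or_odd (n + 1 + h) with he | ho
      · have ho2 : Odd (n + 2 + h) := by
          rw [Nat.odd_iff]
          rw [Nat.even_iff] at he
          omega
        have hk := hkey (n+1) (by rw [show n + 1 + 1 + h = n + 2 + h by ring]; exact ho2)
        have hm := hmono n
        calc (p:ℝ) * ‖d n‖ ≤ (p:ℝ) * ‖d (n+1)‖ := by nlinarith
          _ ≤ ‖d (n+1+1)‖ := hk
          _ = ‖d (n+2)‖ := by rw [show n+1+1 = n+2 by ring]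
      · calc (p:ℝ) * ‖d n‖ ≤ ‖d (n+1)‖ := hkey n ho
          _ ≤ ‖d (n+2)‖ := by
              have := hmono (n+1)
              rw [show n+1+1 = n+2 by ring] at this
              exact this
    have hdB : ∀ n, ‖d n‖ ≤ max 1 B := by
      intro n
      rw [hd]
      simp only
      calc ‖α (n + h + K) - α (n + h)‖ ≤ max ‖α (n + h + K)‖ ‖α (n + h)‖ :=
            norm_sub_le_max _ _
        _ ≤ max 1 B := max_le (hαB _) (hαB _)
    have hd0 : d 0 = 0 := hgrow d (max 1 B) hpair hdB
    have hbase : α (h + K) = α h := by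
      have : α (0 + h + K) - α (0 + h) = 0 := hd0
      rw [zero_add] at this
      exact sub_eq_zero.mp this
    intro n hn
    induction n, hn using Nat.le_induction with
    | base => exact hbase
    | succ n hn ih =>
        rw [show n + 1 + K = (n + K) + 1 by ring, hrec (n + K), hbper n hn, ih, ← hrec n]
  constructor
  · -- purely periodic ⇒ norm conditions
    rintro ⟨k, hk1, hkper⟩
    have hKper : ∀ n, b (n + 2 * k) = b n := by
      intro n
      rw [show n + 2 * k = n + k + k by ring, hkper, hkper]
    have hK1 : 1 ≤ 2 * k := by omega
    have haper : ∀ n, α (n + 2 * k) = α n := fun n =>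
      hαper 0 (2 * k) hK1 (fun m _ => hKper m) n (by omega)
    have hα0 : 1 ≤ ‖α 0‖ := by
      rw [← haper 0]
      exact hα1 _ (by omega)
    have hβper : ∀ n, β (n + 2 * k) = β n := fun n => hconj _ _ (haper n)
    -- a small conjugate exists
    have hsmall : ∃ n₀, 1 ≤ n₀ ∧ ‖β n₀‖ < 1 := by
      by_contra hc
      push_neg at hc
      have hβge : ∀ n, 1 ≤ n → 1 ≤ ‖β n‖ := hc
      -- bound on the b's
      obtain ⟨B, hB⟩ : ∃ B : ℝ, ∀ n, ‖((b n : ℚ) : ℚ_[p])‖ ≤ B := by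
        have hne : (Finset.range (2 * k)).Nonempty := ⟨0, by simp; omega⟩
        refine ⟨(Finset.range (2 * k)).sup' hne (fun i => ‖((b i : ℚ) : ℚ_[p])‖), ?_⟩
        intro n
        induction n using Nat.strong_induction_on with
        | _ n ih =>
          by_cases hn : n < 2 * k
          · exact Finset.le_sup' (fun i => ‖((b i : ℚ) : ℚ_[p])‖) (Finset.mem_range.mpr hn)
          · push_neg at hn
            have heq : b n = b (n - 2 * k) := by
              rw [← hKper (n - 2 * k)]
              congr 1
              omega
            rw [heq]
            exact ih (n - 2 * k) (by omega)
      have hαB : ∀ n, ‖α n‖ ≤ max 1 B := by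
        intro n
        calc ‖α n‖ = ‖(α n - ((b n:ℚ):ℚ_[p])) + ((b n:ℚ):ℚ_[p])‖ := by rw [sub_add_cancel]
          _ ≤ max ‖α n - ((b n:ℚ):ℚ_[p])‖ ‖((b n:ℚ):ℚ_[p])‖ := Padic.nonarchimedean _ _
          _ ≤ max 1 B := max_le_max (hfl n) (hB n)
      have hβB : ∀ n, ‖β n‖ ≤ max 1 B := by
        intro n
        have hsub1 : ‖β n - ((b n:ℚ):ℚ_[p])‖ ≤ 1 := by
          rw [← hβinv n, norm_inv]
          rw [inv_le_one_iff₀]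
          right
          exact hβge (n+1) (by omega)
        calc ‖β n‖ = ‖(β n - ((b n:ℚ):ℚ_[p])) + ((b n:ℚ):ℚ_[p])‖ := by rw [sub_add_cancel]
          _ ≤ max ‖β n - ((b n:ℚ):ℚ_[p])‖ ‖((b n:ℚ):ℚ_[p])‖ := Padic.nonarchimedean _ _
          _ ≤ max 1 B := max_le_max hsub1 (hB n)
      set e : ℕ → ℚ_[p] := fun n => α n - β n with he
      have hestep : ∀ n, ‖e (n+1)‖ = ‖e n‖ * (‖α (n+1)‖ * ‖β (n+1)‖) := by
        intro n
        have hidn := hid α β (b n) n (hrec n) (hβrec n) (hsubne n) (hβsubne n)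
        have : e (n+1) = -((e n) * (α (n+1) * β (n+1))) := hidn
        rw [this, norm_neg, norm_mul, norm_mul]
      have hemono : ∀ n, ‖e n‖ ≤ ‖e (n+1)‖ := by
        intro n
        have h1 : 1 ≤ ‖α (n+1)‖ := hα1 _ (by omega)
        have h2 : 1 ≤ ‖β (n+1)‖ := hβge _ (by omega)
        have hab : (1:ℝ) ≤ ‖α (n+1)‖ * ‖β (n+1)‖ := by nlinarith
        calc ‖e n‖ = ‖e n‖ * 1 := by ring
          _ ≤ ‖e n‖ * (‖α (n+1)‖ * ‖β (n+1)‖) := mul_le_mul_of_nonneg_left hab (norm_nonneg _)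
          _ = ‖e (n+1)‖ := (hestep n).symm
      have hekey : ∀ m, Odd (m + 1) → (p:ℝ) * ‖e m‖ ≤ ‖e (m+1)‖ := by
        intro m hm
        have h1 : (p:ℝ) ≤ ‖α (m+1)‖ := hαoddp _ hm
        have h2 : 1 ≤ ‖β (m+1)‖ := hβge _ (by omega)
        have hab : (p:ℝ) ≤ ‖α (m+1)‖ * ‖β (m+1)‖ := by
          nlinarith [norm_nonneg (β (m+1)), hppos.le]
        calc (p:ℝ) * ‖e m‖ = ‖e m‖ * (p:ℝ) := by ring
          _ ≤ ‖e m‖ * (‖α (m+1)‖ * ‖β (m+1)‖) := mul_le_mul_of_nonneg_left hab (norm_nonneg _)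
          _ = ‖e (m+1)‖ := (hestep m).symm
      have hepair : ∀ n, (p:ℝ) * ‖e n‖ ≤ ‖e (n+2)‖ := by
        intro n
        rcases Nat.even_or_odd (n + 1) with hev | ho
        · have ho2 : Odd (n + 2) := by
            rw [Nat.odd_iff]
            rw [Nat.even_iff] at hev
            omega
          have hk2 := hekey (n+1) (by rw [show n + 1 + 1 = n + 2 by ring]; exact ho2)
          have hm := hemono n
          calc (p:ℝ) * ‖e n‖ ≤ (p:ℝ) * ‖e (n+1)‖ := by nlinarith
            _ ≤ ‖e (n+1+1)‖ := hk2
            _ = ‖e (n+2)‖ := by rw [show n+1+1 = n+2 by ring]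
        · calc (p:ℝ) * ‖e n‖ ≤ ‖e (n+1)‖ := hekey n ho
            _ ≤ ‖e (n+2)‖ := by
                have := hemono (n+1)
                rw [show n+1+1 = n+2 by ring] at this
                exact this
      have heB : ∀ n, ‖e n‖ ≤ max 1 B := by
        intro n
        calc ‖e n‖ ≤ max ‖α n‖ ‖β n‖ := norm_sub_le_max _ _
          _ ≤ max 1 B := max_le (hαB n) (hβB n)
      have he0 : e 0 = 0 := hgrow e (max 1 B) hepair heB
      have heq : α 0 = β 0 := sub_eq_zero.mp he0
      rw [h0, hβ0] at heq
      apply hirr (r / 2)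
      push_cast
      linear_combination heq / 2
    obtain ⟨n₀, hn₀1, hn₀lt⟩ := hsmall
    have hQ := hInv hα0 n₀ ⟨fun _ => hn₀lt, fun _ => le_of_lt hn₀lt⟩
    have hβiter : ∀ j, β (2 * k * j) = β 0 := by
      intro j
      induction j with
      | zero => simp
      | succ j ih =>
          rw [show 2 * k * (j+1) = 2 * k * j + 2 * k by ring, hβper, ih]
    have hKn₀ : n₀ ≤ 2 * k * n₀ := by
      calc n₀ = 1 * n₀ := by ring
        _ ≤ 2 * k * n₀ := Nat.mul_le_mul_right n₀ (by omega)
    have heven : Even (2 * k * n₀) := ⟨k * n₀, by ring⟩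
    have hfin : ‖β (2 * k * n₀)‖ < 1 := (hQ (2 * k * n₀) hKn₀).1 heven
    rw [hβiter n₀] at hfin
    constructor
    · rw [← h0]; exact hα0
    · rw [← hβ0]; exact hfin
  · -- norm conditions ⇒ purely periodic
    rintro ⟨hα₀n, hβ₀n⟩
    have hα0 : 1 ≤ ‖α 0‖ := by rw [h0]; exact hα₀n
    have hβ0lt : ‖β 0‖ < 1 := by rw [hβ0]; exact hβ₀n
    obtain ⟨h, k, hk1, hper'⟩ := hper
    have hKper : ∀ n, h ≤ n → b (n + 2 * k) = b n := by
      intro n hn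
      rw [show n + 2 * k = n + k + k by ring, hper' (n + k) (by omega), hper' n hn]
    have hKeven : Even (2 * k) := ⟨k, by ring⟩
    have haper : ∀ n, h ≤ n → α (n + 2 * k) = α n := hαper h (2 * k) (by omega) hKper
    have hβperh : ∀ n, h ≤ n → β (n + 2 * k) = β n := fun n hn => hconj _ _ (haper n hn)
    have hQ : ∀ n, (Even n → ‖β n‖ < 1) ∧ (Odd n → ‖β n‖ ≤ 1) := fun n =>
      hInv hα0 0 ⟨fun _ => hβ0lt, fun ho => absurd ho (by decide)⟩ n (Nat.zero_le n)
    have hdown : ∀ j n, h - j ≤ n → (b (n + 2 * k) = b n ∧ β (n + 2 * k) = β n) := by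
      intro j
      induction j with
      | zero => intro n hn; exact ⟨hKper n (by omega), hβperh n (by omega)⟩
      | succ j ih =>
          intro n hn
          by_cases hcase : h - j ≤ n
          · exact ih n hcase
          · have hnext := ih (n + 1) (by omega)
            have e1 : (β (n+1))⁻¹ = β n - ((b n : ℚ) : ℚ_[p]) := hβinv n
            have e2 : (β (n+1))⁻¹ = β (n + 2 * k) - ((b (n + 2 * k) : ℚ) : ℚ_[p]) := by
              have h3 := hβinv (n + 2 * k)
              rw [show n + 2 * k + 1 = n + 1 + 2 * k by ring, hnext.2] at h3
              exact h3
            have key1 : (β (n+1))⁻¹ - ((-(b n) : ℚ) : ℚ_[p]) = β n := by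
              push_cast
              rw [sub_neg_eq_add, e1, sub_add_cancel]
            have key2 : (β (n+1))⁻¹ - ((-(b (n + 2 * k)) : ℚ) : ℚ_[p]) = β (n + 2 * k) := by
              push_cast
              rw [sub_neg_eq_add, e2, sub_add_cancel]
            have hfromb : b (n + 2 * k) = b n → β (n + 2 * k) = β n := by
              intro hb
              rw [← key2, hb, key1]
            rcases Nat.even_or_odd n with he | ho
            · have heK : Even (n + 2 * k) := he.add hKeven
              have f1 : IsIntFloor p ((β (n+1))⁻¹) (-(b n)) := by
                refine ⟨isPadicFrac_neg (hs n he).1, by rw [abs_neg]; exact (hs n he).2.1, ?_⟩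
                rw [key1]
                exact (hQ n).1 he
              have f2 : IsIntFloor p ((β (n+1))⁻¹) (-(b (n + 2 * k))) := by
                refine ⟨isPadicFrac_neg (hs _ heK).1, by rw [abs_neg]; exact (hs _ heK).2.1, ?_⟩
                rw [key2]
                exact (hQ (n + 2 * k)).1 heK
              have hbeq : b (n + 2 * k) = b n := neg_inj.mp (intFloor_unique f2 f1)
              exact ⟨hbeq, hfromb hbeq⟩
            · have hoK : Odd (n + 2 * k) := ho.add_even hKeven
              have f1 : IsFracFloor p ((β (n+1))⁻¹) (-(b n)) := by
                refine ⟨isPadicFrac_neg (ht n ho).1, by rw [abs_neg]; exact (ht n ho).2.1, ?_⟩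
                rw [key1]
                exact (hQ n).2 ho
              have f2 : IsFracFloor p ((β (n+1))⁻¹) (-(b (n + 2 * k))) := by
                refine ⟨isPadicFrac_neg (ht _ hoK).1, by rw [abs_neg]; exact (ht _ hoK).2.1, ?_⟩
                rw [key2]
                exact (hQ (n + 2 * k)).2 hoK
              have hbeq : b (n + 2 * k) = b n := neg_inj.mp (fracFloor_unique f2 f1)
              exact ⟨hbeq, hfromb hbeq⟩
    exact ⟨2 * k, by omega, fun n => (hdown h n (by omega)).1⟩
end

section
/- Let p be an odd prime and let α₀ ∈ ℚ_p be a quadratic irrational with conjugate ᾱ₀. Let (α_n), (b_n) be the sequences produced by Algorithm (4) applied to α₀, and assume the expansion is periodic. Then the expansion is purely periodic if and only if ‖α₀‖_p > 1 and ‖ᾱ₀‖_p ≤ 1. -/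
/-- Algorithm (4): `b n = t (α n)` for even `n`, `b n = s (α n)` for odd `n`,
and `α (n + 1) = (α n - b n)⁻¹`. -/
def Alg4 (p : ℕ) [Fact p.Prime] (α : ℕ → ℚ_[p]) (b : ℕ → ℚ) : Prop :=
  (∀ n, Even n → IsFracFloor p (α n) (b n)) ∧
  (∀ n, Odd n → IsIntFloor p (α n) (b n)) ∧
  ∀ n, α (n + 1) = (α n - (b n : ℚ_[p]))⁻¹

variable {p : ℕ} [Fact p.Prime]

lemma mySubMax (x y : ℚ_[p]) : ‖x - y‖ ≤ max ‖x‖ ‖y‖ := by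
  calc ‖x - y‖ = ‖x + (-y)‖ := by rw [sub_eq_add_neg]
    _ ≤ max ‖x‖ ‖-y‖ := Padic.nonarchimedean x (-y)
    _ = max ‖x‖ ‖y‖ := by rw [norm_neg]

lemma myNormLeInv {x : ℚ_[p]} (h : ‖x‖ < 1) : ‖x‖ ≤ (p:ℝ)⁻¹ := by
  have := (Padic.norm_le_pow_iff_norm_lt_pow_add_one x (-1)).2
  simpa using this (by simpa using h)

lemma myPLeNorm {x : ℚ_[p]} (h : 1 < ‖x‖) : (p:ℝ) ≤ ‖x‖ := by
  by_contra hc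
  have h2 : ‖x‖ < (p:ℝ)^((0:ℤ)+1) := by push_neg at hc; simpa using hc
  have := (Padic.norm_le_pow_iff_norm_lt_pow_add_one x 0).2 h2
  simp at this; linarith

lemma IsPadicFrac.sub {a b : ℚ} (ha : IsPadicFrac p a) (hb : IsPadicFrac p b) :
    IsPadicFrac p (a - b) := by
  obtain ⟨m, z, hz⟩ := ha
  obtain ⟨m', z', hz'⟩ := hb
  refine ⟨m + m', z * p ^ m' - z' * p ^ m, ?_⟩
  push_cast
  rw [pow_add]
  calc (a - b) * ((p:ℚ) ^ m * (p:ℚ) ^ m')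
      = (a * p ^ m) * p ^ m' - (b * p ^ m') * p ^ m := by ring
    _ = (z:ℚ) * p ^ m' - (z':ℚ) * p ^ m := by rw [hz, hz']

lemma padicFrac_int {a : ℚ} (ha : IsPadicFrac p a) (hn : ‖(a : ℚ_[p])‖ ≤ 1) :
    ∃ z : ℤ, a = z := by
  obtain ⟨m, z, hz⟩ := ha
  induction m generalizing a z with
  | zero => exact ⟨z, by simpa using hz⟩
  | succ m ih =>
    have hp0 : (p:ℚ) ≠ 0 := by exact_mod_cast (Fact.out : p.Prime).ne_zero
    have hdvd : (p:ℤ) ∣ z := by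
      rw [← Padic.norm_intCast_lt_one_iff]
      have hz' : ((z:ℚ) : ℚ_[p]) = (a : ℚ_[p]) * ((p:ℚ_[p])) ^ (m+1) := by
        rw [← hz]; push_cast; ring
      have hnp : ‖((z:ℚ):ℚ_[p])‖ = ‖(a:ℚ_[p])‖ * ((p:ℝ)⁻¹)^(m+1) := by
        rw [hz', norm_mul, norm_pow, Padic.norm_p]
      have hple : ((p:ℝ))⁻¹ < 1 := by
        rw [inv_lt_one_iff₀]; right; exact_mod_cast (Fact.out : p.Prime).one_lt
      have h1 : ‖((z:ℚ):ℚ_[p])‖ ≤ ((p:ℝ)⁻¹)^(m+1) := by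
        rw [hnp]
        calc ‖(a:ℚ_[p])‖ * ((p:ℝ)⁻¹)^(m+1) ≤ 1 * ((p:ℝ)⁻¹)^(m+1) := by
              apply mul_le_mul_of_nonneg_right hn (by positivity)
          _ = ((p:ℝ)⁻¹)^(m+1) := one_mul _
      calc ‖((z:ℤ):ℚ_[p])‖ = ‖((z:ℚ):ℚ_[p])‖ := by norm_cast
        _ ≤ ((p:ℝ)⁻¹)^(m+1) := h1
        _ < 1 := pow_lt_one₀ (by positivity) hple (by omega)
    obtain ⟨w, hw⟩ := hdvd
    have hz2 : a * (p:ℚ) ^ m = (w:ℚ) := by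
      have h3 : a * (p:ℚ)^(m+1) = ((p:ℚ) * w) := by rw [hz, hw]; push_cast; ring
      rw [pow_succ] at h3
      have h4 : a * (p:ℚ)^m * p = (w:ℚ) * p := by linarith
      exact mul_right_cancel₀ hp0 h4
    exact ih hn w hz2

lemma padicFrac_pint {a : ℚ} (ha : IsPadicFrac p a) (hn : ‖(a : ℚ_[p])‖ < 1) :
    ∃ z : ℤ, a = p * z := by
  have hp0 : (p:ℚ) ≠ 0 := by exact_mod_cast (Fact.out : p.Prime).ne_zero
  have hfrac : IsPadicFrac p (a / p) := by
    obtain ⟨m, z, hz⟩ := ha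
    exact ⟨m + 1, z, by rw [← hz]; field_simp; ring⟩
  have hnorm : ‖((a / p : ℚ) : ℚ_[p])‖ ≤ 1 := by
    push_cast
    rw [div_eq_mul_inv, norm_mul, norm_inv, Padic.norm_p, inv_inv]
    have hppos : (0:ℝ) < p := by exact_mod_cast (Fact.out : p.Prime).pos
    calc ‖(a:ℚ_[p])‖ * p ≤ (p:ℝ)⁻¹ * p := by
          apply mul_le_mul_of_nonneg_right (myNormLeInv hn) (by positivity)
      _ = 1 := by field_simp
  obtain ⟨z, hz⟩ := padicFrac_int hfrac hnorm
  refine ⟨z, ?_⟩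
  field_simp at hz
  linarith

lemma fracFloor_unique {x : ℚ_[p]} {b b' : ℚ} (h : IsFracFloor p x b)
    (h' : IsFracFloor p x b') : b = b' := by
  obtain ⟨hf, habs, hn⟩ := h
  obtain ⟨hf', habs', hn'⟩ := h'
  have hd : IsPadicFrac p (b - b') := hf.sub hf'
  have hnd : ‖((b - b' : ℚ) : ℚ_[p])‖ ≤ 1 := by
    push_cast
    have h2 : (b:ℚ_[p]) - b' = (x - b') - (x - b) := by ring
    rw [h2]
    exact le_trans (mySubMax _ _) (max_le hn' hn)
  obtain ⟨z, hz⟩ := padicFrac_int hd hnd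
  have hlt : |(z:ℚ)| < 1 := by
    rw [← hz]
    calc |b - b'| ≤ |b| + |b'| := abs_sub _ _
      _ < 1 := by linarith
  have hz0 : z = 0 := by
    rcases abs_lt.1 hlt with ⟨h1, h2⟩
    have h1' : (-1:ℤ) < z := by exact_mod_cast h1
    have h2' : z < 1 := by exact_mod_cast h2
    omega
  have : b - b' = 0 := by rw [hz, hz0]; norm_num
  linarith

lemma intFloor_unique {x : ℚ_[p]} {b b' : ℚ} (h : IsIntFloor p x b)
    (h' : IsIntFloor p x b') : b = b' := by
  obtain ⟨hf, habs, hn⟩ := h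
  obtain ⟨hf', habs', hn'⟩ := h'
  have hd : IsPadicFrac p (b - b') := hf.sub hf'
  have hnd : ‖((b - b' : ℚ) : ℚ_[p])‖ < 1 := by
    push_cast
    have h2 : (b:ℚ_[p]) - b' = (x - b') - (x - b) := by ring
    rw [h2]
    exact lt_of_le_of_lt (mySubMax _ _) (max_lt hn' hn)
  obtain ⟨z, hz⟩ := padicFrac_pint hd hnd
  have hlt : |(p:ℚ) * z| < p := by
    rw [← hz]
    calc |b - b'| ≤ |b| + |b'| := abs_sub _ _
      _ < p := by linarith
  have hppos : (0:ℚ) < p := by exact_mod_cast (Fact.out : p.Prime).pos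
  have hzlt : |(z:ℚ)| < 1 := by
    rw [abs_mul, abs_of_pos hppos] at hlt
    by_contra hc
    push_neg at hc
    nlinarith [abs_nonneg (z:ℚ)]
  have hz0 : z = 0 := by
    rcases abs_lt.1 hzlt with ⟨h1, h2⟩
    have h1' : (-1:ℤ) < z := by exact_mod_cast h1
    have h2' : z < 1 := by exact_mod_cast h2
    omega
  have : b - b' = 0 := by rw [hz, hz0]; norm_num
  linarith

/-- Two Alg4 expansions with the same digit sequence have the same value. -/
lemma alg4_inj {α α' : ℕ → ℚ_[p]} {b : ℕ → ℚ} (h1 : Alg4 p α b) (h2 : Alg4 p α' b)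
    (hne : ∀ n, α n ≠ (b n : ℚ_[p])) (hne' : ∀ n, α' n ≠ (b n : ℚ_[p])) :
    α 0 = α' 0 := by
  by_contra hd
  obtain ⟨ht, hs, hrec⟩ := h1
  obtain ⟨ht', hs', hrec'⟩ := h2
  have hppos : (0:ℝ) < p := by exact_mod_cast (Fact.out : p.Prime).pos
  have hp1 : (1:ℝ) < p := by exact_mod_cast (Fact.out : p.Prime).one_lt
  -- basic bounds
  have hb1 : ∀ n, ‖α n - (b n : ℚ_[p])‖ ≤ 1 := by
    intro n
    rcases Nat.even_or_odd n with he | ho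
    · exact (ht n he).2.2
    · exact le_of_lt (hs n ho).2.2
  have hb1' : ∀ n, ‖α' n - (b n : ℚ_[p])‖ ≤ 1 := by
    intro n
    rcases Nat.even_or_odd n with he | ho
    · exact (ht' n he).2.2
    · exact le_of_lt (hs' n ho).2.2
  have hDle : ∀ n, ‖α n - α' n‖ ≤ 1 := by
    intro n
    have h3 : α n - α' n = (α n - b n) - (α' n - b n) := by ring
    rw [h3]
    exact le_trans (mySubMax _ _) (max_le (hb1 n) (hb1' n))
  have hne0 : ∀ n, α n - (b n : ℚ_[p]) ≠ 0 := fun n => sub_ne_zero.2 (hne n)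
  have hne0' : ∀ n, α' n - (b n : ℚ_[p]) ≠ 0 := fun n => sub_ne_zero.2 (hne' n)
  -- step identity
  have hstep : ∀ n, ‖α (n+1) - α' (n+1)‖
      = ‖α n - α' n‖ / (‖α n - (b n : ℚ_[p])‖ * ‖α' n - (b n : ℚ_[p])‖) := by
    intro n
    have hid : α (n+1) - α' (n+1)
        = (α' n - α n) / ((α n - b n) * (α' n - b n)) := by
      rw [hrec n, hrec' n, inv_sub_inv (hne0 n) (hne0' n)]
      congr 1
      ring
    rw [hid, norm_div, norm_mul, norm_sub_rev]
  have hgrow : ∀ n, ‖α n - α' n‖ ≤ ‖α (n+1) - α' (n+1)‖ := by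
    intro n
    rw [hstep n]
    rw [le_div_iff₀ (mul_pos (norm_pos_iff.2 (hne0 n)) (norm_pos_iff.2 (hne0' n)))]
    calc ‖α n - α' n‖ * (‖α n - (b n:ℚ_[p])‖ * ‖α' n - (b n:ℚ_[p])‖)
        ≤ ‖α n - α' n‖ * (1 * 1) := by
          apply mul_le_mul_of_nonneg_left _ (norm_nonneg _)
          exact mul_le_mul (hb1 n) (hb1' n) (norm_nonneg _) zero_le_one
      _ = ‖α n - α' n‖ := by ring
  have hgrowp : ∀ n, Odd n → (p:ℝ) * ‖α n - α' n‖ ≤ ‖α (n+1) - α' (n+1)‖ := by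
    intro n ho
    rw [hstep n]
    have hlt : ‖α n - (b n:ℚ_[p])‖ ≤ (p:ℝ)⁻¹ := myNormLeInv (hs n ho).2.2
    have h4 : ‖α n - (b n:ℚ_[p])‖ * ‖α' n - (b n:ℚ_[p])‖ ≤ (p:ℝ)⁻¹ := by
      calc ‖α n - (b n:ℚ_[p])‖ * ‖α' n - (b n:ℚ_[p])‖ ≤ (p:ℝ)⁻¹ * 1 :=
            mul_le_mul hlt (hb1' n) (norm_nonneg _) (by positivity)
        _ = (p:ℝ)⁻¹ := mul_one _
    rw [le_div_iff₀ (mul_pos (norm_pos_iff.2 (hne0 n)) (norm_pos_iff.2 (hne0' n)))]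
    calc (p:ℝ) * ‖α n - α' n‖ * (‖α n - (b n:ℚ_[p])‖ * ‖α' n - (b n:ℚ_[p])‖)
        ≤ (p:ℝ) * ‖α n - α' n‖ * (p:ℝ)⁻¹ := by
          apply mul_le_mul_of_nonneg_left h4 (by positivity)
      _ = ‖α n - α' n‖ := by field_simp
  have hiter : ∀ n, (p:ℝ)^n * ‖α 0 - α' 0‖ ≤ ‖α (2*n) - α' (2*n)‖ := by
    intro n
    induction n with
    | zero => simp
    | succ n ih =>
      have h5 : (p:ℝ) * ‖α (2*n+1) - α' (2*n+1)‖ ≤ ‖α (2*n+2) - α' (2*n+2)‖ :=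
        hgrowp (2*n+1) ⟨n, by ring⟩
      have h6 := hgrow (2*n)
      have h7 : 2*(n+1) = 2*n+2 := by ring
      rw [h7]
      calc (p:ℝ)^(n+1) * ‖α 0 - α' 0‖ = (p:ℝ) * ((p:ℝ)^n * ‖α 0 - α' 0‖) := by ring
        _ ≤ (p:ℝ) * ‖α (2*n) - α' (2*n)‖ := by
            apply mul_le_mul_of_nonneg_left ih (by positivity)
        _ ≤ (p:ℝ) * ‖α (2*n+1) - α' (2*n+1)‖ := by
            apply mul_le_mul_of_nonneg_left h6 (by positivity)
        _ ≤ ‖α (2*n+2) - α' (2*n+2)‖ := h5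
  have hDpos : 0 < ‖α 0 - α' 0‖ := by
    rw [norm_pos_iff]
    exact sub_ne_zero.2 hd
  obtain ⟨n, hn⟩ := pow_unbounded_of_one_lt (‖α 0 - α' 0‖⁻¹) hp1
  have e : ‖α 0 - α' 0‖⁻¹ * ‖α 0 - α' 0‖ = 1 := inv_mul_cancel₀ (ne_of_gt hDpos)
  have h11 := mul_lt_mul_of_pos_right hn hDpos
  have h12 := hiter n
  have h13 := hDle (2*n)
  nlinarith

lemma alg4_shift {α : ℕ → ℚ_[p]} {b : ℕ → ℚ} (h : Alg4 p α b) (E : ℕ) (hE : Even E) :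
    Alg4 p (fun n => α (n + E)) (fun n => b (n + E)) := by
  obtain ⟨ht, hs, hrec⟩ := h
  refine ⟨fun n hn => ht (n + E) (hn.add hE), fun n hn => hs (n + E) (hn.add_even hE),
    fun n => ?_⟩
  show α (n + 1 + E) = (α (n + E) - ((b (n + E) : ℚ) : ℚ_[p]))⁻¹
  rw [show n + 1 + E = n + E + 1 by omega]
  exact hrec (n + E)

/-- For `α₀` a quadratic irrational (with `α₀² = r·α₀ + s`, conjugate `r - α₀`)
whose Algorithm (4) expansion is periodic, the expansion is purely periodic iff
`‖α₀‖_p > 1` and `‖ᾱ₀‖_p ≤ 1`. -/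
theorem stmt_8 (p : ℕ) [Fact p.Prime] (hp : p ≠ 2)
    (α₀ : ℚ_[p]) (hirr : ∀ q : ℚ, α₀ ≠ (q : ℚ_[p]))
    (r s : ℚ) (hquad : α₀ ^ 2 = (r : ℚ_[p]) * α₀ + (s : ℚ_[p]))
    (α : ℕ → ℚ_[p]) (b : ℕ → ℚ) (h0 : α 0 = α₀) (halg : Alg4 p α b)
    (hper : ∃ h k : ℕ, 1 ≤ k ∧ ∀ n, h ≤ n → b (n + k) = b n) :
    (∃ k : ℕ, 1 ≤ k ∧ ∀ n, b (n + k) = b n) ↔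
      (1 < ‖α₀‖ ∧ ‖(r : ℚ_[p]) - α₀‖ ≤ 1) := by
  have halg' := halg
  obtain ⟨ht, hsf, hrec⟩ := halg'
  obtain ⟨h, k, hk1, hper'⟩ := hper
  have hprime : p.Prime := Fact.out
  have hppos : (0:ℝ) < p := by exact_mod_cast hprime.pos
  have hp1R : (1:ℝ) < p := by exact_mod_cast hprime.one_lt
  set γ : ℕ → ℚ_[p] :=
    fun n => Nat.rec ((r : ℚ_[p]) - α₀) (fun m g => (g - ((b m : ℚ) : ℚ_[p]))⁻¹) n with hγdef
  have hγ0 : γ 0 = (r : ℚ_[p]) - α₀ := rfl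
  have hγs : ∀ n, γ (n + 1) = (γ n - (b n : ℚ_[p]))⁻¹ := fun n => rfl
  -- coupling of α and its conjugate sequence γ
  have hcoup : ∀ n, ∃ a c : ℚ, c ≠ 0 ∧ α n = (a : ℚ_[p]) + (c : ℚ_[p]) * α₀ ∧
      γ n = (a : ℚ_[p]) + (c : ℚ_[p]) * ((r : ℚ_[p]) - α₀) := by
    intro n
    induction n with
    | zero => exact ⟨0, 1, one_ne_zero, by simp [h0], by simp [hγ0]⟩
    | succ n ih =>
      obtain ⟨a, c, hc, hα, hγ⟩ := ih
      have hcQ : ((c : ℚ) : ℚ_[p]) ≠ 0 := by exact_mod_cast hc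
      set e : ℚ := a - b n with he
      have hα' : α n - (b n : ℚ_[p]) = ((e : ℚ) : ℚ_[p]) + (c : ℚ_[p]) * α₀ := by
        rw [hα, he]; push_cast; ring
      have hγ' : γ n - (b n : ℚ_[p])
          = ((e : ℚ) : ℚ_[p]) + (c : ℚ_[p]) * ((r : ℚ_[p]) - α₀) := by
        rw [hγ, he]; push_cast; ring
      have h1 : ((e : ℚ) : ℚ_[p]) + (c : ℚ_[p]) * α₀ ≠ 0 := by
        intro hz
        apply hirr (-e / c)
        push_cast
        rw [eq_div_iff hcQ]
        linear_combination hz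
      have h2 : ((e : ℚ) : ℚ_[p]) + (c : ℚ_[p]) * ((r : ℚ_[p]) - α₀) ≠ 0 := by
        intro hz
        apply hirr ((e + c * r) / c)
        push_cast
        rw [eq_div_iff hcQ]
        linear_combination -hz
      set N : ℚ := e ^ 2 + e * c * r - c ^ 2 * s with hN
      have key : (((e : ℚ) : ℚ_[p]) + (c : ℚ_[p]) * α₀)
          * (((e : ℚ) : ℚ_[p]) + (c : ℚ_[p]) * ((r : ℚ_[p]) - α₀)) = ((N : ℚ) : ℚ_[p]) := by
        rw [hN]
        push_cast
        linear_combination (-(c : ℚ_[p]) ^ 2) * hquad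
      have hNne : ((N : ℚ) : ℚ_[p]) ≠ 0 := by rw [← key]; exact mul_ne_zero h1 h2
      have hNq : N ≠ 0 := fun hh => hNne (by rw [hh]; norm_num)
      refine ⟨(e + c * r) / N, -c / N, div_ne_zero (neg_ne_zero.2 hc) hNq, ?_, ?_⟩
      · rw [hrec n, hα']
        apply inv_eq_of_mul_eq_one_right
        push_cast
        field_simp
        linear_combination key
      · rw [hγs n, hγ']
        apply inv_eq_of_mul_eq_one_right
        push_cast
        field_simp
        linear_combination key
  -- derived irrationality facts
  have hirrA : ∀ n (q : ℚ), α n ≠ (q : ℚ_[p]) := by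
    intro n q hq
    obtain ⟨a, c, hc, hα, _⟩ := hcoup n
    have hcQ : ((c : ℚ) : ℚ_[p]) ≠ 0 := by exact_mod_cast hc
    apply hirr ((q - a) / c)
    push_cast
    rw [eq_div_iff hcQ]
    rw [hα] at hq
    linear_combination hq
  have hirrG : ∀ n (q : ℚ), γ n ≠ (q : ℚ_[p]) := by
    intro n q hq
    obtain ⟨a, c, hc, _, hγ⟩ := hcoup n
    have hcQ : ((c : ℚ) : ℚ_[p]) ≠ 0 := by exact_mod_cast hc
    apply hirr ((a + c * r - q) / c)
    push_cast
    rw [eq_div_iff hcQ]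
    rw [hγ] at hq
    linear_combination -hq
  have hαb : ∀ n, α n - ((b n : ℚ) : ℚ_[p]) ≠ 0 := fun n => sub_ne_zero.2 (hirrA n (b n))
  have hγb : ∀ n, γ n - ((b n : ℚ) : ℚ_[p]) ≠ 0 := fun n => sub_ne_zero.2 (hirrG n (b n))
  have hγne : ∀ n, γ n ≠ 0 := fun n => by
    have := hirrG n 0; simpa using this
  have hγinv : ∀ n, (γ (n + 1))⁻¹ = γ n - ((b n : ℚ) : ℚ_[p]) := fun n => by
    rw [hγs n, inv_inv]
  have hσ : ∀ m n, α m = α n → γ m = γ n := by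
    intro m n hmn
    obtain ⟨a, c, hc, hα1, hγ1⟩ := hcoup m
    obtain ⟨a', c', hc', hα2, hγ2⟩ := hcoup n
    rw [hα1, hα2] at hmn
    have hcc : c = c' := by
      by_contra hne
      have hccQ : ((c : ℚ) : ℚ_[p]) - (c' : ℚ_[p]) ≠ 0 := by
        intro hz
        apply hne
        have : ((c : ℚ) : ℚ_[p]) = (c' : ℚ_[p]) := by linear_combination hz
        exact_mod_cast this
      apply hirr ((a' - a) / (c - c'))
      push_cast
      rw [eq_div_iff (by push_cast at hccQ ⊢; exact hccQ)]
      linear_combination hmn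
    have haa : (a : ℚ_[p]) = (a' : ℚ_[p]) := by
      rw [hcc] at hmn
      linear_combination hmn
    rw [hγ1, hγ2, hcc, haa]
  have hαγ : ∀ n, α n - γ n ≠ 0 := by
    intro n hz
    obtain ⟨a, c, hc, hα1, hγ1⟩ := hcoup n
    have hcQ : ((c : ℚ) : ℚ_[p]) ≠ 0 := by exact_mod_cast hc
    apply hirr (r / 2)
    push_cast
    rw [eq_div_iff (by norm_num : (2:ℚ_[p]) ≠ 0)]
    rw [hα1, hγ1] at hz
    have hz2 : (c : ℚ_[p]) * (2 * α₀ - r) = 0 := by linear_combination hz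
    rcases mul_eq_zero.1 hz2 with hcz | hαz
    · exact absurd hcz hcQ
    · linear_combination hαz
  -- norm facts from the algorithm
  have hnormOdd : ∀ n, Odd n → 1 ≤ ‖α n‖ := by
    intro n ⟨m, hm⟩
    have heq : n = 2 * m + 1 := by omega
    rw [heq, hrec (2 * m), norm_inv]
    have hle : ‖α (2 * m) - ((b (2 * m) : ℚ) : ℚ_[p])‖ ≤ 1 := (ht (2 * m) ⟨m, by ring⟩).2.2
    exact (one_le_inv₀ (norm_pos_iff.2 (hαb (2 * m)))).2 hle
  have hnormEven : ∀ n, Even n → n ≠ 0 → 1 < ‖α n‖ := by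
    intro n he hne
    obtain ⟨j, hj⟩ := he
    have hj1 : 1 ≤ j := by omega
    have heq : n = (2 * (j - 1) + 1) + 1 := by omega
    rw [heq, hrec (2 * (j - 1) + 1), norm_inv]
    have hlt : ‖α (2 * (j - 1) + 1) - ((b (2 * (j - 1) + 1) : ℚ) : ℚ_[p])‖ < 1 :=
      (hsf (2 * (j - 1) + 1) ⟨j - 1, by ring⟩).2.2
    exact (one_lt_inv₀ (norm_pos_iff.2 (hαb (2 * (j - 1) + 1)))).2 hlt
  -- norm of b n equals norm of α n when the latter is ≥ 1 resp > 1
  have hbnorm : ∀ n, ‖α n - ((b n : ℚ) : ℚ_[p])‖ < ‖α n‖ →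
      ‖((b n : ℚ) : ℚ_[p])‖ = ‖α n‖ := by
    intro n hlt
    have hid : ((b n : ℚ) : ℚ_[p]) = α n + (-(α n - ((b n : ℚ) : ℚ_[p]))) := by ring
    have hnemax : ‖α n‖ ≠ ‖-(α n - ((b n : ℚ) : ℚ_[p]))‖ := by
      rw [norm_neg]; exact ne_of_gt hlt
    rw [hid, Padic.add_eq_max_of_ne hnemax, norm_neg, max_eq_left (le_of_lt hlt)]
  -- invariant propagation
  have propEven : ∀ n, Even n → 1 < ‖α n‖ → ‖γ n‖ ≤ 1 → ‖γ (n + 1)‖ < 1 := by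
    intro n he hα1 hγ1
    have hble : ‖α n - ((b n : ℚ) : ℚ_[p])‖ ≤ 1 := (ht n he).2.2
    have hbn : ‖((b n : ℚ) : ℚ_[p])‖ = ‖α n‖ := hbnorm n (lt_of_le_of_lt hble hα1)
    have hγbn : ‖γ n - ((b n : ℚ) : ℚ_[p])‖ = ‖((b n : ℚ) : ℚ_[p])‖ := by
      have hid : γ n - ((b n : ℚ) : ℚ_[p]) = (-((b n : ℚ) : ℚ_[p])) + γ n := by ring
      have hlt : ‖γ n‖ < ‖-((b n : ℚ) : ℚ_[p])‖ := by
        rw [norm_neg, hbn]; exact lt_of_le_of_lt hγ1 hα1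
      rw [hid, Padic.add_eq_max_of_ne (ne_of_gt hlt).symm.symm, max_eq_left (le_of_lt hlt),
        norm_neg]
    rw [hγs n, norm_inv, hγbn, hbn]
    exact (inv_lt_one₀ (lt_trans zero_lt_one hα1)).2 hα1
  have propOdd : ∀ n, Odd n → ‖γ n‖ < 1 → ‖γ (n + 1)‖ ≤ 1 := by
    intro n ho hγ1
    have hα1 : 1 ≤ ‖α n‖ := hnormOdd n ho
    have hblt : ‖α n - ((b n : ℚ) : ℚ_[p])‖ < 1 := (hsf n ho).2.2
    have hbn : ‖((b n : ℚ) : ℚ_[p])‖ = ‖α n‖ := hbnorm n (lt_of_lt_of_le hblt hα1)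
    have hγbn : ‖γ n - ((b n : ℚ) : ℚ_[p])‖ = ‖((b n : ℚ) : ℚ_[p])‖ := by
      have hid : γ n - ((b n : ℚ) : ℚ_[p]) = (-((b n : ℚ) : ℚ_[p])) + γ n := by ring
      have hlt : ‖γ n‖ < ‖-((b n : ℚ) : ℚ_[p])‖ := by
        rw [norm_neg, hbn]; exact lt_of_lt_of_le hγ1 hα1
      rw [hid, Padic.add_eq_max_of_ne (ne_of_gt hlt).symm.symm, max_eq_left (le_of_lt hlt),
        norm_neg]
    rw [hγs n, norm_inv, hγbn, hbn]
    exact (inv_le_one₀ (lt_of_lt_of_le zero_lt_one hα1)).2 hα1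
  constructor
  · rintro ⟨k', hk'1, hpp⟩
    set K := 2 * k' with hK
    have hKeven : Even K := ⟨k', by omega⟩
    have hbK : ∀ n, b (n + K) = b n := by
      intro n
      have h1 := hpp (n + k')
      have h2 := hpp n
      rw [show n + K = n + k' + k' by omega, h1, h2]
    have hsh : Alg4 p (fun n => α (n + K)) (fun n => b (n + K)) := alg4_shift halg K hKeven
    have hsh' : Alg4 p (fun n => α (n + K)) b := by
      rwa [show (fun n => b (n + K)) = b from funext hbK] at hsh
    have hK0 : α K = α 0 := by
      have := alg4_inj hsh' halg (fun n => hirrA (n + K) (b n)) (fun n => hirrA n (b n))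
      simpa using this
    have hαper : ∀ n, α (n + K) = α n := by
      intro n
      induction n with
      | zero => simpa using hK0
      | succ n ih =>
        rw [show n + 1 + K = (n + K) + 1 by omega, hrec (n + K), hrec n, ih, hbK n]
    have hγper : ∀ n, γ (n + K) = γ n := fun n => hσ _ _ (hαper n)
    have hα0 : 1 < ‖α₀‖ := by
      rw [← h0, ← hαper 0]
      exact hnormEven (0 + K) (by simpa using hKeven) (by omega)
    refine ⟨hα0, ?_⟩
    -- there is an index m ≥ 1 with ‖γ m‖ < 1
    have hsmall : ∃ m, 1 ≤ m ∧ ‖γ m‖ < 1 := by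
      by_contra hc
      push_neg at hc
      have hcge : ∀ m, 1 ≤ m → 1 ≤ ‖γ m‖ := fun m hm => hc m hm
      -- growth of the difference α - γ
      have hstep : ∀ n, ‖α (n + 1) - γ (n + 1)‖
          = ‖α n - γ n‖ / (‖α n - ((b n : ℚ) : ℚ_[p])‖ * ‖γ n - ((b n : ℚ) : ℚ_[p])‖) := by
        intro n
        have hid : α (n + 1) - γ (n + 1)
            = (γ n - α n) / ((α n - ((b n : ℚ) : ℚ_[p])) * (γ n - ((b n : ℚ) : ℚ_[p]))) := by
          rw [hrec n, hγs n, inv_sub_inv (hαb n) (hγb n)]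
          congr 1
          ring
        rw [hid, norm_div, norm_mul, norm_sub_rev]
      have hγble : ∀ n, ‖γ n - ((b n : ℚ) : ℚ_[p])‖ ≤ 1 := by
        intro n
        have h1 : 1 ≤ ‖γ (n + 1)‖ := hcge (n + 1) (by omega)
        rw [hγs n, norm_inv] at h1
        have h2 := norm_pos_iff.2 (hγb n)
        rw [one_le_inv₀ h2] at h1
        exact h1
      have hαble : ∀ n, ‖α n - ((b n : ℚ) : ℚ_[p])‖ ≤ 1 := by
        intro n
        rcases Nat.even_or_odd n with he | ho
        · exact (ht n he).2.2
        · exact le_of_lt (hsf n ho).2.2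
      have hgrow : ∀ n, ‖α n - γ n‖ ≤ ‖α (n + 1) - γ (n + 1)‖ := by
        intro n
        rw [hstep n, le_div_iff₀ (mul_pos (norm_pos_iff.2 (hαb n)) (norm_pos_iff.2 (hγb n)))]
        calc ‖α n - γ n‖ * (‖α n - ((b n : ℚ) : ℚ_[p])‖ * ‖γ n - ((b n : ℚ) : ℚ_[p])‖)
            ≤ ‖α n - γ n‖ * (1 * 1) := by
              apply mul_le_mul_of_nonneg_left _ (norm_nonneg _)
              exact mul_le_mul (hαble n) (hγble n) (norm_nonneg _) zero_le_one
          _ = ‖α n - γ n‖ := by ring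
      have hgrowp : ∀ n, Odd n → (p:ℝ) * ‖α n - γ n‖ ≤ ‖α (n + 1) - γ (n + 1)‖ := by
        intro n ho
        rw [hstep n, le_div_iff₀ (mul_pos (norm_pos_iff.2 (hαb n)) (norm_pos_iff.2 (hγb n)))]
        have hlt : ‖α n - ((b n : ℚ) : ℚ_[p])‖ ≤ (p:ℝ)⁻¹ := myNormLeInv (hsf n ho).2.2
        have h4 : ‖α n - ((b n : ℚ) : ℚ_[p])‖ * ‖γ n - ((b n : ℚ) : ℚ_[p])‖ ≤ (p:ℝ)⁻¹ := by
          calc ‖α n - ((b n : ℚ) : ℚ_[p])‖ * ‖γ n - ((b n : ℚ) : ℚ_[p])‖ ≤ (p:ℝ)⁻¹ * 1 :=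
                mul_le_mul hlt (hγble n) (norm_nonneg _) (by positivity)
            _ = (p:ℝ)⁻¹ := mul_one _
        calc (p:ℝ) * ‖α n - γ n‖ * (‖α n - ((b n : ℚ) : ℚ_[p])‖ * ‖γ n - ((b n : ℚ) : ℚ_[p])‖)
            ≤ (p:ℝ) * ‖α n - γ n‖ * (p:ℝ)⁻¹ := by
              apply mul_le_mul_of_nonneg_left h4 (by positivity)
          _ = ‖α n - γ n‖ := by field_simp
      have hiter : ∀ n, (p:ℝ) ^ n * ‖α 0 - γ 0‖ ≤ ‖α (2 * n) - γ (2 * n)‖ := by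
        intro n
        induction n with
        | zero => simp
        | succ n ih =>
          have h5 : (p:ℝ) * ‖α (2 * n + 1) - γ (2 * n + 1)‖
              ≤ ‖α (2 * n + 2) - γ (2 * n + 2)‖ := hgrowp (2 * n + 1) ⟨n, by ring⟩
          have h6 := hgrow (2 * n)
          rw [show 2 * (n + 1) = 2 * n + 2 by ring]
          calc (p:ℝ) ^ (n + 1) * ‖α 0 - γ 0‖ = (p:ℝ) * ((p:ℝ) ^ n * ‖α 0 - γ 0‖) := by ring
            _ ≤ (p:ℝ) * ‖α (2 * n) - γ (2 * n)‖ := by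
                apply mul_le_mul_of_nonneg_left ih (by positivity)
            _ ≤ (p:ℝ) * ‖α (2 * n + 1) - γ (2 * n + 1)‖ := by
                apply mul_le_mul_of_nonneg_left h6 (by positivity)
            _ ≤ ‖α (2 * n + 2) - γ (2 * n + 2)‖ := h5
      have hδpos : 0 < ‖α 0 - γ 0‖ := norm_pos_iff.2 (hαγ 0)
      have hret : ‖α (2 * k') - γ (2 * k')‖ = ‖α 0 - γ 0‖ := by
        rw [show 2 * k' = 0 + K by omega, hαper 0, hγper 0]
      have h7 := hiter k'
      rw [hret] at h7
      have h8 : (1:ℝ) < (p:ℝ) ^ k' := one_lt_pow₀ hp1R (by omega)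
      nlinarith
    obtain ⟨m, hm1, hmlt⟩ := hsmall
    have hinvm : ∀ n, m ≤ n → ((Even n → ‖γ n‖ ≤ 1) ∧ (¬Even n → ‖γ n‖ < 1)) := by
      intro n hn
      induction n, hn using Nat.le_induction with
      | base => exact ⟨fun _ => le_of_lt hmlt, fun _ => hmlt⟩
      | succ n hn ih =>
        by_cases he : Even n
        · have h1 : 1 < ‖α n‖ := hnormEven n he (by omega)
          have h2 := propEven n he h1 (ih.1 he)
          exact ⟨fun hcontra => absurd (Nat.even_add_one.1 hcontra) (fun hh => hh he),
            fun _ => h2⟩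
        · have h2 := propOdd n (Nat.not_even_iff_odd.1 he) (ih.2 he)
          exact ⟨fun _ => h2, fun ho => absurd (Nat.even_add_one.2 he) ho⟩
    have hNper : ∀ t, γ (K * t) = γ 0 := by
      intro t
      induction t with
      | zero => rfl
      | succ t ih => rw [show K * (t + 1) = K * t + K by ring, hγper, ih]
    have hbig : m ≤ K * m := by
      calc m = 1 * m := (one_mul m).symm
        _ ≤ K * m := Nat.mul_le_mul_right m (by omega)
    have hEvenKm : Even (K * m) := ⟨k' * m, by rw [hK]; ring⟩
    have hfin := (hinvm (K * m) hbig).1 hEvenKm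
    rw [hNper m, hγ0] at hfin
    exact hfin
  · rintro ⟨hα0, hγ0le⟩
    have hα0' : 1 < ‖α 0‖ := by rwa [h0]
    -- invariant for all n
    have hinv : ∀ n, (Even n → ‖γ n‖ ≤ 1) ∧ (¬Even n → ‖γ n‖ < 1) := by
      intro n
      induction n with
      | zero =>
        exact ⟨fun _ => by rw [hγ0]; exact hγ0le, fun hh => absurd Even.zero hh⟩
      | succ n ih =>
        by_cases he : Even n
        · have h1 : 1 < ‖α n‖ := by
            rcases Nat.eq_zero_or_pos n with h2 | h2
            · rw [h2]; exact hα0'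
            · exact hnormEven n he (by omega)
          have h2 := propEven n he h1 (ih.1 he)
          exact ⟨fun hcontra => absurd (Nat.even_add_one.1 hcontra) (fun hh => hh he),
            fun _ => h2⟩
        · have h2 := propOdd n (Nat.not_even_iff_odd.1 he) (ih.2 he)
          exact ⟨fun _ => h2, fun ho => absurd (Nat.even_add_one.2 he) ho⟩
    set K := 2 * k with hK
    have hKeven : Even K := ⟨k, by omega⟩
    have hbK : ∀ n, h ≤ n → b (n + K) = b n := by
      intro n hn
      have h1 := hper' (n + k) (by omega)
      have h2 := hper' n hn
      rw [show n + K = n + k + k by omega, h1, h2]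
    set m := 2 * h + 2 with hm
    have hmeven : Even m := ⟨h + 1, by omega⟩
    have hmh : h ≤ m := by omega
    -- injectivity at index m
    have hsh1 : Alg4 p (fun n => α (n + m)) (fun n => b (n + m)) := alg4_shift halg m hmeven
    have hsh2 : Alg4 p (fun n => α (n + (m + K))) (fun n => b (n + (m + K))) :=
      alg4_shift halg (m + K) (hmeven.add hKeven)
    have hfeq : (fun n => b (n + (m + K))) = (fun n => b (n + m)) := by
      funext n
      rw [show n + (m + K) = (n + m) + K by omega]
      exact hbK (n + m) (by omega)
    rw [hfeq] at hsh2
    have hmm : α (m + K) = α m := by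
      have := alg4_inj hsh2 hsh1 (fun n => hirrA (n + (m + K)) (b (n + m)))
        (fun n => hirrA (n + m) (b (n + m)))
      simpa using this
    have hγmm : γ (m + K) = γ m := hσ _ _ hmm
    -- recovery of digits from the conjugate sequence
    have hrecb : ∀ n, γ (n + 1 + K) = γ (n + 1) → b (n + K) = b n := by
      intro n hg
      have e1 : -((γ (n + 1))⁻¹) - ((b n : ℚ) : ℚ_[p]) = -(γ n) := by
        rw [hγinv n]; ring
      have e2 : -((γ (n + 1 + K))⁻¹) - ((b (n + K) : ℚ) : ℚ_[p]) = -(γ (n + K)) := by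
        rw [show n + 1 + K = (n + K) + 1 by omega, hγinv (n + K)]; ring
      rw [hg] at e2
      rcases Nat.even_or_odd n with he | ho
      · have heK : Even (n + K) := he.add hKeven
        have f1 : IsFracFloor p (-((γ (n + 1))⁻¹)) (b n) :=
          ⟨(ht n he).1, (ht n he).2.1, by rw [e1, norm_neg]; exact (hinv n).1 he⟩
        have f2 : IsFracFloor p (-((γ (n + 1))⁻¹)) (b (n + K)) :=
          ⟨(ht (n + K) heK).1, (ht (n + K) heK).2.1, by
            rw [e2, norm_neg]; exact (hinv (n + K)).1 heK⟩
        exact fracFloor_unique f2 f1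
      · have hoK : Odd (n + K) := ho.add_even hKeven
        have f1 : IsIntFloor p (-((γ (n + 1))⁻¹)) (b n) :=
          ⟨(hsf n ho).1, (hsf n ho).2.1, by
            rw [e1, norm_neg]; exact (hinv n).2 (Nat.not_even_iff_odd.2 ho)⟩
        have f2 : IsIntFloor p (-((γ (n + 1))⁻¹)) (b (n + K)) :=
          ⟨(hsf (n + K) hoK).1, (hsf (n + K) hoK).2.1, by
            rw [e2, norm_neg]; exact (hinv (n + K)).2 (Nat.not_even_iff_odd.2 hoK)⟩
        exact intFloor_unique f2 f1
    -- descent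
    have hdesc : ∀ i, γ (m - i + K) = γ (m - i) := by
      intro i
      induction i with
      | zero => simpa using hγmm
      | succ i ih =>
        by_cases hc : m ≤ i
        · rw [show m - (i + 1) = m - i by omega]
          exact ih
        · have hni : m - i = (m - (i + 1)) + 1 := by omega
          rw [hni] at ih
          have hbn := hrecb (m - (i + 1)) ih
          have g1 : (γ (m - (i + 1) + K) - ((b (m - (i + 1) + K) : ℚ) : ℚ_[p]))⁻¹
              = (γ (m - (i + 1)) - ((b (m - (i + 1)) : ℚ) : ℚ_[p]))⁻¹ := by
            rw [← hγs (m - (i + 1) + K), ← hγs (m - (i + 1)),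
              show m - (i + 1) + K + 1 = m - (i + 1) + 1 + K by omega]
            exact ih
          have g2 := inv_injective g1
          rw [hbn] at g2
          exact sub_left_inj.1 g2
    refine ⟨K, by omega, fun n => ?_⟩
    by_cases hc : n < m
    · have hi : m - (m - (n + 1)) = n + 1 := by omega
      have hd := hdesc (m - (n + 1))
      rw [hi] at hd
      exact hrecb n hd
    · exact hbK n (by omega)
end

section
/- Let p be an odd prime and let D be an integer that is not a perfect square, with p not dividing D, and suppose there exists α₀ ∈ ℚ_p with α₀² = D. Let (α_n), (b_n) be the sequences produced by Algorithm (3) applied to α₀, and assume the expansion is periodic. Then the pre-period has length exactly 1: there exists k ≥ 1 with b_{n+k} = b_n for all n ≥ 1, but there is no k ≥ 1 with b_{n+k} = b_n for all n ≥ 0. -/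
namespace S9

variable {p : ℕ} [Fact p.Prime]

lemma inv_sub_inv' {K : Type*} [Field K] {u w : K} (hu : u ≠ 0) (hw : w ≠ 0) :
    u⁻¹ - w⁻¹ = (w - u) * u⁻¹ * w⁻¹ := by
  field_simp

lemma hp1 : (1:ℝ) < (p:ℝ) := by exact_mod_cast (Fact.out : p.Prime).one_lt

lemma norm_int_ge (z : ℤ) (hz : z ≠ 0) : (1:ℝ) ≤ |(z:ℝ)| * ‖(z : ℚ_[p])‖ := by
  have hj : (p:ℤ) ^ (padicValInt p z) ∣ z := padicValInt_dvd z
  have hle : (p:ℝ) ^ (padicValInt p z) ≤ |(z:ℝ)| := by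
    calc (p:ℝ) ^ padicValInt p z = ((p^padicValInt p z : ℤ) : ℝ) := by push_cast; ring
      _ ≤ ((|z| : ℤ) : ℝ) := by exact_mod_cast Int.le_of_dvd (abs_pos.mpr hz) ((dvd_abs _ _).mpr hj)
      _ = |(z:ℝ)| := by push_cast; ring
  have hnorm : ‖(z : ℚ_[p])‖ = (p:ℝ) ^ (-(padicValInt p z : ℤ)) := by
    rw [Padic.norm_eq_zpow_neg_valuation (by exact_mod_cast hz), Padic.valuation_intCast]
  rw [hnorm]
  have hppos : (0:ℝ) < (p:ℝ) := lt_trans one_pos hp1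
  calc (1:ℝ) = (p:ℝ) ^ (padicValInt p z) * (p:ℝ) ^ (-(padicValInt p z : ℤ)) := by
        rw [← zpow_natCast, ← zpow_add₀ (ne_of_gt hppos)]; simp
    _ ≤ |(z:ℝ)| * (p:ℝ) ^ (-(padicValInt p z : ℤ)) := by
        apply mul_le_mul_of_nonneg_right hle (zpow_nonneg (le_of_lt hppos) _)

lemma frac_norm_ge (r : ℚ) (hr : r ≠ 0) (hfrac : IsPadicFrac p r) :
    (1:ℝ) ≤ |(r:ℝ)| * ‖(r : ℚ_[p])‖ := by
  obtain ⟨m, z, hz⟩ := hfrac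
  have hppos : (0:ℝ) < (p:ℝ) := lt_trans one_pos hp1
  have hz0 : z ≠ 0 := by
    rintro rfl
    exact hr (by
      have : r * (p:ℚ)^m = 0 := by exact_mod_cast hz
      rcases mul_eq_zero.mp this with h | h
      · exact h
      · exact absurd h (pow_ne_zero _ (by exact_mod_cast (Fact.out : p.Prime).pos.ne')))
  have key := norm_int_ge (p := p) z hz0
  have hnormz : ‖(z : ℚ_[p])‖ = ‖(r:ℚ_[p])‖ * (p:ℝ)^(-(m:ℤ)) := by
    have h1 : ((z:ℤ):ℚ_[p]) = (r : ℚ_[p]) * (p:ℚ_[p])^m := by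
      have := congrArg (fun q : ℚ => (q : ℚ_[p])) hz
      push_cast at this ⊢
      linear_combination -this
    rw [h1, norm_mul, Padic.norm_p_pow]
  have habs : |(z:ℝ)| = |(r:ℝ)| * (p:ℝ)^m := by
    have : (z:ℝ) = (r:ℝ) * (p:ℝ)^m := by exact_mod_cast hz.symm
    rw [this, abs_mul, abs_of_pos (pow_pos hppos m)]
  calc (1:ℝ) ≤ |(z:ℝ)| * ‖(z : ℚ_[p])‖ := key
    _ = |(r:ℝ)| * (p:ℝ)^m * (‖(r:ℚ_[p])‖ * (p:ℝ)^(-(m:ℤ))) := by rw [habs, hnormz]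
    _ = |(r:ℝ)| * ‖(r:ℚ_[p])‖ * ((p:ℝ)^m * (p:ℝ)^(-(m:ℤ))) := by ring
    _ = |(r:ℝ)| * ‖(r:ℚ_[p])‖ := by
        rw [← zpow_natCast (p:ℝ), ← zpow_add₀ (ne_of_gt hppos)]; simp


lemma norm_le_inv_p_of_lt_one {x : ℚ_[p]} (h : ‖x‖ < 1) : ‖x‖ ≤ (p:ℝ)⁻¹ := by
  have := (Padic.norm_le_pow_iff_norm_lt_pow_add_one x (-1)).mpr (by
    simpa using h)
  simpa [zpow_neg, zpow_one] using this

lemma frac_zero₁ (r : ℚ) (hfrac : IsPadicFrac p r) (h1 : ‖(r:ℚ_[p])‖ ≤ 1)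
    (h2 : |r| < 1) : r = 0 := by
  by_contra hr
  have key := frac_norm_ge (p := p) r hr hfrac
  have habs : |(r:ℝ)| < 1 := by rw [← Rat.cast_abs]; exact_mod_cast h2
  nlinarith [norm_nonneg ((r:ℚ_[p])), abs_nonneg (r:ℝ)]

lemma frac_zero₂ (r : ℚ) (hfrac : IsPadicFrac p r) (h1 : ‖(r:ℚ_[p])‖ < 1)
    (h2 : |r| < (p:ℚ)) : r = 0 := by
  by_contra hr
  have key := frac_norm_ge (p := p) r hr hfrac
  have h1' : ‖(r:ℚ_[p])‖ ≤ (p:ℝ)⁻¹ := norm_le_inv_p_of_lt_one h1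
  have habs : |(r:ℝ)| < (p:ℝ) := by rw [← Rat.cast_abs]; exact_mod_cast h2
  have hppos : (0:ℝ) < (p:ℝ) := lt_trans one_pos hp1
  have hinv : (0:ℝ) < (p:ℝ)⁻¹ := inv_pos.mpr hppos
  have : |(r:ℝ)| * ‖(r:ℚ_[p])‖ < 1 := by
    calc |(r:ℝ)| * ‖(r:ℚ_[p])‖ ≤ |(r:ℝ)| * (p:ℝ)⁻¹ :=
          mul_le_mul_of_nonneg_left h1' (abs_nonneg _)
      _ < (p:ℝ) * (p:ℝ)⁻¹ := mul_lt_mul_of_pos_right habs hinv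
      _ = 1 := mul_inv_cancel₀ (ne_of_gt hppos)
  linarith


lemma no_rat_sqrt (D : ℤ) (hD : ¬ ∃ z : ℤ, z * z = D) (q : ℚ) : q * q ≠ (D:ℚ) := by
  intro h
  have hden : q.den = 1 := by
    have hnum : (q.num : ℚ) * q.num = (D:ℚ) * (q.den:ℚ) * q.den := by
      have hd0 : ((q.den:ℚ)) ≠ 0 := by exact_mod_cast q.den_nz
      have h2 : ((q.num:ℚ)/(q.den:ℚ)) * ((q.num:ℚ)/(q.den:ℚ)) = (D:ℚ) := by
        rw [q.num_div_den]; exact h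
      field_simp at h2
      linear_combination h2
    have hint : q.num * q.num = D * q.den * q.den := by exact_mod_cast hnum
    have hcop : (q.num.natAbs).Coprime q.den := q.reduced
    have hdvd : (q.den : ℤ) ∣ q.num * q.num := ⟨D * q.den, by linarith [hint]⟩
    have hdvd' : q.den ∣ q.num.natAbs * q.num.natAbs := by
      have := Int.natAbs_dvd_natAbs.mpr hdvd
      simpa [Int.natAbs_mul] using this
    have hdnum : q.den ∣ q.num.natAbs :=
      (Nat.Coprime.dvd_mul_right hcop.symm).mp hdvd'
    have hg : Nat.gcd q.den q.num.natAbs = 1 := hcop.symm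
    have : q.den ∣ 1 := hg ▸ Nat.dvd_gcd (Nat.dvd_refl _) hdnum
    exact Nat.dvd_one.mp this
  have : (q.num : ℚ) = q := by
    conv_rhs => rw [← q.num_div_den, hden]
    simp
  apply hD
  exact ⟨q.num, by exact_mod_cast this ▸ h⟩

noncomputable def conj (α₀ z : ℚ_[p]) : ℚ_[p] :=
  letI := Classical.propDecidable (∃ xy : ℚ × ℚ, z = (xy.1 : ℚ_[p]) + (xy.2:ℚ_[p]) * α₀)
  if h : ∃ xy : ℚ × ℚ, z = (xy.1 : ℚ_[p]) + (xy.2:ℚ_[p]) * α₀ then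
    (h.choose.1 : ℚ_[p]) - (h.choose.2 : ℚ_[p]) * α₀
  else 0

section Main

variable {D : ℤ} {α₀ : ℚ_[p]}

lemma irrational_α₀ (hD : ¬ ∃ z : ℤ, z * z = D) (hsq : α₀ ^ 2 = (D : ℚ_[p]))
    (q : ℚ) : (q : ℚ_[p]) ≠ α₀ := by
  intro h
  apply no_rat_sqrt D hD q
  have : ((q * q : ℚ) : ℚ_[p]) = ((D:ℚ) : ℚ_[p]) := by
    push_cast
    rw [h]
    rw [← sq]
    exact_mod_cast hsq
  exact_mod_cast this

lemma lin_indep (hD : ¬ ∃ z : ℤ, z * z = D) (hsq : α₀ ^ 2 = (D : ℚ_[p]))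
    {x y : ℚ} (h : (x : ℚ_[p]) + (y:ℚ_[p]) * α₀ = 0) : x = 0 ∧ y = 0 := by
  by_cases hy : y = 0
  · subst hy
    simp at h
    exact ⟨by exact_mod_cast h, rfl⟩
  · exfalso
    apply irrational_α₀ hD hsq (-x / y)
    have hy' : (y : ℚ_[p]) ≠ 0 := by exact_mod_cast hy
    push_cast
    field_simp
    linear_combination -h

lemma rep_unique (hD : ¬ ∃ z : ℤ, z * z = D) (hsq : α₀ ^ 2 = (D : ℚ_[p]))
    {x y x' y' : ℚ} (h : (x : ℚ_[p]) + (y:ℚ_[p]) * α₀ = (x' : ℚ_[p]) + (y':ℚ_[p]) * α₀) :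
    x = x' ∧ y = y' := by
  have := lin_indep hD hsq (x := x - x') (y := y - y') (by push_cast; linear_combination h)
  constructor
  · linarith [this.1]
  · linarith [this.2]

lemma conj_spec (hD : ¬ ∃ z : ℤ, z * z = D) (hsq : α₀ ^ 2 = (D : ℚ_[p])) (x y : ℚ) :
    conj α₀ ((x:ℚ_[p]) + (y:ℚ_[p]) * α₀) = (x:ℚ_[p]) - (y:ℚ_[p]) * α₀ := by
  have hex : ∃ xy : ℚ × ℚ,
      ((x:ℚ_[p]) + (y:ℚ_[p]) * α₀) = (xy.1 : ℚ_[p]) + (xy.2:ℚ_[p]) * α₀ := ⟨(x, y), rfl⟩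
  rw [conj, dif_pos hex]
  obtain ⟨hx', hy'⟩ := rep_unique hD hsq hex.choose_spec.symm
  rw [hx', hy']

lemma rep_irrat (hD : ¬ ∃ z : ℤ, z * z = D) (hsq : α₀ ^ 2 = (D : ℚ_[p]))
    {z : ℚ_[p]} {x y : ℚ} (hy : y ≠ 0) (hz : z = (x:ℚ_[p]) + (y:ℚ_[p]) * α₀)
    (q : ℚ) : z ≠ (q : ℚ_[p]) := by
  intro h
  have : ((x - q : ℚ):ℚ_[p]) + (y:ℚ_[p]) * α₀ = 0 := by push_cast; linear_combination h - hz
  exact hy (lin_indep hD hsq this).2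

lemma inv_rep (hD : ¬ ∃ z : ℤ, z * z = D) (hsq : α₀ ^ 2 = (D : ℚ_[p]))
    {u y : ℚ} (hy : y ≠ 0) :
    ((u:ℚ_[p]) + (y:ℚ_[p]) * α₀)⁻¹
      = ((u/(u^2 - y^2*D) : ℚ):ℚ_[p]) + ((-y/(u^2 - y^2*D) : ℚ):ℚ_[p]) * α₀ := by
  set N : ℚ := u^2 - y^2*D with hN
  have hN0 : N ≠ 0 := by
    intro h0
    apply no_rat_sqrt D hD (u/y)
    have : u^2 = y^2 * D := by rw [hN] at h0; linarith
    field_simp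
    linear_combination this
  symm
  apply eq_inv_of_mul_eq_one_left
  have hNp : ((N:ℚ):ℚ_[p]) ≠ 0 := by exact_mod_cast hN0
  push_cast
  field_simp
  have hsq' : α₀ ^ 2 = ((D:ℚ):ℚ_[p]) := by push_cast; exact hsq
  have hNc : ((N:ℚ):ℚ_[p]) = (u:ℚ_[p])^2 - (y:ℚ_[p])^2 * ((D:ℚ):ℚ_[p]) := by
    rw [hN]; push_cast; ring
  linear_combination (-(y:ℚ_[p])^2) * hsq' - hNc

lemma norm_α₀ (hpD : ¬ (p : ℤ) ∣ D) (hsq : α₀ ^ 2 = (D : ℚ_[p])) : ‖α₀‖ = 1 := by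
  have hD1 : ‖((D:ℤ) : ℚ_[p])‖ = 1 := by
    have hle := Padic.norm_int_le_one (p := p) D
    have : ¬ ‖((D:ℤ) : ℚ_[p])‖ < 1 := fun h => hpD ((Padic.norm_intCast_lt_one_iff (k := D)).mp h)
    linarith [lt_or_eq_of_le hle |>.resolve_left this]
  have h2 : ‖α₀‖ ^ 2 = 1 := by
    rw [← norm_pow, hsq]; exact_mod_cast hD1
  nlinarith [norm_nonneg α₀]

lemma norm_two (hp : p ≠ 2) : ‖(2 : ℚ_[p])‖ = 1 := by
  have h2 : ((2:ℤ) : ℚ_[p]) = (2 : ℚ_[p]) := by norm_num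
  have hnd : ¬ (p:ℤ) ∣ 2 := by
    intro h
    have hnat : p ∣ 2 := by exact_mod_cast h
    exact hp ((Nat.prime_dvd_prime_iff_eq (Fact.out : p.Prime) Nat.prime_two).mp hnat)
  have hle := Padic.norm_int_le_one (p := p) 2
  have : ¬ ‖((2:ℤ) : ℚ_[p])‖ < 1 := fun h => hnd ((Padic.norm_intCast_lt_one_iff (k := 2)).mp h)
  rw [← h2]
  linarith [lt_or_eq_of_le hle |>.resolve_left this]


lemma even_of_odd_succ {m : ℕ} (h : Odd (m+1)) : Even m := by
  rw [Nat.odd_iff] at h; rw [Nat.even_iff]; omega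

lemma odd_of_even_succ {m : ℕ} (h : Even (m+1)) : Odd m := by
  rw [Nat.even_iff] at h; rw [Nat.odd_iff]; omega

section Seq

variable {α : ℕ → ℚ_[p]} {b : ℕ → ℚ}
variable (hD : ¬ ∃ z : ℤ, z * z = D) (hsq : α₀ ^ 2 = (D : ℚ_[p]))
variable (h0 : α 0 = α₀) (halg : Alg3 p α b)
include hD hsq h0 halg

lemma hrep : ∀ n, ∃ x y : ℚ, y ≠ 0 ∧ α n = (x:ℚ_[p]) + (y:ℚ_[p]) * α₀ := by
  intro n
  induction n with
  | zero => exact ⟨0, 1, one_ne_zero, by simp [h0]⟩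
  | succ n ih =>
    obtain ⟨x, y, hy, hxy⟩ := ih
    have hsub : α n - (b n : ℚ_[p]) = ((x - b n : ℚ):ℚ_[p]) + (y:ℚ_[p]) * α₀ := by
      rw [hxy]; push_cast; ring
    have hN0 : (x - b n)^2 - y^2*D ≠ 0 := by
      intro h0'
      apply no_rat_sqrt D hD ((x - b n)/y)
      have : (x - b n)^2 = y^2 * (D:ℚ) := by linarith
      field_simp
      linear_combination this
    refine ⟨(x - b n)/((x - b n)^2 - y^2*D), -y/((x - b n)^2 - y^2*D), ?_, ?_⟩
    · exact div_ne_zero (neg_ne_zero.mpr hy) hN0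
    · rw [halg.2.2 n, hsub, inv_rep hD hsq hy]

lemma irrat_α (n : ℕ) (q : ℚ) : α n ≠ (q : ℚ_[p]) := by
  obtain ⟨x, y, hy, hxy⟩ := hrep hD hsq h0 halg n
  exact rep_irrat hD hsq hy hxy q

lemma sub_ne (n : ℕ) : α n - (b n : ℚ_[p]) ≠ 0 :=
  sub_ne_zero.mpr (irrat_α hD hsq h0 halg n (b n))

lemma α_ne_zero (n : ℕ) : α n ≠ 0 := by
  have := irrat_α hD hsq h0 halg n 0
  simpa using this

lemma conj_rep (n : ℕ) {x y : ℚ} (hxy : α n = (x:ℚ_[p]) + (y:ℚ_[p]) * α₀) :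
    conj α₀ (α n) = (x:ℚ_[p]) - (y:ℚ_[p]) * α₀ := by
  rw [hxy, conj_spec hD hsq]

lemma conj_irrat (n : ℕ) (q : ℚ) : conj α₀ (α n) ≠ (q : ℚ_[p]) := by
  obtain ⟨x, y, hy, hxy⟩ := hrep hD hsq h0 halg n
  have : conj α₀ (α n) = (x:ℚ_[p]) + ((-y : ℚ):ℚ_[p]) * α₀ := by
    rw [conj_rep hD hsq h0 halg n hxy]; push_cast; ring
  exact rep_irrat hD hsq (neg_ne_zero.mpr hy) this q

lemma conj_sub_ne (n : ℕ) (q : ℚ) : conj α₀ (α n) - (q : ℚ_[p]) ≠ 0 :=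
  sub_ne_zero.mpr (conj_irrat hD hsq h0 halg n q)

lemma conj_zero : conj α₀ (α 0) = -α₀ := by
  have : α 0 = ((0:ℚ):ℚ_[p]) + ((1:ℚ):ℚ_[p]) * α₀ := by simp [h0]
  rw [conj_rep hD hsq h0 halg 0 this]
  simp

lemma conj_step (n : ℕ) : conj α₀ (α (n+1)) = (conj α₀ (α n) - (b n : ℚ_[p]))⁻¹ := by
  obtain ⟨x, y, hy, hxy⟩ := hrep hD hsq h0 halg n
  have hsub : α n - (b n : ℚ_[p]) = ((x - b n : ℚ):ℚ_[p]) + (y:ℚ_[p]) * α₀ := by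
    rw [hxy]; push_cast; ring
  have hrep1 : α (n+1) = (((x - b n)/((x - b n)^2 - y^2*D) : ℚ):ℚ_[p])
      + ((-y/((x - b n)^2 - y^2*D) : ℚ):ℚ_[p]) * α₀ := by
    rw [halg.2.2 n, hsub, inv_rep hD hsq hy]
  have hL : conj α₀ (α (n+1)) = (((x - b n)/((x - b n)^2 - y^2*D) : ℚ):ℚ_[p])
      - ((-y/((x - b n)^2 - y^2*D) : ℚ):ℚ_[p]) * α₀ := conj_rep hD hsq h0 halg (n+1) hrep1
  have hCsub : conj α₀ (α n) - (b n : ℚ_[p])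
      = ((x - b n : ℚ):ℚ_[p]) + ((-y : ℚ):ℚ_[p]) * α₀ := by
    rw [conj_rep hD hsq h0 halg n hxy]; push_cast; ring
  rw [hL, hCsub, inv_rep hD hsq (neg_ne_zero.mpr hy)]
  have hyy : (x - b n)^2 - (-y)^2*D = (x - b n)^2 - y^2*D := by ring
  rw [hyy]
  push_cast
  ring

omit hD hsq h0 halg in
lemma norm_sub_eq_right {x y : ℚ_[p]} (h : ‖x‖ < ‖y‖) : ‖x - y‖ = ‖y‖ := by
  have hne : ‖x‖ ≠ ‖-y‖ := by rw [norm_neg]; exact ne_of_lt h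
  rw [sub_eq_add_neg, Padic.add_eq_max_of_ne hne, norm_neg,
    max_eq_right h.le]

omit hD hsq h0 in
lemma norm_sub_le_one (n : ℕ) : ‖α n - (b n : ℚ_[p])‖ ≤ 1 := by
  rcases Nat.even_or_odd n with he | ho
  · exact le_of_lt (halg.1 n he).2.2
  · exact (halg.2.1 n ho).2.2

omit hD hsq h0 in
lemma norm_sub_lt (n : ℕ) (he : Even n) : ‖α n - (b n : ℚ_[p])‖ ≤ (p:ℝ)⁻¹ :=
  norm_le_inv_p_of_lt_one (halg.1 n he).2.2

lemma norm_sub_pos (n : ℕ) : 0 < ‖α n - (b n : ℚ_[p])‖ :=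
  norm_pos_iff.mpr (sub_ne hD hsq h0 halg n)

lemma norm_α_ge_one (n : ℕ) : 1 ≤ ‖α (n+1)‖ := by
  rw [halg.2.2 n, norm_inv]
  rw [le_inv_comm₀ one_pos (norm_sub_pos hD hsq h0 halg n)]
  simpa using norm_sub_le_one halg n

lemma norm_α_odd (n : ℕ) (ho : Odd n) : (p:ℝ) ≤ ‖α n‖ := by
  obtain ⟨m, rfl⟩ : ∃ m, n = m + 1 := by
    rcases n with _ | m
    · exact absurd ho (by simp)
    · exact ⟨m, rfl⟩
  have hm : Even m := even_of_odd_succ ho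
  rw [halg.2.2 m, norm_inv]
  have h1 := norm_sub_lt halg m hm
  have h2 := norm_sub_pos hD hsq h0 halg m
  calc (p:ℝ) = ((p:ℝ)⁻¹)⁻¹ := by rw [inv_inv]
    _ ≤ ‖α m - (b m : ℚ_[p])‖⁻¹ := inv_anti₀ h2 h1

lemma norm_b_eq (n : ℕ) (hn : 1 ≤ n) : ‖(b n : ℚ_[p])‖ = ‖α n‖ := by
  have hα1 : 1 ≤ ‖α n‖ := by
    obtain ⟨m, rfl⟩ : ∃ m, n = m + 1 := ⟨n - 1, by omega⟩
    exact norm_α_ge_one hD hsq h0 halg m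
  have hlt : ‖α n - (b n : ℚ_[p])‖ < ‖α n‖ := by
    rcases Nat.even_or_odd n with he | ho
    · calc ‖α n - (b n : ℚ_[p])‖ ≤ (p:ℝ)⁻¹ := norm_sub_lt halg n he
        _ < 1 := by
            rw [inv_lt_one_iff₀]; right; exact hp1
        _ ≤ ‖α n‖ := hα1
    · calc ‖α n - (b n : ℚ_[p])‖ ≤ 1 := norm_sub_le_one halg n
        _ < (p:ℝ) := hp1
        _ ≤ ‖α n‖ := norm_α_odd hD hsq h0 halg n ho
  have := Padic.norm_eq_of_norm_add_lt_left (z1 := α n) (z2 := -((b n : ℚ) : ℚ_[p]))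
    (by rw [← sub_eq_add_neg]; exact hlt)
  rw [norm_neg] at this
  exact this.symm

lemma norm_b_odd (n : ℕ) (ho : Odd n) : (p:ℝ) ≤ ‖(b n : ℚ_[p])‖ := by
  rw [norm_b_eq hD hsq h0 halg n ho.pos]
  exact norm_α_odd hD hsq h0 halg n ho

lemma norm_b_one_le (n : ℕ) (hn : 1 ≤ n) : 1 ≤ ‖(b n : ℚ_[p])‖ := by
  rw [norm_b_eq hD hsq h0 halg n hn]
  obtain ⟨m, rfl⟩ : ∃ m, n = m + 1 := ⟨n - 1, by omega⟩
  exact norm_α_ge_one hD hsq h0 halg m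

omit hD hsq h0 in
lemma b_rep (m k : ℕ) (hbp : ∀ n, m ≤ n → b (n + k) = b n) :
    ∀ j n, m ≤ n → b (n + j * k) = b n := by
  intro j
  induction j with
  | zero => intro n _; simp
  | succ j ih =>
    intro n hn
    have : n + (j+1) * k = (n + j * k) + k := by ring
    rw [this, hbp _ (le_trans hn (Nat.le_add_right _ _)), ih n hn]

omit hD hsq h0 in
lemma norm_α_le (n : ℕ) : ‖α n‖ ≤ max 1 ‖((b n : ℚ) : ℚ_[p])‖ := by
  have hdec : α n = ((b n : ℚ) : ℚ_[p]) + (α n - (b n : ℚ)) := by ring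
  calc ‖α n‖ = ‖((b n : ℚ) : ℚ_[p]) + (α n - ((b n : ℚ) : ℚ_[p]))‖ := by rw [← hdec]
    _ ≤ max ‖((b n : ℚ) : ℚ_[p])‖ ‖α n - ((b n : ℚ) : ℚ_[p])‖ := Padic.nonarchimedean _ _
    _ ≤ max 1 ‖((b n : ℚ) : ℚ_[p])‖ := by
        rcases le_total ‖((b n : ℚ) : ℚ_[p])‖ ‖α n - ((b n : ℚ) : ℚ_[p])‖ with h | h
        · rw [max_eq_right h]
          exact le_max_of_le_left (norm_sub_le_one halg n)
        · rw [max_eq_left h]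
          exact le_max_right _ _

lemma delta_step (m k : ℕ) (hbp : ∀ n, m ≤ n → b (n + k) = b n)
    (n : ℕ) (hn : m ≤ n) :
    ‖α (n + k) - α n‖ ≤ ‖α (n + 1 + k) - α (n + 1)‖ ∧
    (Even n → (p:ℝ) * ‖α (n + k) - α n‖ ≤ ‖α (n + 1 + k) - α (n + 1)‖) := by
  set u := α (n + k) - ((b (n + k) : ℚ) : ℚ_[p]) with hu
  set w := α n - ((b n : ℚ) : ℚ_[p]) with hw
  have hu0 : u ≠ 0 := sub_ne hD hsq h0 halg (n + k)
  have hw0 : w ≠ 0 := sub_ne hD hsq h0 halg n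
  have hid : α (n + 1 + k) - α (n + 1) = -(α (n + k) - α n) * u⁻¹ * w⁻¹ := by
    have h1 : α (n + 1 + k) = u⁻¹ := by
      have := halg.2.2 (n + k)
      rw [← this]
      congr 1
      omega
    have h2 : α (n + 1) = w⁻¹ := halg.2.2 n
    have hwu : w - u = -(α (n + k) - α n) := by
      rw [hu, hw, hbp n hn]; ring
    rw [h1, h2, inv_sub_inv' hu0 hw0, hwu]
  have hnorm : ‖α (n + 1 + k) - α (n + 1)‖ = ‖α (n + k) - α n‖ * ‖u‖⁻¹ * ‖w‖⁻¹ := by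
    rw [hid, norm_mul, norm_mul, norm_neg, norm_inv, norm_inv]
  have hu1 : ‖u‖ ≤ 1 := norm_sub_le_one halg (n + k)
  have hw1 : ‖w‖ ≤ 1 := norm_sub_le_one halg n
  have hupos : 0 < ‖u‖ := norm_pos_iff.mpr hu0
  have hwpos : 0 < ‖w‖ := norm_pos_iff.mpr hw0
  have huinv : 1 ≤ ‖u‖⁻¹ := by
    rw [le_inv_comm₀ one_pos hupos]; simpa using hu1
  have hwinv : 1 ≤ ‖w‖⁻¹ := by
    rw [le_inv_comm₀ one_pos hwpos]; simpa using hw1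
  have hdpos : (0:ℝ) ≤ ‖α (n + k) - α n‖ := norm_nonneg _
  constructor
  · rw [hnorm]
    calc ‖α (n + k) - α n‖ = ‖α (n + k) - α n‖ * 1 * 1 := by ring
      _ ≤ ‖α (n + k) - α n‖ * ‖u‖⁻¹ * ‖w‖⁻¹ := by gcongr <;> assumption
  · intro he
    have hwp : ‖w‖ ≤ (p:ℝ)⁻¹ := norm_sub_lt halg n he
    have hwinv' : (p:ℝ) ≤ ‖w‖⁻¹ := by
      calc (p:ℝ) = ((p:ℝ)⁻¹)⁻¹ := by rw [inv_inv]
        _ ≤ ‖w‖⁻¹ := inv_anti₀ hwpos hwp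
    rw [hnorm]
    calc (p:ℝ) * ‖α (n + k) - α n‖ = ‖α (n + k) - α n‖ * 1 * (p:ℝ) := by ring
      _ ≤ ‖α (n + k) - α n‖ * ‖u‖⁻¹ * ‖w‖⁻¹ := by gcongr <;> assumption

lemma delta_two_step (m k : ℕ) (hbp : ∀ n, m ≤ n → b (n + k) = b n)
    (n : ℕ) (hn : m ≤ n) :
    (p:ℝ) * ‖α (n + k) - α n‖ ≤ ‖α (n + 2 + k) - α (n + 2)‖ := by
  have hppos : (0:ℝ) < (p:ℝ) := lt_trans one_pos hp1
  have s1 := delta_step hD hsq h0 halg m k hbp n hn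
  have s2 := delta_step hD hsq h0 halg m k hbp (n+1) (by omega)
  have e1 : n + 1 + 1 = n + 2 := by omega
  rcases Nat.even_or_odd n with he | ho
  · calc (p:ℝ) * ‖α (n + k) - α n‖ ≤ ‖α (n + 1 + k) - α (n + 1)‖ := s1.2 he
      _ ≤ ‖α (n + 1 + 1 + k) - α (n + 1 + 1)‖ := s2.1
      _ = ‖α (n + 2 + k) - α (n + 2)‖ := by rw [e1]
  · have he1 : Even (n + 1) := ho.add_one
    calc (p:ℝ) * ‖α (n + k) - α n‖ ≤ (p:ℝ) * ‖α (n + 1 + k) - α (n + 1)‖ := by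
          exact mul_le_mul_of_nonneg_left s1.1 (le_of_lt hppos)
      _ ≤ ‖α (n + 1 + 1 + k) - α (n + 1 + 1)‖ := s2.2 he1
      _ = ‖α (n + 2 + k) - α (n + 2)‖ := by rw [e1]

lemma alpha_eq_of_b_per (m k : ℕ) (hk : 1 ≤ k) (hbp : ∀ n, m ≤ n → b (n + k) = b n) :
    α (m + k) = α m := by
  by_contra hne
  have hd0 : 0 < ‖α (m + k) - α m‖ := norm_pos_iff.mpr (sub_ne_zero.mpr hne)
  have hppos : (0:ℝ) < (p:ℝ) := lt_trans one_pos hp1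
  -- the uniform bound
  have hbnd : ∀ n, m ≤ n → ‖α (n + k) - α n‖ ≤
      max 1 ((Finset.range k).sup' (Finset.nonempty_range_iff.mpr (by omega))
        (fun i => ‖((b (m + i) : ℚ) : ℚ_[p])‖)) := by
    intro n hn
    set C := max 1 ((Finset.range k).sup' (Finset.nonempty_range_iff.mpr
      (by omega : k ≠ 0)) (fun i => ‖((b (m + i) : ℚ) : ℚ_[p])‖)) with hC
    have hbC : ∀ n', m ≤ n' → ‖((b n' : ℚ) : ℚ_[p])‖ ≤ C := by
      intro n' hn'
      have hdecomp : n' = (m + (n' - m) % k) + ((n' - m) / k) * k := by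
        calc n' = m + (n' - m) := by omega
          _ = m + ((n' - m) % k + k * ((n' - m) / k)) := by rw [Nat.mod_add_div]
          _ = (m + (n' - m) % k) + ((n' - m) / k) * k := by ring
      have hb' : b n' = b (m + (n' - m) % k) := by
        conv_lhs => rw [hdecomp]
        exact b_rep halg m k hbp _ _ (Nat.le_add_right _ _)
      rw [hb']
      refine le_trans ?_ (le_max_right _ _)
      exact Finset.le_sup' (f := fun i => ‖((b (m + i) : ℚ) : ℚ_[p])‖)
        (Finset.mem_range.mpr (Nat.mod_lt _ (by omega)))
    have hαC : ∀ n', m ≤ n' → ‖α n'‖ ≤ C := by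
      intro n' hn'
      refine le_trans (norm_α_le halg n') ?_
      rcases le_total 1 ‖((b n' : ℚ) : ℚ_[p])‖ with h | h
      · rw [max_eq_right h]; exact hbC n' hn'
      · rw [max_eq_left h]; exact le_max_left _ _
    calc ‖α (n + k) - α n‖ ≤ max ‖α (n + k)‖ ‖α n‖ := by
          rw [sub_eq_add_neg]
          refine le_trans (Padic.nonarchimedean _ _) ?_
          rw [norm_neg]
      _ ≤ C := by
          rcases le_total ‖α (n + k)‖ ‖α n‖ with h | h
          · rw [max_eq_right h]; exact hαC n hn
          · rw [max_eq_left h]; exact hαC (n + k) (by omega)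
  set C := max 1 ((Finset.range k).sup' (Finset.nonempty_range_iff.mpr
    (by omega : k ≠ 0)) (fun i => ‖((b (m + i) : ℚ) : ℚ_[p])‖)) with hC
  have hgrow : ∀ j : ℕ, (p:ℝ)^j * ‖α (m + k) - α m‖ ≤ ‖α ((m + 2*j) + k) - α (m + 2*j)‖ := by
    intro j
    induction j with
    | zero => simp
    | succ j ih =>
      have h2 := delta_two_step hD hsq h0 halg m k hbp (m + 2*j) (by omega)
      have e1 : m + 2*j + 2 = m + 2*(j+1) := by omega
      calc (p:ℝ)^(j+1) * ‖α (m + k) - α m‖ = (p:ℝ) * ((p:ℝ)^j * ‖α (m + k) - α m‖) := by ring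
        _ ≤ (p:ℝ) * ‖α ((m + 2*j) + k) - α (m + 2*j)‖ :=
            mul_le_mul_of_nonneg_left ih (le_of_lt hppos)
        _ ≤ ‖α (m + 2*j + 2 + k) - α (m + 2*j + 2)‖ := h2
        _ = ‖α ((m + 2*(j+1)) + k) - α (m + 2*(j+1))‖ := by rw [e1]
  obtain ⟨j, hj⟩ := pow_unbounded_of_one_lt (C / ‖α (m + k) - α m‖) (hp1 (p := p))
  have hjC : C < (p:ℝ)^j * ‖α (m + k) - α m‖ := by
    rw [div_lt_iff₀ hd0] at hj
    linarith
  have := le_trans (hgrow j) (hbnd (m + 2*j) (by omega))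
  linarith

lemma alpha_per (m k : ℕ) (hk : 1 ≤ k) (hbp : ∀ n, m ≤ n → b (n + k) = b n) :
    ∀ n, m ≤ n → α (n + k) = α n := by
  intro n hn
  exact alpha_eq_of_b_per hD hsq h0 halg n k hk (fun n' hn' => hbp n' (le_trans hn hn'))

variable (hp : p ≠ 2) (hpD : ¬ (p : ℤ) ∣ D)
include hp hpD

omit hD hsq h0 halg hp hpD in
lemma padic_sub_le_max (x y : ℚ_[p]) : ‖x - y‖ ≤ max ‖x‖ ‖y‖ := by
  rw [sub_eq_add_neg]
  refine le_trans (Padic.nonarchimedean _ _) ?_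
  rw [norm_neg]

omit hD hsq h0 halg hp hpD in
lemma padicFrac_sub {a c : ℚ} (ha : IsPadicFrac p a) (hc : IsPadicFrac p c) :
    IsPadicFrac p (a - c) := by
  obtain ⟨m1, z1, h1⟩ := ha
  obtain ⟨m2, z2, h2⟩ := hc
  refine ⟨m1 + m2, z1 * (p:ℤ)^m2 - z2 * (p:ℤ)^m1, ?_⟩
  push_cast
  linear_combination ((p:ℚ)^m2) * h1 - ((p:ℚ)^m1) * h2

lemma norm_conj_one : ‖conj α₀ (α 1)‖ = 1 := by
  rw [conj_step hD hsq h0 halg 0, conj_zero hD hsq h0 halg, norm_inv]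
  have key : -α₀ - ((b 0 : ℚ) : ℚ_[p]) = (α 0 - (b 0 : ℚ)) - 2 * α₀ := by
    rw [h0]; ring
  rw [key, norm_sub_eq_right, norm_mul, norm_two hp, norm_α₀ hpD hsq]
  · norm_num
  · rw [norm_mul, norm_two hp, norm_α₀ hpD hsq]
    calc ‖α 0 - ((b 0 : ℚ) : ℚ_[p])‖ ≤ (p:ℝ)⁻¹ := norm_sub_lt halg 0 (by simp)
      _ < 1 := by rw [inv_lt_one_iff₀]; right; exact hp1
      _ = 1 * 1 := by norm_num

lemma norm_conj_bounds : ∀ n, 1 ≤ n →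
    (Odd n → ‖conj α₀ (α n)‖ ≤ 1) ∧ (Even n → ‖conj α₀ (α n)‖ ≤ (p:ℝ)⁻¹) := by
  intro n hn
  induction n, hn using Nat.le_induction with
  | base =>
    constructor
    · intro _; exact le_of_eq (norm_conj_one hD hsq h0 halg hp hpD)
    · intro he; exact absurd he (by simp)
  | succ n hn ih =>
    have hppos : (0:ℝ) < (p:ℝ) := lt_trans one_pos hp1
    constructor
    · -- Odd (n+1) : n even, n ≥ 1
      intro hodd
      have he : Even n := even_of_odd_succ hodd
      have hc : ‖conj α₀ (α n)‖ ≤ (p:ℝ)⁻¹ := (ih).2 he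
      have hb : 1 ≤ ‖(b n : ℚ_[p])‖ := norm_b_one_le hD hsq h0 halg n hn
      have hlt : ‖conj α₀ (α n)‖ < ‖((b n : ℚ) : ℚ_[p])‖ :=
        lt_of_le_of_lt hc (lt_of_lt_of_le (by rw [inv_lt_one_iff₀]; right; exact hp1) hb)
      rw [conj_step hD hsq h0 halg n, norm_inv, norm_sub_eq_right hlt]
      rw [inv_le_one_iff₀]; right; exact hb
    · -- Even (n+1) : n odd
      intro heven
      have ho : Odd n := odd_of_even_succ heven
      have hc : ‖conj α₀ (α n)‖ ≤ 1 := (ih).1 ho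
      have hb : (p:ℝ) ≤ ‖(b n : ℚ_[p])‖ := norm_b_odd hD hsq h0 halg n ho
      have hlt : ‖conj α₀ (α n)‖ < ‖((b n : ℚ) : ℚ_[p])‖ :=
        lt_of_le_of_lt hc (lt_of_lt_of_le hp1 hb)
      rw [conj_step hD hsq h0 halg n, norm_inv, norm_sub_eq_right hlt]
      calc ‖((b n : ℚ) : ℚ_[p])‖⁻¹ ≤ (p:ℝ)⁻¹ := by
            apply inv_anti₀ hppos hb
        _ ≤ (p:ℝ)⁻¹ := le_refl _

omit hD hsq h0 hp hpD in
lemma b_frac (n : ℕ) : IsPadicFrac p (b n) := by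
  rcases Nat.even_or_odd n with he | ho
  · exact (halg.1 n he).1
  · exact (halg.2.1 n ho).1

lemma not_pure (k : ℕ) (hk : 1 ≤ k) (hbp : ∀ n, b (n + k) = b n) : False := by
  have hbp2 : ∀ n, 0 ≤ n → b (n + 2*k) = b n := by
    intro n _
    rw [show n + 2*k = n + k + k by ring, hbp, hbp]
  have hα : α (0 + 2*k) = α 0 :=
    alpha_per hD hsq h0 halg 0 (2*k) (by omega) hbp2 0 le_rfl
  have hconj : conj α₀ (α (2*k)) = -α₀ := by
    rw [show 2*k = 0 + 2*k by omega, hα]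
    exact conj_zero hD hsq h0 halg
  have hnorm : ‖conj α₀ (α (2*k))‖ ≤ (p:ℝ)⁻¹ :=
    (norm_conj_bounds hD hsq h0 halg hp hpD (2*k) (by omega)).2 (by exact ⟨k, by ring⟩)
  rw [hconj, norm_neg, norm_α₀ hpD hsq] at hnorm
  have : (p:ℝ)⁻¹ < 1 := by rw [inv_lt_one_iff₀]; right; exact hp1
  linarith

lemma backward (k m : ℕ) (hm : 1 ≤ m) (hk : 1 ≤ k)
    (hbp : ∀ n, m + 1 ≤ n → b (n + 2*k) = b n) : b (m + 2*k) = b m := by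
  set K := 2*k with hK
  have hα1 : α ((m+1) + K) = α (m+1) :=
    alpha_per hD hsq h0 halg (m+1) K (by omega) hbp (m+1) le_rfl
  have e1 : conj α₀ (α ((m+K) + 1)) = (conj α₀ (α (m+K)) - ((b (m+K) : ℚ):ℚ_[p]))⁻¹ :=
    conj_step hD hsq h0 halg (m+K)
  have e2 : conj α₀ (α (m+1)) = (conj α₀ (α m) - ((b m : ℚ):ℚ_[p]))⁻¹ :=
    conj_step hD hsq h0 halg m
  have hconjeq : conj α₀ (α ((m+K) + 1)) = conj α₀ (α (m+1)) := by
    rw [show (m+K) + 1 = (m+1) + K by omega, hα1]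
  have hXY : conj α₀ (α (m+K)) - ((b (m+K) : ℚ):ℚ_[p])
      = conj α₀ (α m) - ((b m : ℚ):ℚ_[p]) := by
    have := hconjeq
    rw [e1, e2] at this
    exact inv_injective this
  have hdiff : conj α₀ (α (m+K)) - conj α₀ (α m)
      = (((b (m+K) - b m : ℚ)):ℚ_[p]) := by
    push_cast
    linear_combination hXY
  set r : ℚ := b (m+K) - b m with hr
  have hfrac : IsPadicFrac p r := padicFrac_sub (b_frac halg (m+K)) (b_frac halg m)
  have hr0 : r = 0 := by
    rcases Nat.even_or_odd m with he | ho
    · -- even m : m ≥ 2, both conj norms ≤ p⁻¹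
      have heK : Even (m + K) := by
        rcases he with ⟨t, ht⟩; exact ⟨t + k, by omega⟩
      have n1 := (norm_conj_bounds hD hsq h0 halg hp hpD (m+K) (by omega)).2 heK
      have n2 := (norm_conj_bounds hD hsq h0 halg hp hpD m hm).2 he
      have hnr : ‖(r : ℚ_[p])‖ < 1 := by
        rw [← hdiff]
        refine lt_of_le_of_lt (le_trans (padic_sub_le_max _ _) (max_le n1 n2)) ?_
        rw [inv_lt_one_iff₀]; right; exact hp1
      have hb1 := (halg.1 (m+K) heK).2.1
      have hb2 := (halg.1 m he).2.1
      have habs : |r| < (p:ℚ) := by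
        calc |r| ≤ |b (m+K)| + |b m| := by
              rw [hr, sub_eq_add_neg]
              exact le_trans (abs_add_le _ _) (by rw [abs_neg])
          _ < (p:ℚ)/2 + (p:ℚ)/2 := by linarith
          _ = (p:ℚ) := by ring
      exact frac_zero₂ r hfrac hnr habs
    · -- odd m
      have hoK : Odd (m + K) := by
        rcases ho with ⟨t, ht⟩; exact ⟨t + k, by omega⟩
      have n1 := (norm_conj_bounds hD hsq h0 halg hp hpD (m+K) (by omega)).1 hoK
      have n2 := (norm_conj_bounds hD hsq h0 halg hp hpD m hm).1 ho
      have hnr : ‖(r : ℚ_[p])‖ ≤ 1 := by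
        rw [← hdiff]
        exact le_trans (padic_sub_le_max _ _) (max_le n1 n2)
      have hb1 := (halg.2.1 (m+K) hoK).2.1
      have hb2 := (halg.2.1 m ho).2.1
      have habs : |r| < 1 := by
        calc |r| ≤ |b (m+K)| + |b m| := by
              rw [hr, sub_eq_add_neg]
              exact le_trans (abs_add_le _ _) (by rw [abs_neg])
          _ < 1/2 + 1/2 := by linarith
          _ = 1 := by ring
      exact frac_zero₁ r hfrac hnr habs
  have : b (m+K) - b m = 0 := hr0
  linarith

end Seq

end Main
end S9

/-- If `D` is a nonsquare integer with `p ∤ D`, `α₀² = D` in `ℚ_p`, and the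
Algorithm (3) expansion of `α₀` is periodic, then the pre-period has length
exactly `1`. -/
theorem stmt_9 (p : ℕ) [Fact p.Prime] (hp : p ≠ 2) (D : ℤ)
    (hD : ¬ ∃ z : ℤ, z * z = D) (hpD : ¬ (p : ℤ) ∣ D)
    (α₀ : ℚ_[p]) (hsq : α₀ ^ 2 = (D : ℚ_[p]))
    (α : ℕ → ℚ_[p]) (b : ℕ → ℚ) (h0 : α 0 = α₀) (halg : Alg3 p α b)
    (hper : ∃ h k : ℕ, 1 ≤ k ∧ ∀ n, h ≤ n → b (n + k) = b n) :
    (∃ k : ℕ, 1 ≤ k ∧ ∀ n, 1 ≤ n → b (n + k) = b n) ∧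
      ¬ ∃ k : ℕ, 1 ≤ k ∧ ∀ n, b (n + k) = b n := by
  constructor
  · obtain ⟨h, k, hk1, hbp⟩ := hper
    refine ⟨2*k, by omega, ?_⟩
    have hbp2 : ∀ n, h ≤ n → b (n + 2*k) = b n := by
      intro n hn
      rw [show n + 2*k = n + k + k by ring, hbp _ (by omega), hbp _ hn]
    have key : ∀ m, 1 ≤ m → (∀ n, m + 1 ≤ n → b (n + 2*k) = b n) →
        (∀ n, m ≤ n → b (n + 2*k) = b n) := by
      intro m hm hQ n hn
      rcases eq_or_lt_of_le hn with heq | hlt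
      · cases heq
        exact S9.backward hD hsq h0 halg hp hpD k m hm hk1 hQ
      · exact hQ n (by omega)
    have main : ∀ j, ∀ n, max 1 (h - j) ≤ n → b (n + 2*k) = b n := by
      intro j
      induction j with
      | zero =>
        intro n hn
        exact hbp2 n (le_trans (le_max_right _ _) (by simpa using hn))
      | succ j ih =>
        by_cases hcase : h - j ≤ 1
        · intro n hn
          apply ih n
          have : h - j ≤ 1 := hcase
          have h1 : max 1 (h - j) = 1 := by omega
          have h2 : max 1 (h - (j+1)) = 1 := by omega
          omega
        · have hm : 1 ≤ h - j - 1 := by omega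
          have e1 : max 1 (h - j) = h - j := by omega
          have e2 : max 1 (h - (j+1)) = h - j - 1 := by omega
          rw [e2]
          apply key (h - j - 1) hm
          intro n hn
          apply ih n
          rw [e1]
          omega
    intro n hn
    apply main h n
    have : max 1 (h - h) = 1 := by omega
    omega
  · rintro ⟨k, hk1, hbp⟩
    exact S9.not_pure hD hsq h0 halg hp hpD k hk1 hbp
end

section
/- Let p be an odd prime and let (b_n)_{n≥1} be nonzero elements of ℚ_p with v_p(b_n) + v_p(b_{n+1}) < 0 for all n ≥ 1. Define B_0 = 1, B_1 = b_1 and B_n = b_n·B_{n−1} + B_{n−2} for n ≥ 2. Then for every n ≥ 1, B_n ≠ 0 and v_p(B_n) = v_p(b_1) + v_p(b_2) + ⋯ + v_p(b_n). -/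
lemma aux_val_add {p : ℕ} [Fact p.Prime] {x y : ℚ_[p]} (hx : x ≠ 0) (hy : y ≠ 0)
    (h : x.valuation < y.valuation) :
    x + y ≠ 0 ∧ (x + y).valuation = x.valuation := by
  have hp1 : (1 : ℝ) < (p : ℝ) := by
    exact_mod_cast (Fact.out : p.Prime).one_lt
  have hnx : ‖x‖ = (p : ℝ) ^ (-x.valuation) := Padic.norm_eq_zpow_neg_valuation hx
  have hny : ‖y‖ = (p : ℝ) ^ (-y.valuation) := Padic.norm_eq_zpow_neg_valuation hy
  have hlt : ‖y‖ < ‖x‖ := by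
    rw [hnx, hny]
    exact zpow_lt_zpow_right₀ hp1 (by omega)
  have hne : ‖x‖ ≠ ‖y‖ := (ne_of_lt hlt).symm
  have hmax : ‖x + y‖ = max ‖x‖ ‖y‖ := Padic.add_eq_max_of_ne hne
  have hnorm : ‖x + y‖ = ‖x‖ := by rw [hmax, max_eq_left hlt.le]
  have hxy : x + y ≠ 0 := by
    intro h0
    rw [h0, norm_zero] at hnorm
    exact hx (norm_eq_zero.mp hnorm.symm)
  refine ⟨hxy, ?_⟩
  have := Padic.norm_eq_zpow_neg_valuation hxy
  rw [hnorm, hnx] at this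
  have := zpow_right_injective₀ (by positivity) (ne_of_gt hp1) this
  omega

theorem stmt_11 (p : ℕ) [Fact p.Prime] (hp : p ≠ 2) (b : ℕ → ℚ_[p])
    (hbne : ∀ n : ℕ, 1 ≤ n → b n ≠ 0)
    (hval : ∀ n : ℕ, 1 ≤ n → (b n).valuation + (b (n + 1)).valuation < 0)
    (B : ℕ → ℚ_[p]) (hB0 : B 0 = 1) (hB1 : B 1 = b 1)
    (hB : ∀ n, B (n + 2) = b (n + 2) * B (n + 1) + B n) :
    ∀ n : ℕ, 1 ≤ n → B n ≠ 0 ∧ (B n).valuation = ∑ i ∈ Finset.Icc 1 n, (b i).valuation := by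
  set S : ℕ → ℤ := fun n => ∑ i ∈ Finset.Icc 1 n, (b i).valuation with hS
  have hSsucc : ∀ n : ℕ, 1 ≤ n + 1 → S (n + 1) = S n + (b (n + 1)).valuation := by
    intro n _
    simp only [hS]
    rw [Finset.sum_Icc_succ_top (by omega)]
  have P1 : B 1 ≠ 0 ∧ (B 1).valuation = S 1 := by
    rw [hB1]
    refine ⟨hbne 1 le_rfl, ?_⟩
    simp [hS]
  have key : ∀ n : ℕ, (B (n + 1) ≠ 0 ∧ (B (n + 1)).valuation = S (n + 1)) ∧
      (B (n + 2) ≠ 0 ∧ (B (n + 2)).valuation = S (n + 2)) := by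
    intro n
    induction n with
    | zero =>
      refine ⟨P1, ?_⟩
      have hb2 : b 2 ≠ 0 := hbne 2 (by omega)
      have hx : b 2 * B 1 ≠ 0 := mul_ne_zero hb2 P1.1
      have hvx : (b 2 * B 1).valuation = (b 2).valuation + (B 1).valuation :=
        Padic.valuation_mul hb2 P1.1
      have hlt : (b 2 * B 1).valuation < (B 0).valuation := by
        rw [hvx, hB0, Padic.valuation_one, hB1]
        have := hval 1 le_rfl; rw [show (1:ℕ) + 1 = 2 from rfl] at this
        omega
      have hB0ne : B 0 ≠ 0 := by rw [hB0]; exact one_ne_zero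
      obtain ⟨hne, hv⟩ := aux_val_add hx hB0ne hlt
      rw [← hB 0] at hne hv
      refine ⟨hne, ?_⟩
      rw [hv, hvx, P1.2, hSsucc 1 (by omega)]
      ring
    | succ n ih =>
      obtain ⟨ih1, ih2⟩ := ih
      refine ⟨ih2, ?_⟩
      have hb3 : b (n + 3) ≠ 0 := hbne _ (by omega)
      have hx : b (n + 3) * B (n + 2) ≠ 0 := mul_ne_zero hb3 ih2.1
      have hvx : (b (n + 3) * B (n + 2)).valuation =
          (b (n + 3)).valuation + (B (n + 2)).valuation :=
        Padic.valuation_mul hb3 ih2.1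
      have hlt : (b (n + 3) * B (n + 2)).valuation < (B (n + 1)).valuation := by
        rw [hvx, ih2.2, ih1.2, hSsucc (n + 1) (by omega), show n + 1 + 1 = n + 2 from rfl]
        have := hval (n + 2) (by omega)
        have h3 : n + 2 + 1 = n + 3 := by omega
        rw [h3] at this
        omega
      obtain ⟨hne, hv⟩ := aux_val_add hx ih1.1 hlt
      have hrec : B (n + 3) = b (n + 3) * B (n + 2) + B (n + 1) := hB (n + 1)
      rw [← hrec] at hne hv
      refine ⟨hne, ?_⟩
      rw [hv, hvx, ih2.2, hSsucc (n + 2) (by omega)]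
      ring
  intro n hn
  match n, hn with
  | 1, _ => exact P1
  | (m + 2), _ => exact (key m).2
end
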